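/- arXiv:1403.4895 — 3 statements merged into one kernel-verified Lean document; each statement's English description precedes it below -/
import Mathlib

section
/- Let N ≥ 3 be a fixed integer, and for each ε ∈ (0,1/3] let Y^{(ε)} = (Y^{(ε)}_k, k ∈ ℤ) be a strictly stationary Markov chain satisfying Condition S(N,ε). Then lim_{ε→0+} ρ(σ(Y^{(ε)}_0), σ(Y^{(ε)}_1)) = 0, i.e. the maximal correlation coefficient ρ(Y^{(ε)},1) tends to 0 as ε → 0+. -/
open MeasureTheory ProbabilityTheory Filter Set
open scoped ENNReal Topology

noncomputable section

variable {Ω : Type*}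

/-- The σ-field generated by the random variables `X k`, `k ∈ S`. -/
def sigmaOf [MeasurableSpace Ω] (X : ℤ → Ω → ℝ) (S : Set ℤ) : MeasurableSpace Ω :=
  ⨆ k ∈ S, MeasurableSpace.comap (X k) inferInstance

/-- A sequence indexed by `ℤ` is strictly stationary if its law (as a measure on `ℤ → ℝ`)
is invariant under the index shift. -/
def StrictlyStationary [MeasurableSpace Ω] (P : Measure Ω) (X : ℤ → Ω → ℝ) : Prop :=
  ∀ n : ℤ, Measure.map (fun ω => fun k : ℤ => X (k + n) ω) P
    = Measure.map (fun ω => fun k : ℤ => X k ω) P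

/-- Markov chain: for each `k`, the past `σ(X_j, j ≤ k)` and the future `σ(X_j, j ≥ k)`
are conditionally independent given the present `σ(X_k)`. -/
def IsMarkovChain [MeasurableSpace Ω] (P : Measure Ω) (X : ℤ → Ω → ℝ) : Prop :=
  (∀ k, Measurable (X k)) ∧
  ∀ k : ℤ, ∀ A B : Set Ω, MeasurableSet[sigmaOf X (Set.Iic k)] A →
    MeasurableSet[sigmaOf X (Set.Ici k)] B →
    (fun ω => (P[A.indicator (fun _ => (1:ℝ)) | sigmaOf X {k}]) ω *
              (P[B.indicator (fun _ => (1:ℝ)) | sigmaOf X {k}]) ω)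
      =ᵐ[P] P[(A ∩ B).indicator (fun _ => (1:ℝ)) | sigmaOf X {k}]

/-- Covariance of two real random variables. -/
def covP [MeasurableSpace Ω] (P : Measure Ω) (f g : Ω → ℝ) : ℝ :=
  ∫ ω, (f ω - ∫ x, f x ∂P) * (g ω - ∫ x, g x ∂P) ∂P

/-- Correlation coefficient of two real random variables (with the convention 0/0 = 0). -/
def corrP [MeasurableSpace Ω] (P : Measure Ω) (f g : Ω → ℝ) : ℝ :=
  covP P f g / (Real.sqrt (covP P f f) * Real.sqrt (covP P g g))

/-- Maximal correlation coefficient ρ(𝒜,ℬ): the supremum of |Corr(f,g)| over square-integrable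
`f` measurable w.r.t. `mA` and `g` measurable w.r.t. `mB`. -/
def maxCorr (mA mB : MeasurableSpace Ω) [MeasurableSpace Ω] (P : Measure Ω) : ℝ :=
  sSup {r : ℝ | ∃ f g : Ω → ℝ, Measurable[mA] f ∧ Measurable[mB] g ∧
    MemLp f 2 P ∧ MemLp g 2 P ∧ r = |corrP P f g|}

/-- η(A,B) = P(A∩B)/(P(A)P(B)) (with the convention 0/0 = 0). -/
def etaP [MeasurableSpace Ω] (P : Measure Ω) (A B : Set Ω) : ℝ :=
  (P (A ∩ B)).toReal / ((P A).toReal * (P B).toReal)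

/-- ψ dependence coefficient, with values in `[0,∞]`. -/
def psiDep (mA mB : MeasurableSpace Ω) [MeasurableSpace Ω] (P : Measure Ω) : ℝ≥0∞ :=
  ⨆ (A : Set Ω) (B : Set Ω) (_ : MeasurableSet[mA] A) (_ : MeasurableSet[mB] B)
    (_ : 0 < P A) (_ : 0 < P B), ENNReal.ofReal |etaP P A B - 1|

/-- A finite partition of `Ω` into `m`-measurable events of positive probability. -/
def IsFinPartition (m : MeasurableSpace Ω) [MeasurableSpace Ω] (P : Measure Ω)
    {n : ℕ} (A : Fin n → Set Ω) : Prop :=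
  (∀ i, MeasurableSet[m] (A i)) ∧ (∀ i, 0 < P (A i)) ∧
  (Pairwise fun i j => Disjoint (A i) (A j)) ∧ (⋃ i, A i) = Set.univ

/-- Coefficient of information I(𝒜,ℬ), valued in `[0,∞]`
(note `Real.log 0 = 0`, so `0 log 0 = 0` automatically). -/
def infoCoef (mA mB : MeasurableSpace Ω) [MeasurableSpace Ω] (P : Measure Ω) : ℝ≥0∞ :=
  ⨆ (nI : ℕ) (nJ : ℕ) (A : Fin nI → Set Ω) (B : Fin nJ → Set Ω)
    (_ : IsFinPartition mA P A) (_ : IsFinPartition mB P B),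
    ENNReal.ofReal (∑ i, ∑ j,
      (P (A i)).toReal * (P (B j)).toReal *
        (etaP P (A i) (B j) * Real.log (etaP P (A i) (B j))))

/-- β dependence coefficient (absolute regularity coefficient). -/
def betaDep (mA mB : MeasurableSpace Ω) [MeasurableSpace Ω] (P : Measure Ω) : ℝ :=
  sSup {r : ℝ | ∃ (nI nJ : ℕ) (A : Fin nI → Set Ω) (B : Fin nJ → Set Ω),
    IsFinPartition mA P A ∧ IsFinPartition mB P B ∧
    r = (1/2) * ∑ i, ∑ j,
      |(P (A i ∩ B j)).toReal - (P (A i)).toReal * (P (B j)).toReal|}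

/-- ρ(X,n) -/
def rhoMix [MeasurableSpace Ω] (P : Measure Ω) (X : ℤ → Ω → ℝ) (n : ℕ) : ℝ :=
  maxCorr (sigmaOf X (Set.Iic 0)) (sigmaOf X (Set.Ici (n:ℤ))) P

/-- β(X,n) -/
def betaMix [MeasurableSpace Ω] (P : Measure Ω) (X : ℤ → Ω → ℝ) (n : ℕ) : ℝ :=
  betaDep (sigmaOf X (Set.Iic 0)) (sigmaOf X (Set.Ici (n:ℤ))) P

/-- I(X,n) -/
def infoMix [MeasurableSpace Ω] (P : Measure Ω) (X : ℤ → Ω → ℝ) (n : ℕ) : ℝ≥0∞ :=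
  infoCoef (sigmaOf X (Set.Iic 0)) (sigmaOf X (Set.Ici (n:ℤ))) P

/-- ψ(X,n) -/
def psiMix [MeasurableSpace Ω] (P : Measure Ω) (X : ℤ → Ω → ℝ) (n : ℕ) : ℝ≥0∞ :=
  psiDep (sigmaOf X (Set.Iic 0)) (sigmaOf X (Set.Ici (n:ℤ))) P

/-- Interlaced maximal correlation coefficient ρ*(X,n): the supremum of
ρ(σ(X_k, k ∈ S), σ(X_k, k ∈ T)) over nonempty disjoint S, T ⊂ ℤ with dist(S,T) ≥ n. -/
def rhoStar [MeasurableSpace Ω] (P : Measure Ω) (X : ℤ → Ω → ℝ) (n : ℕ) : ℝ :=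
  sSup {r : ℝ | ∃ S T : Set ℤ, S.Nonempty ∧ T.Nonempty ∧ Disjoint S T ∧
    (∀ s ∈ S, ∀ t ∈ T, (n:ℤ) ≤ |s - t|) ∧ r = maxCorr (sigmaOf X S) (sigmaOf X T) P}

/-- Condition S(N,ε) of Definition 2.1: a strictly stationary Markov chain with state space
`{0,1,...,N}` (as reals) whose joint law of `(Y_0, Y_1)` is as prescribed. -/
def ConditionS [MeasurableSpace Ω] (P : Measure Ω) (N : ℕ) (ε : ℝ) (Y : ℤ → Ω → ℝ) : Prop :=
  StrictlyStationary P Y ∧ IsMarkovChain P Y ∧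
  (∀ᵐ ω ∂P, ∃ i : ℕ, i ≤ N ∧ Y 0 ω = (i:ℝ)) ∧
  (P {ω | Y 0 ω = 0 ∧ Y 1 ω = 0}).toReal
      = 1 - 2 * (ε^(2*N-1) + ∑ u ∈ Finset.Icc 1 (N-1), ε^(2*u)) ∧
  (∀ m : ℕ, 1 ≤ m → m ≤ N - 1 →
    (P {ω | Y 0 ω = (m:ℝ) - 1 ∧ Y 1 ω = (m:ℝ)}).toReal = ε^(2*m) ∧
    (P {ω | Y 0 ω = (m:ℝ) ∧ Y 1 ω = (m:ℝ) - 1}).toReal = ε^(2*m)) ∧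
  (P {ω | Y 0 ω = (N:ℝ) - 1 ∧ Y 1 ω = (N:ℝ)}).toReal = ε^(2*N-1) ∧
  (P {ω | Y 0 ω = (N:ℝ) ∧ Y 1 ω = (N:ℝ) - 1}).toReal = ε^(2*N-1) ∧
  (∀ i j : ℕ, i ≤ N → j ≤ N → ((i = j ∧ 1 ≤ i) ∨ 2 ≤ |(i:ℤ) - (j:ℤ)|) →
    P {ω | Y 0 ω = (i:ℝ) ∧ Y 1 ω = (j:ℝ)} = 0)

/-- `m`-step transition probability `P(Y_m = j | Y_0 = i)` (with the convention 0/0 = 0). -/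
def transProb [MeasurableSpace Ω] (P : Measure Ω) (Y : ℤ → Ω → ℝ) (m : ℕ) (i j : ℕ) : ℝ :=
  (P {ω | Y 0 ω = (i:ℝ) ∧ Y (m:ℤ) ω = (j:ℝ)}).toReal / (P {ω | Y 0 ω = (i:ℝ)}).toReal




/-- fiber constancy -/
lemma comap_fiber_const [MeasurableSpace Ω] {T f : Ω → ℝ}
    (hf : Measurable[MeasurableSpace.comap T inferInstance] f)
    {ω ω' : Ω} (h : T ω = T ω') : f ω = f ω' := by
  have h1 : MeasurableSet[MeasurableSpace.comap T inferInstance] (f ⁻¹' {f ω'}) :=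
    hf (measurableSet_singleton _)
  rcases h1 with ⟨s, -, hs⟩
  have hω' : ω' ∈ T ⁻¹' s := by rw [hs]; exact rfl
  have hω : ω ∈ T ⁻¹' s := by rwa [Set.mem_preimage, h]
  rw [hs] at hω
  exact hω

lemma integral_eq_sum_partition [MeasurableSpace Ω] (P : Measure Ω) [IsProbabilityMeasure P]
    {ι : Type*} [DecidableEq ι] (s : Finset ι) (A : ι → Set Ω)
    (hA : ∀ i ∈ s, MeasurableSet (A i))
    (hd : ∀ i ∈ s, ∀ j ∈ s, i ≠ j → ∀ ω, ω ∈ A i → ω ∉ A j)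
    (hcov : ∀ᵐ ω ∂P, ∃ i ∈ s, ω ∈ A i)
    (h : Ω → ℝ) (c : ι → ℝ) (hc : ∀ i ∈ s, ∀ ω ∈ A i, h ω = c i) :
    ∫ ω, h ω ∂P = ∑ i ∈ s, c i * (P (A i)).toReal := by
  have hae : h =ᵐ[P] fun ω => ∑ i ∈ s, (A i).indicator (fun _ => c i) ω := by
    filter_upwards [hcov] with ω hω
    obtain ⟨i, hi, hωi⟩ := hω
    rw [hc i hi ω hωi, Finset.sum_eq_single i]
    · rw [Set.indicator_of_mem hωi]
    · intro j hj hji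
      rw [Set.indicator_of_notMem (hd i hi j hj (Ne.symm hji) ω hωi)]
    · intro hi'; exact absurd hi hi'
  rw [integral_congr_ae hae, integral_finset_sum]
  · refine Finset.sum_congr rfl fun i hi => ?_
    rw [integral_indicator_const _ (hA i hi), smul_eq_mul, mul_comm]; rfl
  · intro i hi; exact (integrable_const (c i)).indicator (hA i hi)
open Finset

/-- S ≤ 2 ε² -/
lemma bradley_S_le {N : ℕ} (hN : 3 ≤ N) {ε : ℝ} (hε0 : 0 < ε) (hε3 : ε ≤ 1/3) :
    ε^(2*N-1) + ∑ u ∈ Finset.Icc 1 (N-1), ε^(2*u) ≤ 2 * ε^2 := by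
  have hε1 : ε ≤ 1 := by linarith
  have h1 : ε^(2*N-1) ≤ ε^2/27 := by
    have h5 : ε^(2*N-1) ≤ ε^5 := pow_le_pow_of_le_one hε0.le hε1 (by omega)
    have : ε^5 = ε^3 * ε^2 := by ring
    have h3 : ε^3 ≤ (1/3:ℝ)^3 := by
      apply pow_le_pow_left₀ hε0.le hε3
    nlinarith [pow_pos hε0 2, pow_pos hε0 3, pow_nonneg hε0.le 2]
  have h2 : ∑ u ∈ Finset.Icc 1 (N-1), ε^(2*u) ≤ (9/8) * ε^2 := by
    have hterm : ∀ u ∈ Finset.Icc 1 (N-1), ε^(2*u) ≤ ε^2 * (1/9:ℝ)^(u-1) := by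
      intro u hu
      obtain ⟨hu1, -⟩ := Finset.mem_Icc.mp hu
      have : ε^(2*u) = ε^2 * (ε^2)^(u-1) := by
        rw [← pow_mul, ← pow_add]; congr 1; omega
      rw [this]
      have : (ε^2)^(u-1) ≤ (1/9:ℝ)^(u-1) := by
        apply pow_le_pow_left₀ (by positivity)
        nlinarith
      nlinarith [pow_pos hε0 2, pow_nonneg (by positivity : (0:ℝ) ≤ ε^2) (u-1),
        pow_nonneg (by norm_num : (0:ℝ) ≤ 1/9) (u-1)]
    calc ∑ u ∈ Finset.Icc 1 (N-1), ε^(2*u) ≤ ∑ u ∈ Finset.Icc 1 (N-1), ε^2 * (1/9:ℝ)^(u-1) :=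
          Finset.sum_le_sum hterm
      _ = ε^2 * ∑ u ∈ Finset.Icc 1 (N-1), (1/9:ℝ)^(u-1) := by rw [Finset.mul_sum]
      _ ≤ (9/8) * ε^2 := by
          have : ∑ u ∈ Finset.Icc 1 (N-1), (1/9:ℝ)^(u-1) ≤ 9/8 := by
            have hmap : ∑ u ∈ Finset.Icc 1 (N-1), (1/9:ℝ)^(u-1)
                = ∑ k ∈ Finset.range (N-1), (1/9:ℝ)^k := by
              rw [show Finset.Icc 1 (N-1) = Finset.Ico 1 N from by
                ext x; simp [Finset.mem_Icc, Finset.mem_Ico]; omega]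
              rw [Finset.sum_Ico_eq_sum_range]
              refine Finset.sum_congr (by congr 1) fun k hk => ?_
              congr 1; omega
            rw [hmap]
            have := geom_sum_eq (by norm_num : (1/9:ℝ) ≠ 1) (N-1)
            rw [this]
            have : (0:ℝ) ≤ (1/9)^(N-1) := by positivity
            have : ((1/9:ℝ)^(N-1) - 1)/((1/9:ℝ) - 1) = (1 - (1/9:ℝ)^(N-1)) * (9/8) := by
              field_simp; ring
            rw [this]
            nlinarith [pow_nonneg (by norm_num : (0:ℝ) ≤ 1/9) (N-1)]
          nlinarith [pow_pos hε0 2]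
  nlinarith [pow_pos hε0 2]

/-- key power inequality for off-diagonal cells -/
lemma bradley_cell_pow {ε : ℝ} (hε0 : 0 < ε) (hε1 : ε ≤ 1) {k u v : ℕ}
    (hkuv : u + v + 1 ≤ 2*k) {r p q : ℝ} (hr : r = ε^k) (hp : ε^u/2 ≤ p) (hq : ε^v/2 ≤ q) :
    r^2 ≤ 4*ε*(p*q) := by
  have hu : (0:ℝ) < ε^u := pow_pos hε0 u
  have hv : (0:ℝ) < ε^v := pow_pos hε0 v
  calc r^2 = ε^(2*k) := by rw [hr, ← pow_mul, mul_comm]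
    _ ≤ ε^(u+v+1) := pow_le_pow_of_le_one hε0.le hε1 hkuv
    _ = 4*ε*((ε^u/2)*(ε^v/2)) := by rw [pow_add, pow_add, pow_one]; ring
    _ ≤ 4*ε*(p*q) := by
        have h1 : (ε^u/2)*(ε^v/2) ≤ p*q :=
          mul_le_mul hp hq (by positivity) (le_trans (by positivity) hp)
        nlinarith


lemma bradley_row_bounds {N : ℕ} (hN : 3 ≤ N) {ε : ℝ} (hε0 : 0 < ε) (hε3 : ε ≤ 1/3)
    (r : ℕ → ℕ → ℝ) (p : ℕ → ℝ)
    (hrn : ∀ i j, 0 ≤ r i j)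
    (hsum : ∀ i, i ≤ N → p i = ∑ j ∈ Finset.range (N+1), r i j)
    (h00 : r 0 0 = 1 - 2*(ε^(2*N-1) + ∑ u ∈ Finset.Icc 1 (N-1), ε^(2*u)))
    (hA1 : ∀ m, 1 ≤ m → m ≤ N-1 → r (m-1) m = ε^(2*m))
    (hA2 : ∀ m, 1 ≤ m → m ≤ N-1 → r m (m-1) = ε^(2*m))
    (hN1 : r (N-1) N = ε^(2*N-1))
    (hN2 : r N (N-1) = ε^(2*N-1))
    (hz : ∀ i j, i ≤ N → j ≤ N → ((i = j ∧ 1 ≤ i) ∨ 2 ≤ |(i:ℤ) - (j:ℤ)|) → r i j = 0) :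
    (∀ i, i ≤ N → ε^(2*i)/2 ≤ p i) ∧ (ε^(2*N-1)/2 ≤ p N) ∧
    (∀ i, 1 ≤ i → i ≤ N → p i ≤ 2*ε^(2*i-1)) := by
  have hε1 : ε ≤ 1 := by linarith
  have hS : ε^(2*N-1) + ∑ u ∈ Finset.Icc 1 (N-1), ε^(2*u) ≤ 2*ε^2 := bradley_S_le hN hε0 hε3
  have hε2 : ε^2 ≤ 1/9 := by nlinarith
  have hentry : ∀ i j, i ≤ N → j ∈ Finset.range (N+1) → r i j ≤ p i := by
    intro i j hi hj
    rw [hsum i hi]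
    exact Finset.single_le_sum (fun k _ => hrn i k) hj
  have hmem : ∀ j, j ≤ N → j ∈ Finset.range (N+1) := fun j hj => Finset.mem_range.mpr (by omega)
  -- lower bound at N
  have hpN : ε^(2*N-1)/2 ≤ p N := by
    have h := hentry N (N-1) le_rfl (hmem _ (by omega))
    rw [hN2] at h
    nlinarith [pow_pos hε0 (2*N-1)]
  have hlow : ∀ i, i ≤ N → ε^(2*i)/2 ≤ p i := by
    intro i hi
    rcases Nat.eq_zero_or_pos i with h0 | h1
    · subst h0
      have h := hentry 0 0 (by omega) (hmem _ (by omega))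
      rw [h00] at h
      simp only [mul_zero, pow_zero]
      nlinarith
    · rcases Nat.lt_or_ge i N with hiN | hiN
      · have h := hentry i (i-1) hi (hmem _ (by omega))
        rw [hA2 i h1 (by omega)] at h
        nlinarith [pow_pos hε0 (2*i)]
      · have hiN' : i = N := le_antisymm hi hiN
        have h2 : ε^(2*i) ≤ ε^(2*N-1) := pow_le_pow_of_le_one hε0.le hε1 (by omega)
        calc ε^(2*i)/2 ≤ ε^(2*N-1)/2 := by linarith
          _ ≤ p i := hiN' ▸ hpN
  refine ⟨hlow, hpN, ?_⟩
  intro i h1 hiN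
  have hterm : ∀ j ∈ Finset.range (N+1),
      r i j ≤ (if j = i-1 then ε^(2*i-1) else 0) + (if j = i+1 then ε^(2*i-1) else 0) := by
    intro j hj
    have hjN : j ≤ N := by have := Finset.mem_range.mp hj; omega
    by_cases e1 : j = i-1
    · subst e1
      have e2 : ¬ (i-1 = i+1) := by omega
      rw [if_pos rfl, if_neg e2, add_zero]
      rcases Nat.lt_or_ge i N with hlt | hge
      · rw [hA2 i h1 (by omega)]
        exact pow_le_pow_of_le_one hε0.le hε1 (by omega)
      · have : i = N := le_antisymm hiN hge
        subst this
        rw [hN2]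
    · by_cases e2 : j = i+1
      · subst e2
        rw [if_neg e1, if_pos rfl, zero_add]
        rcases Nat.lt_or_ge (i+1) N with hlt | hge
        · have := hA1 (i+1) (by omega) (by omega)
          simp only [Nat.add_sub_cancel] at this
          rw [this]
          exact pow_le_pow_of_le_one hε0.le hε1 (by omega)
        · have hiN1 : i + 1 = N := by omega
          have hi' : i = N - 1 := by omega
          rw [hiN1, hi', hN1]
          exact pow_le_pow_of_le_one hε0.le hε1 (by omega)
      · rw [if_neg e1, if_neg e2, add_zero]
        by_cases e3 : j = i
        · rw [hz i j hiN hjN (Or.inl ⟨e3.symm, h1⟩)]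
        · rw [hz i j hiN hjN (Or.inr ?_)]
          rcases Nat.lt_or_ge i j with hc | hc
          · exact le_abs.mpr (Or.inr (by push_cast; omega))
          · exact le_abs.mpr (Or.inl (by push_cast; omega))
  calc p i = ∑ j ∈ Finset.range (N+1), r i j := hsum i hiN
    _ ≤ ∑ j ∈ Finset.range (N+1),
        ((if j = i-1 then ε^(2*i-1) else 0) + (if j = i+1 then ε^(2*i-1) else 0)) :=
          Finset.sum_le_sum hterm
    _ = (if i-1 ∈ Finset.range (N+1) then ε^(2*i-1) else 0)
        + (if i+1 ∈ Finset.range (N+1) then ε^(2*i-1) else 0) := by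
          rw [Finset.sum_add_distrib, Finset.sum_ite_eq' _ (i-1) (fun _ => ε^(2*i-1)),
            Finset.sum_ite_eq' _ (i+1) (fun _ => ε^(2*i-1))]
    _ ≤ 2*ε^(2*i-1) := by
          have := pow_nonneg hε0.le (2*i-1)
          split_ifs <;> linarith

set_option maxHeartbeats 1000000 in
lemma bradley_cell_bound {N : ℕ} (hN : 3 ≤ N) {ε : ℝ} (hε0 : 0 < ε) (hε3 : ε ≤ 1/3)
    (r : ℕ → ℕ → ℝ) (p q : ℕ → ℝ)
    (hrn : ∀ i j, 0 ≤ r i j)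
    (hrp : ∀ i j, i ≤ N → j ≤ N → r i j ≤ p i)
    (hrq : ∀ i j, i ≤ N → j ≤ N → r i j ≤ q j)
    (hple1 : ∀ i, p i ≤ 1) (hqle1 : ∀ j, q j ≤ 1)
    (hplow : ∀ i, i ≤ N → ε^(2*i)/2 ≤ p i) (hpN : ε^(2*N-1)/2 ≤ p N)
    (hqlow : ∀ j, j ≤ N → ε^(2*j)/2 ≤ q j) (hqN : ε^(2*N-1)/2 ≤ q N)
    (hpup : ∀ i, 1 ≤ i → i ≤ N → p i ≤ 2*ε^(2*i-1))
    (hqup : ∀ j, 1 ≤ j → j ≤ N → q j ≤ 2*ε^(2*j-1))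
    (h00 : r 0 0 = 1 - 2*(ε^(2*N-1) + ∑ u ∈ Finset.Icc 1 (N-1), ε^(2*u)))
    (hA1 : ∀ m, 1 ≤ m → m ≤ N-1 → r (m-1) m = ε^(2*m))
    (hA2 : ∀ m, 1 ≤ m → m ≤ N-1 → r m (m-1) = ε^(2*m))
    (hN1 : r (N-1) N = ε^(2*N-1))
    (hN2 : r N (N-1) = ε^(2*N-1))
    (hz : ∀ i j, i ≤ N → j ≤ N → ((i = j ∧ 1 ≤ i) ∨ 2 ≤ |(i:ℤ) - (j:ℤ)|) → r i j = 0)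
    (i j : ℕ) (hi : i ≤ N) (hj : j ≤ N) :
    |r i j - p i * q j| ≤ 6 * Real.sqrt ε * (Real.sqrt (p i) * Real.sqrt (q j)) := by
  have hε1 : ε ≤ 1 := by linarith
  have hppos : 0 < p i := lt_of_lt_of_le (by positivity) (hplow i hi)
  have hqpos : 0 < q j := lt_of_lt_of_le (by positivity) (hqlow j hj)
  have hsnn : (0:ℝ) ≤ Real.sqrt ε := Real.sqrt_nonneg ε
  have hsε : Real.sqrt ε * Real.sqrt ε = ε := Real.mul_self_sqrt hε0.le
  by_cases h0 : i = 0 ∧ j = 0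
  · obtain ⟨hi0, hj0⟩ := h0
    subst hi0; subst hj0
    have hS : (ε^(2*N-1) + ∑ u ∈ Finset.Icc 1 (N-1), ε^(2*u)) ≤ 2*ε^2 :=
      bradley_S_le hN hε0 hε3
    have hSnn : (0:ℝ) ≤ ε^(2*N-1) + ∑ u ∈ Finset.Icc 1 (N-1), ε^(2*u) := by positivity
    obtain ⟨S, hgen⟩ : ∃ S : ℝ, ε^(2*N-1) + ∑ u ∈ Finset.Icc 1 (N-1), ε^(2*u) = S := ⟨_, rfl⟩
    rw [hgen] at h00 hS hSnn
    have hε2 : ε^2 ≤ 1/9 := by nlinarith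
    have hrp0 : r 0 0 ≤ p 0 := hrp 0 0 (by omega) (by omega)
    have hrq0 : r 0 0 ≤ q 0 := hrq 0 0 (by omega) (by omega)
    have habs : |r 0 0 - p 0 * q 0| ≤ 8*ε^2 := by
      rw [abs_le]
      constructor
      · nlinarith [hple1 0, hqle1 0]
      · nlinarith [hple1 0, hqle1 0, mul_le_mul hrp0 hrq0 (by nlinarith) (by nlinarith : (0:ℝ) ≤ p 0)]
    have hs35 : Real.sqrt ε ≤ 3/5 := by
      rw [show (3/5:ℝ) = Real.sqrt ((3/5)^2) from (Real.sqrt_sq (by norm_num)).symm]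
      exact Real.sqrt_le_sqrt (by nlinarith)
    have h12 : (1/2:ℝ) ≤ Real.sqrt (p 0) * Real.sqrt (q 0) := by
      have hp12 : (1/2:ℝ) ≤ p 0 := by have := hplow 0 (by omega); simpa using this
      have hq12 : (1/2:ℝ) ≤ q 0 := by have := hqlow 0 (by omega); simpa using this
      have l1 : Real.sqrt (1/2) ≤ Real.sqrt (p 0) := Real.sqrt_le_sqrt hp12
      have l2 : Real.sqrt (1/2) ≤ Real.sqrt (q 0) := Real.sqrt_le_sqrt hq12
      have l3 : Real.sqrt (1/2) * Real.sqrt (1/2) = 1/2 := Real.mul_self_sqrt (by norm_num)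
      nlinarith [Real.sqrt_nonneg (1/2:ℝ)]
    calc |r 0 0 - p 0 * q 0| ≤ 8*ε^2 := habs
      _ ≤ 3*Real.sqrt ε := by nlinarith [sq_nonneg (Real.sqrt ε), sq_nonneg (Real.sqrt ε - 3/5)]
      _ ≤ 6*Real.sqrt ε*(Real.sqrt (p 0)*Real.sqrt (q 0)) := by nlinarith
  · -- off-corner case
    have h1 : 1 ≤ i ∨ 1 ≤ j := by omega
    have hpnn : (0:ℝ) ≤ p i := hppos.le
    have hqnn : (0:ℝ) ≤ q j := hqpos.le
    -- (a) p*q ≤ 2ε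
    have ha : p i * q j ≤ 2*ε := by
      rcases h1 with h1 | h1
      · have := hpup i h1 hi
        have he : ε^(2*i-1) ≤ ε := by
          calc ε^(2*i-1) ≤ ε^1 := pow_le_pow_of_le_one hε0.le hε1 (by omega)
            _ = ε := pow_one ε
        nlinarith [hqle1 j]
      · have := hqup j h1 hj
        have he : ε^(2*j-1) ≤ ε := by
          calc ε^(2*j-1) ≤ ε^1 := pow_le_pow_of_le_one hε0.le hε1 (by omega)
            _ = ε := pow_one ε
        nlinarith [hple1 i]
    -- (b) r² ≤ 4ε p q
    have hb : (r i j)^2 ≤ 4*ε*(p i * q j) := by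
      by_cases hij : i = j
      · rw [hz i j hi hj (Or.inl ⟨hij, by omega⟩)]
        nlinarith [mul_pos hppos hqpos, hε0]
      · by_cases hji1 : j = i+1
        · subst hji1
          rcases Nat.lt_or_ge (i+1) N with hlt | hge
          · have hv := hA1 (i+1) (by omega) (by omega)
            simp only [Nat.add_sub_cancel] at hv
            exact bradley_cell_pow hε0 hε1 (k := 2*(i+1)) (by omega) hv
              (hplow i hi) (hqlow (i+1) hj)
          · have hiN : i + 1 = N := by omega
            have hi' : i = N - 1 := by omega
            have hv : r i (i+1) = ε^(2*N-1) := by rw [hiN, hi']; exact hN1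
            refine bradley_cell_pow hε0 hε1 (k := 2*N-1) (u := 2*i) (v := 2*N-1)
              (by omega) hv (hplow i hi) ?_
            rw [hiN]; exact hqN
        · by_cases hij1 : i = j+1
          · subst hij1
            rcases Nat.lt_or_ge (j+1) N with hlt | hge
            · have hv := hA2 (j+1) (by omega) (by omega)
              simp only [Nat.add_sub_cancel] at hv
              exact bradley_cell_pow hε0 hε1 (k := 2*(j+1)) (by omega) hv
                (hplow (j+1) hi) (hqlow j hj)
            · have hjN : j + 1 = N := by omega
              have hj' : j = N - 1 := by omega
              have hv : r (j+1) j = ε^(2*N-1) := by rw [hjN, hj']; exact hN2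
              refine bradley_cell_pow hε0 hε1 (k := 2*N-1) (u := 2*N-1) (v := 2*j)
                (by omega) hv ?_ (hqlow j hj)
              rw [hjN]; exact hpN
          · have : r i j = 0 := by
              refine hz i j hi hj (Or.inr ?_)
              rcases Nat.lt_or_ge i j with hc | hc
              · exact le_abs.mpr (Or.inr (by omega))
              · exact le_abs.mpr (Or.inl (by omega))
            rw [this]
            nlinarith [mul_pos hppos hqpos, hε0]
    -- conclude
    have hrle : r i j ≤ 2*Real.sqrt ε*(Real.sqrt (p i)*Real.sqrt (q j)) := by
      have h2 : (2*Real.sqrt ε*(Real.sqrt (p i)*Real.sqrt (q j)))^2 = 4*ε*(p i*q j) := by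
        rw [mul_pow, mul_pow, mul_pow, Real.sq_sqrt hε0.le, Real.sq_sqrt hpnn,
          Real.sq_sqrt hqnn]
        ring
      calc r i j = Real.sqrt ((r i j)^2) := (Real.sqrt_sq (hrn i j)).symm
        _ ≤ Real.sqrt ((2*Real.sqrt ε*(Real.sqrt (p i)*Real.sqrt (q j)))^2) := by
            rw [h2]; exact Real.sqrt_le_sqrt hb
        _ = 2*Real.sqrt ε*(Real.sqrt (p i)*Real.sqrt (q j)) :=
            Real.sqrt_sq (by positivity)
    have hpqle : p i * q j ≤ 2*Real.sqrt ε*(Real.sqrt (p i)*Real.sqrt (q j)) := by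
      have e1 : Real.sqrt (p i) * Real.sqrt (q j) = Real.sqrt (p i * q j) :=
        (Real.sqrt_mul hpnn _).symm
      have e2 : Real.sqrt (p i * q j) ≤ Real.sqrt (2*ε) := Real.sqrt_le_sqrt ha
      have e3 : Real.sqrt (2*ε) ≤ 2*Real.sqrt ε := by
        rw [Real.sqrt_mul (by norm_num : (0:ℝ) ≤ 2)]
        have : Real.sqrt 2 ≤ 2 := by
          nlinarith [Real.sq_sqrt (by norm_num : (0:ℝ) ≤ 2), Real.sqrt_nonneg (2:ℝ),
            sq_nonneg (Real.sqrt 2 - 2)]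
        nlinarith [Real.sqrt_nonneg (2:ℝ)]
      have e4 : p i * q j = Real.sqrt (p i * q j) * Real.sqrt (p i * q j) :=
        (Real.mul_self_sqrt (by positivity)).symm
      calc p i * q j = Real.sqrt (p i * q j) * Real.sqrt (p i * q j) := e4
        _ ≤ (2*Real.sqrt ε) * Real.sqrt (p i * q j) := by
            nlinarith [Real.sqrt_nonneg (p i * q j)]
        _ = 2*Real.sqrt ε*(Real.sqrt (p i)*Real.sqrt (q j)) := by rw [e1]
    have hX : (0:ℝ) ≤ Real.sqrt ε*(Real.sqrt (p i)*Real.sqrt (q j)) := by positivity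
    rw [abs_le]
    constructor
    · nlinarith [hrn i j, mul_pos hppos hqpos]
    · nlinarith [hrn i j, mul_pos hppos hqpos]

lemma sigmaOf_singleton {Ω : Type*} [MeasurableSpace Ω] (X : ℤ → Ω → ℝ) (k : ℤ) :
    sigmaOf X {k} = MeasurableSpace.comap (X k) inferInstance := by
  simp [sigmaOf]

set_option maxHeartbeats 2000000 in
lemma bradley_corr_bound {Ω : Type*} [MeasurableSpace Ω] (P : Measure Ω)
    [IsProbabilityMeasure P]
    (N : ℕ) (hN : 3 ≤ N) (ε : ℝ) (hε0 : 0 < ε) (hε3 : ε ≤ 1/3)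
    (Y : ℤ → Ω → ℝ) (hC : ConditionS P N ε Y)
    (f g : Ω → ℝ) (hf : Measurable[sigmaOf Y {0}] f) (hg : Measurable[sigmaOf Y {1}] g)
    (hf2 : MemLp f 2 P) (hg2 : MemLp g 2 P) :
    |corrP P f g| ≤ 6 * (N+1)^2 * Real.sqrt ε := by
  classical
  obtain ⟨hstat, ⟨hmeas, -⟩, hae0, h00, hAdj, hN1', hN2', hzero⟩ := hC
  set A : ℕ → Set Ω := fun i => Y 0 ⁻¹' {(i:ℝ)} with hA
  set B : ℕ → Set Ω := fun j => Y 1 ⁻¹' {(j:ℝ)} with hB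
  have mA : ∀ i, MeasurableSet (A i) := fun i => hmeas 0 (measurableSet_singleton _)
  have mB : ∀ j, MeasurableSet (B j) := fun j => hmeas 1 (measurableSet_singleton _)
  have cellSet : ∀ i j : ℕ, {ω | Y 0 ω = (i:ℝ) ∧ Y 1 ω = (j:ℝ)} = A i ∩ B j := by
    intro i j; ext ω
    simp [hA, hB, Set.mem_preimage, Set.mem_singleton_iff, Set.mem_setOf_eq]
  set r : ℕ → ℕ → ℝ := fun i j => (P (A i ∩ B j)).toReal with hrdef
  set p : ℕ → ℝ := fun i => (P (A i)).toReal with hpdef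
  set q : ℕ → ℝ := fun j => (P (B j)).toReal with hqdef
  -- r-matrix facts
  have hr00 : r 0 0 = 1 - 2*(ε^(2*N-1) + ∑ u ∈ Finset.Icc 1 (N-1), ε^(2*u)) := by
    have e : {ω | Y 0 ω = (0:ℝ) ∧ Y 1 ω = (0:ℝ)} = A 0 ∩ B 0 := by
      have := cellSet 0 0; simpa using this
    simp only [hrdef]; rw [← e]; exact h00
  have hrA1 : ∀ m, 1 ≤ m → m ≤ N-1 → r (m-1) m = ε^(2*m) := by
    intro m h1 h2
    have hc : ((m-1:ℕ):ℝ) = (m:ℝ) - 1 := by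
      rw [Nat.cast_sub h1, Nat.cast_one]
    have e : {ω | Y 0 ω = (m:ℝ) - 1 ∧ Y 1 ω = (m:ℝ)} = A (m-1) ∩ B m := by
      rw [← cellSet (m-1) m, hc]
    simp only [hrdef]; rw [← e]; exact (hAdj m h1 h2).1
  have hrA2 : ∀ m, 1 ≤ m → m ≤ N-1 → r m (m-1) = ε^(2*m) := by
    intro m h1 h2
    have hc : ((m-1:ℕ):ℝ) = (m:ℝ) - 1 := by
      rw [Nat.cast_sub h1, Nat.cast_one]
    have e : {ω | Y 0 ω = (m:ℝ) ∧ Y 1 ω = (m:ℝ) - 1} = A m ∩ B (m-1) := by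
      rw [← cellSet m (m-1), hc]
    simp only [hrdef]; rw [← e]; exact (hAdj m h1 h2).2
  have hN1pos : 1 ≤ N := by omega
  have hcN : ((N-1:ℕ):ℝ) = (N:ℝ) - 1 := by rw [Nat.cast_sub hN1pos, Nat.cast_one]
  have hrN1 : r (N-1) N = ε^(2*N-1) := by
    have e : {ω | Y 0 ω = (N:ℝ) - 1 ∧ Y 1 ω = (N:ℝ)} = A (N-1) ∩ B N := by
      rw [← cellSet (N-1) N, hcN]
    simp only [hrdef]; rw [← e]; exact hN1'
  have hrN2 : r N (N-1) = ε^(2*N-1) := by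
    have e : {ω | Y 0 ω = (N:ℝ) ∧ Y 1 ω = (N:ℝ) - 1} = A N ∩ B (N-1) := by
      rw [← cellSet N (N-1), hcN]
    simp only [hrdef]; rw [← e]; exact hN2'
  have hrz : ∀ i j, i ≤ N → j ≤ N → ((i = j ∧ 1 ≤ i) ∨ 2 ≤ |(i:ℤ) - (j:ℤ)|) → r i j = 0 := by
    intro i j hi hj hcond
    have := hzero i j hi hj hcond
    rw [cellSet i j] at this
    simp only [hrdef, this, ENNReal.toReal_zero]
  -- a.e. covers
  have hcovA : ∀ᵐ ω ∂P, ∃ i ∈ Finset.range (N+1), ω ∈ A i := by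
    filter_upwards [hae0] with ω hω
    obtain ⟨i, hiN, hYi⟩ := hω
    exact ⟨i, Finset.mem_range.mpr (by omega), hYi⟩
  set C : Set ℝ := ⋃ i ∈ Finset.range (N+1), {((i:ℕ):ℝ)} with hCdef
  have mC : MeasurableSet C :=
    (Finset.range (N+1)).measurableSet_biUnion (fun i _ => measurableSet_singleton _)
  have hmemC : ∀ x : ℝ, x ∈ C ↔ ∃ i ∈ Finset.range (N+1), x = (i:ℝ) := by
    intro x; simp [hCdef, Set.mem_iUnion, eq_comm]
  have hmeasT1 : Measurable (fun ω => fun k : ℤ => Y (k+1) ω) :=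
    measurable_pi_lambda _ (fun k => hmeas (k+1))
  have hmeasT0 : Measurable (fun ω => fun k : ℤ => Y k ω) :=
    measurable_pi_lambda _ (fun k => hmeas k)
  have hEmeas : MeasurableSet ((fun x : ℤ → ℝ => x 0) ⁻¹' C) := (measurable_pi_apply 0) mC
  have hY0C : P (Y 0 ⁻¹' C) = 1 := by
    have hsub : ∀ᵐ ω ∂P, ω ∈ Y 0 ⁻¹' C := by
      filter_upwards [hae0] with ω hω
      obtain ⟨i, hiN, hYi⟩ := hω
      rw [Set.mem_preimage, hmemC]
      exact ⟨i, Finset.mem_range.mpr (by omega), hYi⟩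
    have h0 : P ((Y 0 ⁻¹' C)ᶜ) = 0 := by
      have := ae_iff.mp hsub
      exact this
    exact (prob_compl_eq_zero_iff ((hmeas 0) mC)).mp h0
  have hY1C : P (Y 1 ⁻¹' C) = 1 := by
    have hkey := congrArg (fun μ => μ ((fun x : ℤ → ℝ => x 0) ⁻¹' C)) (hstat 1)
    simp only [Measure.map_apply hmeasT1 hEmeas, Measure.map_apply hmeasT0 hEmeas] at hkey
    have e1 : (fun ω => fun k : ℤ => Y (k+1) ω) ⁻¹' ((fun x : ℤ → ℝ => x 0) ⁻¹' C)
        = Y 1 ⁻¹' C := by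
      ext ω; simp [Set.mem_preimage]
    have e0 : (fun ω => fun k : ℤ => Y k ω) ⁻¹' ((fun x : ℤ → ℝ => x 0) ⁻¹' C)
        = Y 0 ⁻¹' C := by
      ext ω; simp [Set.mem_preimage]
    rw [e1, e0] at hkey
    rw [hkey, hY0C]
  have hcovB : ∀ᵐ ω ∂P, ∃ j ∈ Finset.range (N+1), ω ∈ B j := by
    have h0 : P ((Y 1 ⁻¹' C)ᶜ) = 0 := (prob_compl_eq_zero_iff ((hmeas 1) mC)).mpr hY1C
    have hsub : ∀ᵐ ω ∂P, ω ∈ Y 1 ⁻¹' C := by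
      apply ae_iff.mpr
      exact h0
    filter_upwards [hsub] with ω hω
    rw [Set.mem_preimage, hmemC] at hω
    obtain ⟨j, hj, hYj⟩ := hω
    exact ⟨j, hj, hYj⟩
  -- cells cover
  have hcovCells : ∀ᵐ ω ∂P, ∃ z ∈ (Finset.range (N+1)) ×ˢ (Finset.range (N+1)),
      ω ∈ A z.1 ∩ B z.2 := by
    filter_upwards [hcovA, hcovB] with ω h1 h2
    obtain ⟨i, hi, hAi⟩ := h1
    obtain ⟨j, hj, hBj⟩ := h2
    exact ⟨(i,j), Finset.mem_product.mpr ⟨hi, hj⟩, hAi, hBj⟩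
  have hdisA : ∀ i j : ℕ, i ≠ j → ∀ ω, ω ∈ A i → ω ∉ A j := by
    intro i j hij ω h1 h2
    have e1 : Y 0 ω = (i:ℝ) := h1
    have e2 : Y 0 ω = (j:ℝ) := h2
    exact hij (Nat.cast_injective (e1.symm.trans e2))
  have hdisB : ∀ i j : ℕ, i ≠ j → ∀ ω, ω ∈ B i → ω ∉ B j := by
    intro i j hij ω h1 h2
    have e1 : Y 1 ω = (i:ℝ) := h1
    have e2 : Y 1 ω = (j:ℝ) := h2
    exact hij (Nat.cast_injective (e1.symm.trans e2))
  have hnullB : P {ω | ¬ ∃ j ∈ Finset.range (N+1), ω ∈ B j} = 0 := ae_iff.mp hcovB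
  have hnullA : P {ω | ¬ ∃ i ∈ Finset.range (N+1), ω ∈ A i} = 0 := ae_iff.mp hcovA
  have hpsum : ∀ i, i ≤ N → p i = ∑ j ∈ Finset.range (N+1), r i j := by
    intro i _
    have hsub : A i =ᵐ[P] ⋃ j ∈ Finset.range (N+1), (A i ∩ B j) := by
      rw [ae_eq_set]
      constructor
      · apply measure_mono_null ?_ hnullB
        intro ω hω
        simp only [Set.mem_diff, Set.mem_iUnion, exists_prop] at hω
        simp only [Set.mem_setOf_eq]
        rintro ⟨j, hj, hBj⟩
        exact hω.2 ⟨j, hj, hω.1, hBj⟩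
      · have hsub2 : (⋃ j ∈ Finset.range (N+1), (A i ∩ B j)) ⊆ A i := by
          intro ω hω
          simp only [Set.mem_iUnion, exists_prop] at hω
          exact hω.choose_spec.2.1
        rw [Set.diff_eq_empty.mpr hsub2]
        exact measure_empty
    have h1 : P (A i) = P (⋃ j ∈ Finset.range (N+1), (A i ∩ B j)) := measure_congr hsub
    have hdp : (↑(Finset.range (N+1)) : Set ℕ).PairwiseDisjoint (fun j => A i ∩ B j) := by
      intro x _ y _ hxy
      apply Set.disjoint_left.mpr
      intro ω hωx hωy
      exact hdisB x y hxy ω hωx.2 hωy.2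
    have h2 : P (⋃ j ∈ Finset.range (N+1), (A i ∩ B j))
        = ∑ j ∈ Finset.range (N+1), P (A i ∩ B j) :=
      measure_biUnion_finset hdp (fun j _ => (mA i).inter (mB j))
    simp only [hpdef, hrdef]
    rw [h1, h2, ENNReal.toReal_sum (fun j _ => measure_ne_top P _)]
  have hqsum : ∀ j, j ≤ N → q j = ∑ i ∈ Finset.range (N+1), r i j := by
    intro j _
    have hsub : B j =ᵐ[P] ⋃ i ∈ Finset.range (N+1), (A i ∩ B j) := by
      rw [ae_eq_set]
      constructor
      · apply measure_mono_null ?_ hnullA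
        intro ω hω
        simp only [Set.mem_diff, Set.mem_iUnion, exists_prop] at hω
        simp only [Set.mem_setOf_eq]
        rintro ⟨i, hi, hAi⟩
        exact hω.2 ⟨i, hi, hAi, hω.1⟩
      · have hsub2 : (⋃ i ∈ Finset.range (N+1), (A i ∩ B j)) ⊆ B j := by
          intro ω hω
          simp only [Set.mem_iUnion, exists_prop] at hω
          exact hω.choose_spec.2.2
        rw [Set.diff_eq_empty.mpr hsub2]
        exact measure_empty
    have h1 : P (B j) = P (⋃ i ∈ Finset.range (N+1), (A i ∩ B j)) := measure_congr hsub
    have hdp : (↑(Finset.range (N+1)) : Set ℕ).PairwiseDisjoint (fun i => A i ∩ B j) := by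
      intro x _ y _ hxy
      apply Set.disjoint_left.mpr
      intro ω hωx hωy
      exact hdisA x y hxy ω hωx.1 hωy.1
    have h2 : P (⋃ i ∈ Finset.range (N+1), (A i ∩ B j))
        = ∑ i ∈ Finset.range (N+1), P (A i ∩ B j) :=
      measure_biUnion_finset hdp (fun i _ => (mA i).inter (mB j))
    simp only [hqdef, hrdef]
    rw [h1, h2, ENNReal.toReal_sum (fun i _ => measure_ne_top P _)]
  -- basic bounds
  have hrn : ∀ i j, 0 ≤ r i j := fun i j => ENNReal.toReal_nonneg
  have hpnn : ∀ i, 0 ≤ p i := fun i => ENNReal.toReal_nonneg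
  have hqnn : ∀ j, 0 ≤ q j := fun j => ENNReal.toReal_nonneg
  have hple1 : ∀ i, p i ≤ 1 := by
    intro i
    calc p i ≤ (1:ℝ≥0∞).toReal := ENNReal.toReal_mono ENNReal.one_ne_top prob_le_one
      _ = 1 := ENNReal.toReal_one
  have hqle1 : ∀ j, q j ≤ 1 := by
    intro j
    calc q j ≤ (1:ℝ≥0∞).toReal := ENNReal.toReal_mono ENNReal.one_ne_top prob_le_one
      _ = 1 := ENNReal.toReal_one
  have hrp : ∀ i j, i ≤ N → j ≤ N → r i j ≤ p i := fun i j _ _ =>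
    ENNReal.toReal_mono (measure_ne_top P _) (measure_mono Set.inter_subset_left)
  have hrq : ∀ i j, i ≤ N → j ≤ N → r i j ≤ q j := fun i j _ _ =>
    ENNReal.toReal_mono (measure_ne_top P _) (measure_mono Set.inter_subset_right)
  obtain ⟨hplow, hpNl, hpup⟩ :=
    bradley_row_bounds hN hε0 hε3 r p hrn hpsum hr00 hrA1 hrA2 hrN1 hrN2 hrz
  obtain ⟨hqlow, hqNl, hqup⟩ :=
    bradley_row_bounds hN hε0 hε3 (fun i j => r j i) q (fun i j => hrn j i) hqsum hr00
      (fun m h1 h2 => hrA2 m h1 h2) (fun m h1 h2 => hrA1 m h1 h2) hrN2 hrN1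
      (fun i j hi hj hc => by
        refine hrz j i hj hi ?_
        rcases hc with ⟨he, h1⟩ | habs
        · exact Or.inl ⟨he.symm, he ▸ h1⟩
        · exact Or.inr (by rwa [abs_sub_comm]))
  have hcell := fun i j (hi : i ≤ N) (hj : j ≤ N) =>
    bradley_cell_bound hN hε0 hε3 r p q hrn hrp hrq hple1 hqle1 hplow hpNl hqlow hqNl
      hpup hqup hr00 hrA1 hrA2 hrN1 hrN2 hrz i j hi hj
  -- function values on atoms
  have hf' : Measurable[MeasurableSpace.comap (Y 0) inferInstance] f := by
    rwa [sigmaOf_singleton] at hf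
  have hg' : Measurable[MeasurableSpace.comap (Y 1) inferInstance] g := by
    rwa [sigmaOf_singleton] at hg
  set a : ℕ → ℝ := fun i => if h : (A i).Nonempty then f h.some else 0 with hadef
  set b : ℕ → ℝ := fun j => if h : (B j).Nonempty then g h.some else 0 with hbdef
  have hfa : ∀ i, ∀ ω ∈ A i, f ω = a i := by
    intro i ω hω
    have hne : (A i).Nonempty := ⟨ω, hω⟩
    simp only [hadef, dif_pos hne]
    refine comap_fiber_const hf' ?_
    have e1 : Y 0 ω = (i:ℝ) := hω
    have e2 : Y 0 hne.some = (i:ℝ) := hne.some_mem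
    rw [e1, e2]
  have hgb : ∀ j, ∀ ω ∈ B j, g ω = b j := by
    intro j ω hω
    have hne : (B j).Nonempty := ⟨ω, hω⟩
    simp only [hbdef, dif_pos hne]
    refine comap_fiber_const hg' ?_
    have e1 : Y 1 ω = (j:ℝ) := hω
    have e2 : Y 1 hne.some = (j:ℝ) := hne.some_mem
    rw [e1, e2]
  set mf := ∫ x, f x ∂P with hmf
  set mg := ∫ x, g x ∂P with hmg
  have hintf : Integrable f P := hf2.integrable one_le_two
  have hintg : Integrable g P := hg2.integrable one_le_two
  have hsum0f : ∑ i ∈ Finset.range (N+1), (a i - mf) * p i = 0 := by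
    have h := integral_eq_sum_partition P (Finset.range (N+1)) A (fun i _ => mA i)
      (fun i _ j _ hij => hdisA i j hij) hcovA (fun ω => f ω - mf) (fun i => a i - mf)
      (fun i hi ω hω => by show f ω - mf = a i - mf; rw [hfa i ω hω])
    rw [integral_sub hintf (integrable_const mf), integral_const] at h
    simp only [measure_univ, probReal_univ, smul_eq_mul, one_mul, ← hmf] at h
    simp only [hpdef] at h ⊢
    linarith [h]
  have hsum0g : ∑ j ∈ Finset.range (N+1), (b j - mg) * q j = 0 := by
    have h := integral_eq_sum_partition P (Finset.range (N+1)) B (fun j _ => mB j)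
      (fun i _ j _ hij => hdisB i j hij) hcovB (fun ω => g ω - mg) (fun j => b j - mg)
      (fun j hj ω hω => by show g ω - mg = b j - mg; rw [hgb j ω hω])
    rw [integral_sub hintg (integrable_const mg), integral_const] at h
    simp only [measure_univ, probReal_univ, smul_eq_mul, one_mul, ← hmg] at h
    simp only [hqdef] at h ⊢
    linarith [h]
  have hVf : covP P f f = ∑ i ∈ Finset.range (N+1), (a i - mf)^2 * p i := by
    have hcov : covP P f f = ∫ ω, (f ω - mf)*(f ω - mf) ∂P := by rw [hmf]; rfl
    have h := integral_eq_sum_partition P (Finset.range (N+1)) A (fun i _ => mA i)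
      (fun i _ j _ hij => hdisA i j hij) hcovA (fun ω => (f ω - mf)*(f ω - mf))
      (fun i => (a i - mf)^2)
      (fun i hi ω hω => by
        show (f ω - mf)*(f ω - mf) = (a i - mf)^2
        rw [hfa i ω hω]; ring)
    rw [hcov, h]
  have hVg : covP P g g = ∑ j ∈ Finset.range (N+1), (b j - mg)^2 * q j := by
    have hcov : covP P g g = ∫ ω, (g ω - mg)*(g ω - mg) ∂P := by rw [hmg]; rfl
    have h := integral_eq_sum_partition P (Finset.range (N+1)) B (fun j _ => mB j)
      (fun i _ j _ hij => hdisB i j hij) hcovB (fun ω => (g ω - mg)*(g ω - mg))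
      (fun j => (b j - mg)^2)
      (fun j hj ω hω => by
        show (g ω - mg)*(g ω - mg) = (b j - mg)^2
        rw [hgb j ω hω]; ring)
    rw [hcov, h]
  have hCovPr : covP P f g = ∑ i ∈ Finset.range (N+1), ∑ j ∈ Finset.range (N+1),
      ((a i - mf)*(b j - mg)) * r i j := by
    have hcov : covP P f g = ∫ ω, (f ω - mf)*(g ω - mg) ∂P := by rw [hmf, hmg]; rfl
    have h := integral_eq_sum_partition P ((Finset.range (N+1)) ×ˢ (Finset.range (N+1)))
      (fun z => A z.1 ∩ B z.2) (fun z _ => (mA z.1).inter (mB z.2))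
      (by
        intro z _ z' _ hzz ω hωz hωz'
        by_cases h1 : z.1 = z'.1
        · have h2 : z.2 ≠ z'.2 := fun h2 => hzz (Prod.ext h1 h2)
          exact hdisB z.2 z'.2 h2 ω hωz.2 hωz'.2
        · exact hdisA z.1 z'.1 h1 ω hωz.1 hωz'.1)
      hcovCells (fun ω => (f ω - mf)*(g ω - mg)) (fun z => (a z.1 - mf)*(b z.2 - mg))
      (fun z hz ω hω => by
        show (f ω - mf)*(g ω - mg) = (a z.1 - mf)*(b z.2 - mg)
        rw [hfa z.1 ω hω.1, hgb z.2 ω hω.2])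
    rw [hcov, h, Finset.sum_product]
  -- final algebra
  have hVfnn : 0 ≤ covP P f f := by
    rw [hVf]
    exact Finset.sum_nonneg fun i _ => mul_nonneg (sq_nonneg _) (hpnn i)
  have hVgnn : 0 ≤ covP P g g := by
    rw [hVg]
    exact Finset.sum_nonneg fun j _ => mul_nonneg (sq_nonneg _) (hqnn j)
  have hcb : ∀ i ∈ Finset.range (N+1),
      |a i - mf| * Real.sqrt (p i) ≤ Real.sqrt (covP P f f) := by
    intro i hi
    have h1 : (a i - mf)^2 * p i ≤ covP P f f := by
      rw [hVf]
      exact Finset.single_le_sum (f := fun k => (a k - mf)^2 * p k)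
        (fun k _ => mul_nonneg (sq_nonneg _) (hpnn k)) hi
    calc |a i - mf| * Real.sqrt (p i) = Real.sqrt ((a i - mf)^2 * p i) := by
          rw [Real.sqrt_mul (sq_nonneg _), Real.sqrt_sq_eq_abs]
      _ ≤ Real.sqrt (covP P f f) := Real.sqrt_le_sqrt h1
  have hdb : ∀ j ∈ Finset.range (N+1),
      |b j - mg| * Real.sqrt (q j) ≤ Real.sqrt (covP P g g) := by
    intro j hj
    have h1 : (b j - mg)^2 * q j ≤ covP P g g := by
      rw [hVg]
      exact Finset.single_le_sum (f := fun k => (b k - mg)^2 * q k)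
        (fun k _ => mul_nonneg (sq_nonneg _) (hqnn k)) hj
    calc |b j - mg| * Real.sqrt (q j) = Real.sqrt ((b j - mg)^2 * q j) := by
          rw [Real.sqrt_mul (sq_nonneg _), Real.sqrt_sq_eq_abs]
      _ ≤ Real.sqrt (covP P g g) := Real.sqrt_le_sqrt h1
  have hsplit : covP P f g = ∑ i ∈ Finset.range (N+1), ∑ j ∈ Finset.range (N+1),
      ((a i - mf)*(b j - mg)) * (r i j - p i * q j) := by
    have hzz : ∑ i ∈ Finset.range (N+1), ∑ j ∈ Finset.range (N+1),
        ((a i - mf)*(b j - mg)) * (p i * q j) = 0 := by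
      have e : ∑ i ∈ Finset.range (N+1), ∑ j ∈ Finset.range (N+1),
          ((a i - mf)*(b j - mg)) * (p i * q j)
          = (∑ i ∈ Finset.range (N+1), (a i - mf)*p i)
            * (∑ j ∈ Finset.range (N+1), (b j - mg)*q j) := by
        rw [Finset.sum_mul_sum]
        refine Finset.sum_congr rfl fun i _ => Finset.sum_congr rfl fun j _ => by ring
      rw [e, hsum0f, zero_mul]
    have hdist : ∑ i ∈ Finset.range (N+1), ∑ j ∈ Finset.range (N+1),
        ((a i - mf)*(b j - mg)) * r i j
        = (∑ i ∈ Finset.range (N+1), ∑ j ∈ Finset.range (N+1),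
            ((a i - mf)*(b j - mg)) * (r i j - p i * q j))
          + ∑ i ∈ Finset.range (N+1), ∑ j ∈ Finset.range (N+1),
            ((a i - mf)*(b j - mg)) * (p i * q j) := by
      rw [← Finset.sum_add_distrib]
      refine Finset.sum_congr rfl fun i _ => ?_
      rw [← Finset.sum_add_distrib]
      refine Finset.sum_congr rfl fun j _ => by ring
    rw [hCovPr]
    rw [hdist, hzz, add_zero]
  have hCovB : |covP P f g| ≤ 6*Real.sqrt ε*(((N:ℝ)+1)^2
      *(Real.sqrt (covP P f f)*Real.sqrt (covP P g g))) := by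
    rw [hsplit]
    calc |∑ i ∈ Finset.range (N+1), ∑ j ∈ Finset.range (N+1),
        ((a i - mf)*(b j - mg)) * (r i j - p i * q j)|
        ≤ ∑ i ∈ Finset.range (N+1), |∑ j ∈ Finset.range (N+1),
            ((a i - mf)*(b j - mg)) * (r i j - p i * q j)| :=
          Finset.abs_sum_le_sum_abs _ _
      _ ≤ ∑ i ∈ Finset.range (N+1), ∑ j ∈ Finset.range (N+1),
            |((a i - mf)*(b j - mg)) * (r i j - p i * q j)| :=
          Finset.sum_le_sum fun i _ => Finset.abs_sum_le_sum_abs _ _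
      _ ≤ ∑ i ∈ Finset.range (N+1), ∑ j ∈ Finset.range (N+1),
            6*Real.sqrt ε*(Real.sqrt (covP P f f)*Real.sqrt (covP P g g)) := by
          refine Finset.sum_le_sum fun i hi => Finset.sum_le_sum fun j hj => ?_
          have hiN : i ≤ N := by have := Finset.mem_range.mp hi; omega
          have hjN : j ≤ N := by have := Finset.mem_range.mp hj; omega
          calc |((a i - mf)*(b j - mg)) * (r i j - p i * q j)|
              = (|a i - mf| * |b j - mg|) * |r i j - p i * q j| := by
                rw [abs_mul, abs_mul]
            _ ≤ (|a i - mf| * |b j - mg|)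
                * (6*Real.sqrt ε*(Real.sqrt (p i)*Real.sqrt (q j))) :=
                mul_le_mul_of_nonneg_left (hcell i j hiN hjN) (by positivity)
            _ = 6*Real.sqrt ε*((|a i - mf| * Real.sqrt (p i))*(|b j - mg| * Real.sqrt (q j))) := by
                ring
            _ ≤ 6*Real.sqrt ε*(Real.sqrt (covP P f f)*Real.sqrt (covP P g g)) := by
                refine mul_le_mul_of_nonneg_left ?_ (by positivity)
                exact mul_le_mul (hcb i hi) (hdb j hj) (by positivity) (Real.sqrt_nonneg _)
      _ = 6*Real.sqrt ε*(((N:ℝ)+1)^2*(Real.sqrt (covP P f f)*Real.sqrt (covP P g g))) := by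
          simp only [Finset.sum_const, Finset.card_range, nsmul_eq_mul]
          push_cast
          ring
  by_cases hd0 : Real.sqrt (covP P f f) * Real.sqrt (covP P g g) = 0
  · have heq : corrP P f g
        = covP P f g / (Real.sqrt (covP P f f) * Real.sqrt (covP P g g)) := rfl
    rw [heq, hd0, div_zero, abs_zero]
    positivity
  · have hdpos : 0 < Real.sqrt (covP P f f) * Real.sqrt (covP P g g) :=
      lt_of_le_of_ne (by positivity) (Ne.symm hd0)
    have heq : corrP P f g
        = covP P f g / (Real.sqrt (covP P f f) * Real.sqrt (covP P g g)) := rfl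
    rw [heq, abs_div, abs_of_pos hdpos, div_le_iff₀ hdpos]
    calc |covP P f g| ≤ 6*Real.sqrt ε*(((N:ℝ)+1)^2
        *(Real.sqrt (covP P f f)*Real.sqrt (covP P g g))) := hCovB
      _ = 6*((N:ℝ)+1)^2*Real.sqrt ε
          *(Real.sqrt (covP P f f)*Real.sqrt (covP P g g)) := by ring

/-- Lemma 2.2, Property (4): `ρ(σ(Y^{(ε)}_0), σ(Y^{(ε)}_1)) → 0` as `ε → 0+`. -/
theorem conditionS_rho_one_tendsto_zero [MeasurableSpace Ω] (P : Measure Ω)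
    [IsProbabilityMeasure P] (N : ℕ) (hN : 3 ≤ N) (Y : ℝ → ℤ → Ω → ℝ)
    (hY : ∀ ε ∈ Set.Ioc (0:ℝ) (1/3), ConditionS P N ε (Y ε)) :
    Tendsto (fun ε : ℝ => maxCorr (sigmaOf (Y ε) {0}) (sigmaOf (Y ε) {1}) P)
      (𝓝[>] 0) (𝓝 0) := by
  have hmem0 : ∀ ε : ℝ, (0:ℝ) ∈ {r : ℝ | ∃ f g : Ω → ℝ, Measurable[sigmaOf (Y ε) {0}] f ∧
      Measurable[sigmaOf (Y ε) {1}] g ∧ MemLp f 2 P ∧ MemLp g 2 P ∧ r = |corrP P f g|} := by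
    intro ε
    refine ⟨fun _ => 0, fun _ => 0, measurable_const, measurable_const,
      memLp_const 0, memLp_const 0, ?_⟩
    have hcov : covP P (fun _ : Ω => (0:ℝ)) (fun _ : Ω => (0:ℝ)) = 0 := by
      simp [covP]
    have heq : corrP P (fun _ : Ω => (0:ℝ)) (fun _ : Ω => (0:ℝ))
        = covP P (fun _ : Ω => (0:ℝ)) (fun _ : Ω => (0:ℝ))
          / (Real.sqrt (covP P (fun _ : Ω => (0:ℝ)) (fun _ : Ω => (0:ℝ)))
            * Real.sqrt (covP P (fun _ : Ω => (0:ℝ)) (fun _ : Ω => (0:ℝ)))) := rfl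
    rw [heq, hcov]
    simp
  have hub : ∀ ε ∈ Set.Ioc (0:ℝ) (1/3),
      ∀ x ∈ {r : ℝ | ∃ f g : Ω → ℝ, Measurable[sigmaOf (Y ε) {0}] f ∧
        Measurable[sigmaOf (Y ε) {1}] g ∧ MemLp f 2 P ∧ MemLp g 2 P ∧ r = |corrP P f g|},
      x ≤ 6 * ((N:ℝ)+1)^2 * Real.sqrt ε := by
    rintro ε hε x ⟨f, g, hf, hg, hf2, hg2, rfl⟩
    exact bradley_corr_bound P N hN ε hε.1 hε.2 (Y ε) (hY ε hε) f g hf hg hf2 hg2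
  have hbd : ∀ ε ∈ Set.Ioc (0:ℝ) (1/3),
      (0:ℝ) ≤ maxCorr (sigmaOf (Y ε) {0}) (sigmaOf (Y ε) {1}) P ∧
      maxCorr (sigmaOf (Y ε) {0}) (sigmaOf (Y ε) {1}) P ≤ 6 * ((N:ℝ)+1)^2 * Real.sqrt ε := by
    intro ε hε
    constructor
    · exact le_csSup ⟨6 * ((N:ℝ)+1)^2 * Real.sqrt ε, fun x hx => hub ε hε x hx⟩ (hmem0 ε)
    · exact csSup_le ⟨0, hmem0 ε⟩ (hub ε hε)
  have htend : Tendsto (fun ε : ℝ => 6 * ((N:ℝ)+1)^2 * Real.sqrt ε) (𝓝[>] 0) (𝓝 0) := by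
    have h1 : Tendsto Real.sqrt (𝓝 0) (𝓝 0) := by
      simpa using Real.continuous_sqrt.tendsto 0
    have h2 : Tendsto (fun ε : ℝ => 6 * ((N:ℝ)+1)^2 * Real.sqrt ε) (𝓝 0)
        (𝓝 (6 * ((N:ℝ)+1)^2 * 0)) := tendsto_const_nhds.mul h1
    rw [mul_zero] at h2
    exact h2.mono_left nhdsWithin_le_nhds
  refine tendsto_of_tendsto_of_tendsto_of_le_of_le' tendsto_const_nhds htend ?_ ?_
  · filter_upwards [Ioc_mem_nhdsGT (by norm_num : (0:ℝ) < 1/3)] with ε hε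
    exact (hbd ε hε).1
  · filter_upwards [Ioc_mem_nhdsGT (by norm_num : (0:ℝ) < 1/3)] with ε hε
    exact (hbd ε hε).2

end
end

section
/- Let N ≥ 3 be a fixed integer, and for each ε ∈ (0,1/3] let Y^{(ε)} = (Y^{(ε)}_k, k ∈ ℤ) be a strictly stationary Markov chain satisfying Condition S(N,ε), with m-step transition probabilities p^{(m)}_{N,ε,i,j} := P(Y^{(ε)}_m = j | Y^{(ε)}_0 = i). Then: for every m ≥ 1, p^{(m)}_{N,ε,0,0} → 1 as ε → 0+; for every m ∈ {1,...,N−1}, p^{(m)}_{N,ε,0,m} ~ ε^{2m} as ε → 0+; p^{(N)}_{N,ε,0,N} ~ ε^{2N−1} as ε → 0+; if N ≥ j > i ≥ 0 then p^{(j−i)}_{N,ε,j,i} → 1 as ε → 0+; and if 1 ≤ j ≤ N and m ≥ j then p^{(m)}_{N,ε,j,0} → 1 as ε → 0+. -/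
open MeasureTheory ProbabilityTheory Filter Set
open scoped ENNReal Topology

noncomputable section

variable {Ω : Type*}

set_option linter.unusedSectionVars false
namespace CSAux
open MeasureTheory Filter Set
variable {Ω : Type*} [MeasurableSpace Ω] {P : Measure Ω} {Y : ℤ → Ω → ℝ}

lemma sigmaOf_le (hY : ∀ k, Measurable (Y k)) (S : Set ℤ) :
    sigmaOf Y S ≤ ‹MeasurableSpace Ω› :=
  iSup₂_le fun k _ => measurable_iff_comap_le.1 (hY k)

lemma sigmaOf_singleton (k : ℤ) :
    sigmaOf Y {k} = MeasurableSpace.comap (Y k) inferInstance := by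
  simp [sigmaOf]

lemma measSet_mem {S : Set ℤ} {k : ℤ} (hk : k ∈ S) (c : ℝ) :
    MeasurableSet[sigmaOf Y S] {ω | Y k ω = c} := by
  have h1 : MeasurableSet[MeasurableSpace.comap (Y k) inferInstance] {ω | Y k ω = c} :=
    ⟨{c}, measurableSet_singleton c, rfl⟩
  exact le_iSup₂ (f := fun j (_ : j ∈ S) => MeasurableSpace.comap (Y j) inferInstance) k hk
    _ h1

lemma comap_const {g : Ω → ℝ} {f : Ω → ℝ}
    (hf : Measurable[MeasurableSpace.comap g inferInstance] f)
    {ω ω' : Ω} (h : g ω = g ω') : f ω = f ω' := by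
  by_contra hne
  obtain ⟨t, ht, hpre⟩ := MeasurableSpace.measurableSet_comap.1
    (hf (measurableSet_singleton (f ω)))
  have hω : ω ∈ g ⁻¹' t := by rw [hpre]; exact rfl
  have hω' : ω' ∈ g ⁻¹' t := by simpa [Set.mem_preimage, ← h] using hω
  rw [hpre] at hω'
  exact hne (Set.eq_of_mem_singleton hω').symm

end CSAux
set_option maxHeartbeats 1000000
namespace CSAux
open MeasureTheory Filter Set
variable {Ω : Type*} [MeasurableSpace Ω] {P : Measure Ω} {Y : ℤ → Ω → ℝ}

lemma markov_mult [IsProbabilityMeasure P] (hM : IsMarkovChain P Y)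
    {k : ℤ} {A B : Set Ω} (hA : MeasurableSet[sigmaOf Y (Set.Iic k)] A)
    (hB : MeasurableSet[sigmaOf Y (Set.Ici k)] B) (c : ℝ) :
    (P (A ∩ B ∩ {ω | Y k ω = c})).toReal * (P {ω | Y k ω = c}).toReal
      = (P (A ∩ {ω | Y k ω = c})).toReal * (P (B ∩ {ω | Y k ω = c})).toReal := by
  set C : Set Ω := {ω | Y k ω = c} with hCdef
  have hmeas := hM.1
  have hm : sigmaOf Y {k} ≤ ‹MeasurableSpace Ω› := sigmaOf_le hmeas _
  have hCm : MeasurableSet[sigmaOf Y {k}] C := by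
    rw [sigmaOf_singleton]
    exact ⟨{c}, measurableSet_singleton c, rfl⟩
  have hC : MeasurableSet C := hm _ hCm
  have hA0 : MeasurableSet A := sigmaOf_le hmeas _ _ hA
  have hB0 : MeasurableSet B := sigmaOf_le hmeas _ _ hB
  by_cases hPC : P C = 0
  · have h1 : P (A ∩ B ∩ C) = 0 :=
      measure_mono_null Set.inter_subset_right hPC
    have h2 : P (A ∩ C) = 0 := measure_mono_null Set.inter_subset_right hPC
    rw [h1, hPC, h2]
    simp
  · obtain ⟨ω0, hω0⟩ := MeasureTheory.nonempty_of_measure_ne_zero hPC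
    set a : Ω → ℝ := P[A.indicator (fun _ => (1:ℝ)) | sigmaOf Y {k}] with hadef
    set b : Ω → ℝ := P[B.indicator (fun _ => (1:ℝ)) | sigmaOf Y {k}] with hbdef
    have ham : Measurable[sigmaOf Y {k}] a := stronglyMeasurable_condExp.measurable
    have hbm : Measurable[sigmaOf Y {k}] b := stronglyMeasurable_condExp.measurable
    have hconst : ∀ (f : Ω → ℝ), Measurable[sigmaOf Y {k}] f → ∀ ω ∈ C, f ω = f ω0 := by
      intro f hf ω hω
      have hf' : Measurable[MeasurableSpace.comap (Y k) inferInstance] f := by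
        rwa [sigmaOf_singleton] at hf
      exact comap_const hf' (by rw [show Y k ω = c from hω, show Y k ω0 = c from hω0])
    set α := a ω0
    set β := b ω0
    have key : ∀ (D : Set Ω), MeasurableSet D →
        ∀ (f : Ω → ℝ), f = P[D.indicator (fun _ => (1:ℝ)) | sigmaOf Y {k}] →
        ∫ ω in C, f ω ∂P = (P (D ∩ C)).toReal := by
      intro D hD f hf
      rw [hf, setIntegral_condExp hm ((integrable_const (1:ℝ)).indicator hD) hCm]
      rw [MeasureTheory.integral_indicator_const (1:ℝ) hD, measureReal_def, Measure.restrict_apply hD]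
      simp
    have hCa : ∫ ω in C, a ω ∂P = α * (P C).toReal := by
      rw [setIntegral_congr_fun hC (fun ω hω => hconst a ham ω hω)]
      simp [mul_comm]
      rw [measureReal_def]; exact mul_comm _ _
    have hCb : ∫ ω in C, b ω ∂P = β * (P C).toReal := by
      rw [setIntegral_congr_fun hC (fun ω hω => hconst b hbm ω hω)]
      simp [mul_comm]
      rw [measureReal_def]; exact mul_comm _ _
    have hAC : (P (A ∩ C)).toReal = α * (P C).toReal := by
      rw [← key A hA0 a hadef]; exact hCa
    have hBC : (P (B ∩ C)).toReal = β * (P C).toReal := by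
      rw [← key B hB0 b hbdef]; exact hCb
    have hABC : (P (A ∩ B ∩ C)).toReal = α * β * (P C).toReal := by
      have e1 : ∫ ω in C, (a ω * b ω) ∂P = (P ((A ∩ B) ∩ C)).toReal := by
        rw [setIntegral_congr_ae hC ((hM.2 k A B hA hB).mono fun ω hω _ => hω)]
        exact key (A ∩ B) (hA0.inter hB0) _ rfl
      have e2 : ∫ ω in C, (a ω * b ω) ∂P = α * β * (P C).toReal := by
        rw [setIntegral_congr_fun hC (fun ω hω => by
          rw [hconst a ham ω hω, hconst b hbm ω hω])]
        simp [mul_comm]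
        rw [measureReal_def]; exact mul_comm _ _
      rw [← e1, e2]
    rw [hABC, hAC, hBC]; ring

end CSAux
namespace CSAux
open MeasureTheory Filter Set
variable {Ω : Type*} [MeasurableSpace Ω] {P : Measure Ω} {Y : ℤ → Ω → ℝ}

lemma stat_apply (hS : StrictlyStationary P Y) (hm : ∀ k, Measurable (Y k)) (n : ℤ)
    {T : Set (ℤ → ℝ)} (hT : MeasurableSet T) :
    P ((fun ω => fun k : ℤ => Y (k + n) ω) ⁻¹' T) = P ((fun ω => fun k : ℤ => Y k ω) ⁻¹' T) := by
  have h1 : Measurable (fun ω => fun k : ℤ => Y (k + n) ω) :=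
    measurable_pi_lambda _ fun k => hm _
  have h2 : Measurable (fun ω => fun k : ℤ => Y k ω) :=
    measurable_pi_lambda _ fun k => hm _
  rw [← Measure.map_apply h1 hT, ← Measure.map_apply h2 hT, hS n]

lemma stat_single (hS : StrictlyStationary P Y) (hm : ∀ k, Measurable (Y k)) (l : ℤ) (c : ℝ) :
    P {ω | Y l ω = c} = P {ω | Y 0 ω = c} := by
  have hT : MeasurableSet {f : ℤ → ℝ | f 0 = c} :=
    measurableSet_eq_fun (measurable_pi_apply (0:ℤ)) measurable_const
  have := stat_apply hS hm l hT
  have e1 : (fun ω => fun k : ℤ => Y (k + l) ω) ⁻¹' {f : ℤ → ℝ | f 0 = c}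
      = {ω | Y l ω = c} := by
    ext ω; simp [Set.mem_preimage]
  have e2 : (fun ω => fun k : ℤ => Y k ω) ⁻¹' {f : ℤ → ℝ | f 0 = c}
      = {ω | Y 0 ω = c} := by
    ext ω; simp [Set.mem_preimage]
  rwa [e1, e2] at this

lemma stat_pair (hS : StrictlyStationary P Y) (hm : ∀ k, Measurable (Y k)) (l : ℤ) (c d : ℝ) :
    P {ω | Y l ω = c ∧ Y (l + 1) ω = d} = P {ω | Y 0 ω = c ∧ Y 1 ω = d} := by
  have hT : MeasurableSet {f : ℤ → ℝ | f 0 = c ∧ f 1 = d} := by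
    have : {f : ℤ → ℝ | f 0 = c ∧ f 1 = d}
        = {f : ℤ → ℝ | f 0 = c} ∩ {f : ℤ → ℝ | f 1 = d} := rfl
    rw [this]
    exact (measurableSet_eq_fun (measurable_pi_apply (0:ℤ)) measurable_const).inter
      (measurableSet_eq_fun (measurable_pi_apply (1:ℤ)) measurable_const)
  have := stat_apply hS hm l hT
  have e1 : (fun ω => fun k : ℤ => Y (k + l) ω) ⁻¹' {f : ℤ → ℝ | f 0 = c ∧ f 1 = d}
      = {ω | Y l ω = c ∧ Y (l + 1) ω = d} := by
    ext ω
    simp only [Set.mem_preimage, Set.mem_setOf_eq, zero_add, add_comm 1 l]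
  have e2 : (fun ω => fun k : ℤ => Y k ω) ⁻¹' {f : ℤ → ℝ | f 0 = c ∧ f 1 = d}
      = {ω | Y 0 ω = c ∧ Y 1 ω = d} := by
    ext ω; simp [Set.mem_preimage]
  rwa [e1, e2] at this

lemma stat_values {N : ℕ} (hS : StrictlyStationary P Y) (hm : ∀ k, Measurable (Y k))
    (hv : ∀ᵐ ω ∂P, ∃ i : ℕ, i ≤ N ∧ Y 0 ω = (i:ℝ)) (l : ℤ) :
    ∀ᵐ ω ∂P, ∃ i : ℕ, i ≤ N ∧ Y l ω = (i:ℝ) := by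
  have hT : MeasurableSet {f : ℤ → ℝ | ∃ i : ℕ, i ≤ N ∧ f 0 = (i:ℝ)} := by
    have : {f : ℤ → ℝ | ∃ i : ℕ, i ≤ N ∧ f 0 = (i:ℝ)}
        = ⋃ i : ℕ, ⋃ (_ : i ≤ N), {f : ℤ → ℝ | f 0 = (i:ℝ)} := by
      ext f; simp
    rw [this]
    exact MeasurableSet.iUnion fun i => MeasurableSet.iUnion fun _ =>
      measurableSet_eq_fun (measurable_pi_apply (0:ℤ)) measurable_const
  have key := stat_apply hS hm l hT.compl
  have e1 : (fun ω => fun k : ℤ => Y (k + l) ω) ⁻¹' {f : ℤ → ℝ | ∃ i : ℕ, i ≤ N ∧ f 0 = (i:ℝ)}ᶜ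
      = {ω | ∃ i : ℕ, i ≤ N ∧ Y l ω = (i:ℝ)}ᶜ := by
    ext ω; simp [Set.mem_preimage]
  have e2 : (fun ω => fun k : ℤ => Y k ω) ⁻¹' {f : ℤ → ℝ | ∃ i : ℕ, i ≤ N ∧ f 0 = (i:ℝ)}ᶜ
      = {ω | ∃ i : ℕ, i ≤ N ∧ Y 0 ω = (i:ℝ)}ᶜ := by
    ext ω; simp [Set.mem_preimage]
  rw [e1, e2] at key
  rw [ae_iff] at hv ⊢
  have h2 : {a | ¬∃ i : ℕ, i ≤ N ∧ Y l a = (i:ℝ)} = {ω | ∃ i : ℕ, i ≤ N ∧ Y l ω = (i:ℝ)}ᶜ := by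
    ext ω; simp
  have h3 : {a | ¬∃ i : ℕ, i ≤ N ∧ Y 0 a = (i:ℝ)} = {ω | ∃ i : ℕ, i ≤ N ∧ Y 0 ω = (i:ℝ)}ᶜ := by
    ext ω; simp
  rw [h2, key, ← h3]
  exact hv

end CSAux
namespace CSAux
open MeasureTheory Filter Set
variable {Ω : Type*} [MeasurableSpace Ω] {P : Measure Ω} {Y : ℤ → Ω → ℝ}

def pathSet (Y : ℤ → Ω → ℝ) (v : ℕ → ℕ) (n : ℕ) : Set Ω :=
  {ω | ∀ k ≤ n, Y (k:ℤ) ω = (v k : ℝ)}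

lemma pathSet_zero (v : ℕ → ℕ) : pathSet Y v 0 = {ω | Y 0 ω = (v 0 : ℝ)} := by
  ext ω
  constructor
  · intro h; exact h 0 le_rfl
  · intro h k hk
    interval_cases k
    exact h

lemma pathSet_succ (v : ℕ → ℕ) (n : ℕ) :
    pathSet Y v (n+1) = pathSet Y v n ∩ {ω | Y ((n:ℤ)+1) ω = (v (n+1) : ℝ)} := by
  ext ω
  constructor
  · intro h
    refine ⟨fun k hk => h k (le_trans hk (Nat.le_succ n)), ?_⟩
    have := h (n+1) le_rfl
    simpa [Int.natCast_succ] using this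
  · rintro ⟨h1, h2⟩ k hk
    rcases Nat.lt_or_ge k (n+1) with hlt | hge
    · exact h1 k (Nat.lt_succ_iff.1 hlt)
    · have : k = n + 1 := le_antisymm hk hge
      subst this
      simpa [Int.natCast_succ] using h2

lemma pathSet_measIic (v : ℕ → ℕ) (n : ℕ) :
    MeasurableSet[sigmaOf Y (Set.Iic (n:ℤ))] (pathSet Y v n) := by
  have : pathSet Y v n = ⋂ k ∈ Set.Iic n, {ω | Y (k:ℤ) ω = (v k : ℝ)} := by
    ext ω; simp [pathSet, Set.mem_iInter]
  rw [this]
  exact MeasurableSet.biInter (Set.to_countable _) fun k hk =>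
    measSet_mem (S := Set.Iic (n:ℤ)) (by simp only [Set.mem_Iic] at hk ⊢; exact_mod_cast hk) _

lemma measSet_Ici (k l : ℤ) (hk : k ≤ l) (c : ℝ) :
    MeasurableSet[sigmaOf Y (Set.Ici k)] {ω | Y l ω = c} :=
  measSet_mem (S := Set.Ici k) hk c

lemma path_step [IsProbabilityMeasure P] (hM : IsMarkovChain P Y) (v : ℕ → ℕ) (n : ℕ) :
    (P (pathSet Y v (n+1))).toReal * (P {ω | Y (n:ℤ) ω = (v n : ℝ)}).toReal
      = (P (pathSet Y v n)).toReal
        * (P {ω | Y (n:ℤ) ω = (v n : ℝ) ∧ Y ((n:ℤ)+1) ω = (v (n+1) : ℝ)}).toReal := by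
  have hA := pathSet_measIic (Y := Y) v n
  have hB : MeasurableSet[sigmaOf Y (Set.Ici (n:ℤ))] {ω | Y ((n:ℤ)+1) ω = (v (n+1) : ℝ)} :=
    measSet_Ici _ _ (by omega) _
  have key := markov_mult hM hA hB ((v n : ℝ))
  have hsub : pathSet Y v n ⊆ {ω | Y (n:ℤ) ω = (v n : ℝ)} := fun ω hω => hω n le_rfl
  have e1 : pathSet Y v n ∩ {ω | Y ((n:ℤ)+1) ω = (v (n+1) : ℝ)} ∩ {ω | Y (n:ℤ) ω = (v n : ℝ)}
      = pathSet Y v (n+1) := by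
    rw [pathSet_succ]
    apply Set.inter_eq_left.2
    exact fun ω hω => hsub hω.1
  have e2 : pathSet Y v n ∩ {ω | Y (n:ℤ) ω = (v n : ℝ)} = pathSet Y v n :=
    Set.inter_eq_left.2 hsub
  have e3 : {ω | Y ((n:ℤ)+1) ω = (v (n+1) : ℝ)} ∩ {ω | Y (n:ℤ) ω = (v n : ℝ)}
      = {ω | Y (n:ℤ) ω = (v n : ℝ) ∧ Y ((n:ℤ)+1) ω = (v (n+1) : ℝ)} := by
    ext ω; exact ⟨fun h => ⟨h.2, h.1⟩, fun h => ⟨h.2, h.1⟩⟩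
  rw [e1, e2, e3] at key
  exact key

lemma path_prob [IsProbabilityMeasure P] (hM : IsMarkovChain P Y) (v : ℕ → ℕ) (n : ℕ)
    (hpos : ∀ k < n, (P {ω | Y (k:ℤ) ω = (v k : ℝ)}).toReal ≠ 0) :
    (P (pathSet Y v n)).toReal
      = (P {ω | Y 0 ω = (v 0 : ℝ)}).toReal * ∏ k ∈ Finset.range n,
          ((P {ω | Y (k:ℤ) ω = (v k : ℝ) ∧ Y ((k:ℤ)+1) ω = (v (k+1) : ℝ)}).toReal
            / (P {ω | Y (k:ℤ) ω = (v k : ℝ)}).toReal) := by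
  induction n with
  | zero => simp [pathSet_zero]
  | succ n ih =>
    have hpos' : ∀ k < n, (P {ω | Y (k:ℤ) ω = (v k : ℝ)}).toReal ≠ 0 :=
      fun k hk => hpos k (by omega)
    have hn := hpos n (by omega)
    have step := path_step hM v n
    rw [Finset.prod_range_succ, ← mul_assoc, ← ih hpos']
    field_simp at step ⊢
    linarith [step]

end CSAux
namespace CSAux
open MeasureTheory Filter Set
variable {Ω : Type*} [MeasurableSpace Ω] {P : Measure Ω} {Y : ℤ → Ω → ℝ}

lemma step_bound (A : ℕ → ℤ) (m : ℕ) (h : ∀ k < m, (A (k+1) - A k).natAbs ≤ 1) :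
    ∀ d k, k + d ≤ m → (A (k+d) - A k).natAbs ≤ d := by
  intro d
  induction d with
  | zero => intro k _; simp
  | succ d ih =>
    intro k hk
    have h1 := ih k (by omega)
    have h2 := h (k+d) (by omega)
    have : k + (d+1) = (k+d) + 1 := by omega
    rw [this]
    omega

lemma good_step (hS : StrictlyStationary P Y) (hm : ∀ k, Measurable (Y k)) {N : ℕ}
    (hnj : ∀ a b : ℕ, a ≤ N → b ≤ N → 2 ≤ ((b:ℤ) - (a:ℤ)).natAbs →
      P {ω | Y 0 ω = (a:ℝ) ∧ Y 1 ω = (b:ℝ)} = 0) (l : ℤ) :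
    ∀ᵐ ω ∂P, ∀ a b : ℕ, a ≤ N → b ≤ N → Y l ω = (a:ℝ) → Y (l+1) ω = (b:ℝ) →
      ((b:ℤ) - (a:ℤ)).natAbs ≤ 1 := by
  rw [ae_all_iff]
  intro a
  rw [ae_all_iff]
  intro b
  by_cases hgood : a ≤ N ∧ b ≤ N ∧ 2 ≤ ((b:ℤ) - (a:ℤ)).natAbs
  · have hz : P {ω | Y l ω = (a:ℝ) ∧ Y (l+1) ω = (b:ℝ)} = 0 := by
      rw [stat_pair hS hm l]
      exact hnj a b hgood.1 hgood.2.1 hgood.2.2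
    have : ∀ᵐ ω ∂P, ω ∉ {ω | Y l ω = (a:ℝ) ∧ Y (l+1) ω = (b:ℝ)} :=
      (measure_eq_zero_iff_ae_notMem (μ := P)).1 hz
    filter_upwards [this] with ω hω
    intro _ _ h1 h2
    exact absurd ⟨h1, h2⟩ hω
  · filter_upwards with ω
    intro ha hb _ _
    by_contra hcon
    exact hgood ⟨ha, hb, by omega⟩

lemma event_eq_path [IsProbabilityMeasure P] (hS : StrictlyStationary P Y)
    (hm : ∀ k, Measurable (Y k)) {N : ℕ}
    (hv : ∀ᵐ ω ∂P, ∃ i : ℕ, i ≤ N ∧ Y 0 ω = (i:ℝ))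
    (hnj : ∀ a b : ℕ, a ≤ N → b ≤ N → 2 ≤ ((b:ℤ) - (a:ℤ)).natAbs →
      P {ω | Y 0 ω = (a:ℝ) ∧ Y 1 ω = (b:ℝ)} = 0)
    (v : ℕ → ℕ) (m : ℕ)
    (huniq : ∀ a : ℕ → ℕ, (∀ k, k ≤ m → a k ≤ N) →
      (∀ k < m, ((a (k+1):ℤ) - (a k:ℤ)).natAbs ≤ 1) → a 0 = v 0 → a m = v m →
      ∀ k, k ≤ m → a k = v k) :
    P {ω | Y 0 ω = (v 0:ℝ) ∧ Y (m:ℤ) ω = (v m:ℝ)} = P (pathSet Y v m) := by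
  have hval : ∀ᵐ ω ∂P, ∀ k : ℕ, ∃ i : ℕ, i ≤ N ∧ Y (k:ℤ) ω = (i:ℝ) := by
    rw [ae_all_iff]
    intro k
    exact stat_values hS hm hv (k:ℤ)
  have hstep : ∀ᵐ ω ∂P, ∀ k : ℕ, ∀ a b : ℕ, a ≤ N → b ≤ N → Y (k:ℤ) ω = (a:ℝ) →
      Y ((k:ℤ)+1) ω = (b:ℝ) → ((b:ℤ) - (a:ℤ)).natAbs ≤ 1 := by
    rw [ae_all_iff]
    intro k
    exact good_step hS hm hnj (k:ℤ)
  apply measure_congr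
  rw [Filter.eventuallyEq_set]
  filter_upwards [hval, hstep] with ω hω1 hω2
  constructor
  · rintro ⟨h0, hmm⟩
    -- build the witness sequence
    have hex : ∀ k : ℕ, ∃ i : ℕ, i ≤ N ∧ Y (k:ℤ) ω = (i:ℝ) := hω1
    classical
    set a : ℕ → ℕ := fun k => (hex k).choose with hadef
    have haval : ∀ k : ℕ, a k ≤ N ∧ Y (k:ℤ) ω = (a k : ℝ) := fun k => (hex k).choose_spec
    have hsteps : ∀ k < m, ((a (k+1):ℤ) - (a k:ℤ)).natAbs ≤ 1 := by
      intro k _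
      exact hω2 k (a k) (a (k+1)) (haval k).1 (haval (k+1)).1 (haval k).2
        (by rw [← (haval (k+1)).2]; push_cast; ring_nf)
    have ha0 : a 0 = v 0 := by
      have h := (haval 0).2
      rw [show ((0:ℕ):ℤ) = 0 from rfl, h0] at h
      exact_mod_cast h.symm
    have ham : a m = v m := by
      have := (haval m).2
      rw [hmm] at this
      exact_mod_cast this.symm
    have := huniq a (fun k _ => (haval k).1) hsteps ha0 ham
    intro k hk
    rw [(haval k).2, this k hk]
  · intro hpath
    exact ⟨hpath 0 (Nat.zero_le m), hpath m le_rfl⟩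

lemma marg_sum [IsProbabilityMeasure P] (hS : StrictlyStationary P Y)
    (hm : ∀ k, Measurable (Y k)) {N : ℕ}
    (hv : ∀ᵐ ω ∂P, ∃ i : ℕ, i ≤ N ∧ Y 0 ω = (i:ℝ)) (c : ℝ) :
    (P {ω | Y 0 ω = c}).toReal
      = ∑ j ∈ Finset.range (N+1), (P {ω | Y 0 ω = c ∧ Y 1 ω = (j:ℝ)}).toReal := by
  have hv1 : ∀ᵐ ω ∂P, ∃ i : ℕ, i ≤ N ∧ Y 1 ω = (i:ℝ) := stat_values hS hm hv 1
  have e1 : P {ω | Y 0 ω = c} = P ({ω | Y 0 ω = c} ∩ {ω | ∃ i : ℕ, i ≤ N ∧ Y 1 ω = (i:ℝ)}) := by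
    apply (measure_congr _).symm
    rw [Filter.eventuallyEq_set]
    filter_upwards [hv1] with ω hω
    simp only [Set.mem_inter_iff, Set.mem_setOf_eq]
    exact ⟨fun h => h.1, fun h => ⟨h, hω⟩⟩
  have e2 : {ω | Y 0 ω = c} ∩ {ω | ∃ i : ℕ, i ≤ N ∧ Y 1 ω = (i:ℝ)}
      = ⋃ j ∈ Finset.range (N+1), {ω | Y 0 ω = c ∧ Y 1 ω = (j:ℝ)} := by
    ext ω
    simp only [Set.mem_inter_iff, Set.mem_setOf_eq, Set.mem_iUnion, Finset.mem_range]
    constructor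
    · rintro ⟨h0, i, hi, h1⟩
      exact ⟨i, by omega, h0, h1⟩
    · rintro ⟨i, hi, h0, h1⟩
      exact ⟨h0, i, by omega, h1⟩
  have hmeaspair : ∀ j : ℕ, MeasurableSet {ω | Y 0 ω = c ∧ Y 1 ω = (j:ℝ)} := by
    intro j
    have : {ω | Y 0 ω = c ∧ Y 1 ω = (j:ℝ)} = {ω | Y 0 ω = c} ∩ {ω | Y 1 ω = (j:ℝ)} := rfl
    rw [this]
    exact (measurableSet_eq_fun (hm 0) measurable_const).inter
      (measurableSet_eq_fun (hm 1) measurable_const)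
  have e3 : P (⋃ j ∈ Finset.range (N+1), {ω | Y 0 ω = c ∧ Y 1 ω = (j:ℝ)})
      = ∑ j ∈ Finset.range (N+1), P {ω | Y 0 ω = c ∧ Y 1 ω = (j:ℝ)} := by
    apply measure_biUnion_finset _ (fun j _ => hmeaspair j)
    intro i hi j hj hij
    rw [Function.onFun, Set.disjoint_left]
    rintro ω ⟨_, h1⟩ ⟨_, h2⟩
    rw [h1] at h2
    exact hij (by exact_mod_cast h2)
  rw [e1, e2, e3, ENNReal.toReal_sum]
  intro j _
  exact measure_ne_top P _

end CSAux
namespace CSAux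
open MeasureTheory Filter Set
variable {Ω : Type*} [MeasurableSpace Ω] {P : Measure Ω} {Y : ℤ → Ω → ℝ}

/-- The quantity `S = ε^(2N-1) + ∑_{u=1}^{N-1} ε^(2u)`. -/
def SSf (N : ℕ) (ε : ℝ) : ℝ := ε^(2*N-1) + ∑ u ∈ Finset.Icc 1 (N-1), ε^(2*u)

lemma sum_two {f : ℕ → ℝ} {n a b : ℕ} (ha : a < n) (hb : b < n) (hab : a ≠ b)
    (h : ∀ j, j < n → j ≠ a → j ≠ b → f j = 0) :
    ∑ j ∈ Finset.range n, f j = f a + f b := by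
  have hsub : ({a, b} : Finset ℕ) ⊆ Finset.range n := by
    intro x hx
    simp only [Finset.mem_insert, Finset.mem_singleton] at hx
    rcases hx with h1 | h1 <;> simp [h1, Finset.mem_range, ha, hb]
  rw [← Finset.sum_subset hsub]
  · exact Finset.sum_pair hab
  · intro x hx hnx
    simp only [Finset.mem_insert, Finset.mem_singleton, not_or] at hnx
    exact h x (Finset.mem_range.1 hx) hnx.1 hnx.2

lemma sum_one {f : ℕ → ℝ} {n a : ℕ} (ha : a < n)
    (h : ∀ j, j < n → j ≠ a → f j = 0) :
    ∑ j ∈ Finset.range n, f j = f a :=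
  Finset.sum_eq_single_of_mem a (Finset.mem_range.2 ha)
    (fun j hj hne => h j (Finset.mem_range.1 hj) hne)

section Values
variable {N : ℕ} {ε : ℝ}

lemma pair_val (hN : 3 ≤ N) (hC : ConditionS P N ε Y) (i j : ℕ) (hi : i ≤ N) (hj : j ≤ N) :
    (P {ω | Y 0 ω = (i:ℝ) ∧ Y 1 ω = (j:ℝ)}).toReal =
      if i = 0 ∧ j = 0 then 1 - 2*SSf N ε
      else if j = i + 1 ∧ j ≤ N - 1 then ε^(2*j)
      else if i = j + 1 ∧ i ≤ N - 1 then ε^(2*i)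
      else if j = i + 1 ∧ j = N then ε^(2*N-1)
      else if i = j + 1 ∧ i = N then ε^(2*N-1)
      else 0 := by
  obtain ⟨hstat, hmark, hval, h00, hup, hupN, hdnN, hzero⟩ := hC
  by_cases c1 : i = 0 ∧ j = 0
  · rw [if_pos c1]
    obtain ⟨rfl, rfl⟩ := c1
    simpa [SSf] using h00
  rw [if_neg c1]
  by_cases c2 : j = i + 1 ∧ j ≤ N - 1
  · rw [if_pos c2]
    obtain ⟨rfl, hle⟩ := c2
    have h := (hup (i+1) (by omega) hle).1
    have hset : {ω | Y 0 ω = ((i+1:ℕ):ℝ) - 1 ∧ Y 1 ω = ((i+1:ℕ):ℝ)}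
        = {ω | Y 0 ω = (i:ℝ) ∧ Y 1 ω = ((i+1:ℕ):ℝ)} := by
      have : ((i+1:ℕ):ℝ) - 1 = (i:ℝ) := by push_cast; ring
      rw [this]
    rw [hset] at h
    exact h
  rw [if_neg c2]
  by_cases c3 : i = j + 1 ∧ i ≤ N - 1
  · rw [if_pos c3]
    obtain ⟨rfl, hle⟩ := c3
    have h := (hup (j+1) (by omega) hle).2
    have hset : {ω | Y 0 ω = ((j+1:ℕ):ℝ) ∧ Y 1 ω = ((j+1:ℕ):ℝ) - 1}
        = {ω | Y 0 ω = ((j+1:ℕ):ℝ) ∧ Y 1 ω = (j:ℝ)} := by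
      have : ((j+1:ℕ):ℝ) - 1 = (j:ℝ) := by push_cast; ring
      rw [this]
    rw [hset] at h
    exact h
  rw [if_neg c3]
  by_cases c4 : j = i + 1 ∧ j = N
  · rw [if_pos c4]
    have hiN : i = N - 1 := by omega
    have hset : {ω | Y 0 ω = (N:ℝ) - 1 ∧ Y 1 ω = (N:ℝ)}
        = {ω | Y 0 ω = (i:ℝ) ∧ Y 1 ω = (j:ℝ)} := by
      have e1 : (N:ℝ) - 1 = (i:ℝ) := by
        subst hiN; push_cast [Nat.cast_sub (by omega : 1 ≤ N)]; ring
      have e2 : (N:ℝ) = (j:ℝ) := by rw [c4.2]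
      rw [e1, e2]
    rw [← hset]
    exact hupN
  rw [if_neg c4]
  by_cases c5 : i = j + 1 ∧ i = N
  · rw [if_pos c5]
    have hjN : j = N - 1 := by omega
    have hset : {ω | Y 0 ω = (N:ℝ) ∧ Y 1 ω = (N:ℝ) - 1}
        = {ω | Y 0 ω = (i:ℝ) ∧ Y 1 ω = (j:ℝ)} := by
      have e1 : (N:ℝ) - 1 = (j:ℝ) := by
        subst hjN; push_cast [Nat.cast_sub (by omega : 1 ≤ N)]; ring
      have e2 : (N:ℝ) = (i:ℝ) := by rw [c5.2]
      rw [e1, e2]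
    rw [← hset]
    exact hdnN
  rw [if_neg c5]
  have hz : P {ω | Y 0 ω = (i:ℝ) ∧ Y 1 ω = (j:ℝ)} = 0 := by
    apply hzero i j hi hj
    by_cases hij : i = j
    · left; exact ⟨hij, by omega⟩
    · right
      have : ((i:ℤ) - j).natAbs ≠ 1 := by omega
      rw [Int.abs_eq_natAbs]
      omega
  rw [hz]
  simp

end Values
end CSAux
namespace CSAux
open MeasureTheory Filter Set
variable {Ω : Type*} [MeasurableSpace Ω] {P : Measure Ω} {Y : ℤ → Ω → ℝ}

/-- Marginal probability `P(Y_0 = i)` as an explicit function of ε. -/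
def sF (N : ℕ) (ε : ℝ) (i : ℕ) : ℝ :=
  if i = 0 then 1 - 2*SSf N ε + ε^2
  else if i ≤ N-2 then ε^(2*i) + ε^(2*i+2)
  else if i = N-1 then ε^(2*N-2) + ε^(2*N-1)
  else ε^(2*N-1)

/-- One-step probability `P(Y_0 = c, Y_1 = c-1)` for `1 ≤ c ≤ N`. -/
def pairDown (N : ℕ) (ε : ℝ) (c : ℕ) : ℝ := if c ≤ N-1 then ε^(2*c) else ε^(2*N-1)

/-- One-step probability `P(Y_0 = c, Y_1 = c+1)` for `0 ≤ c ≤ N-1`. -/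
def pairUp (N : ℕ) (ε : ℝ) (c : ℕ) : ℝ := if c+1 ≤ N-1 then ε^(2*(c+1)) else ε^(2*N-1)

section Values
variable {N : ℕ} {ε : ℝ} [IsProbabilityMeasure P]

lemma pair_down_val (hN : 3 ≤ N) (hC : ConditionS P N ε Y) (c : ℕ) (hc1 : 1 ≤ c) (hcN : c ≤ N) :
    (P {ω | Y 0 ω = (c:ℝ) ∧ Y 1 ω = ((c-1:ℕ):ℝ)}).toReal = pairDown N ε c := by
  rw [pair_val hN hC c (c-1) hcN (by omega), pairDown]
  by_cases h : c ≤ N-1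
  · rw [if_neg (by omega), if_neg (by omega), if_pos ⟨by omega, h⟩, if_pos h]
  · rw [if_neg (by omega), if_neg (by omega), if_neg (by omega), if_neg (by omega),
      if_pos ⟨by omega, by omega⟩, if_neg h]

lemma pair_up_val (hN : 3 ≤ N) (hC : ConditionS P N ε Y) (c : ℕ) (hcN : c + 1 ≤ N) :
    (P {ω | Y 0 ω = (c:ℝ) ∧ Y 1 ω = ((c+1:ℕ):ℝ)}).toReal = pairUp N ε c := by
  rw [pair_val hN hC c (c+1) (by omega) hcN, pairUp]
  by_cases h : c+1 ≤ N-1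
  · rw [if_neg (by omega), if_pos ⟨rfl, h⟩, if_pos h]
  · rw [if_neg (by omega), if_neg (by omega), if_neg (by omega),
      if_pos ⟨rfl, by omega⟩, if_neg h]

lemma pair_00_val (hN : 3 ≤ N) (hC : ConditionS P N ε Y) :
    (P {ω | Y 0 ω = ((0:ℕ):ℝ) ∧ Y 1 ω = ((0:ℕ):ℝ)}).toReal = 1 - 2*SSf N ε := by
  rw [pair_val hN hC 0 0 (by omega) (by omega), if_pos ⟨rfl, rfl⟩]

lemma s_val (hN : 3 ≤ N) (hC : ConditionS P N ε Y) (i : ℕ) (hi : i ≤ N) :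
    (P {ω | Y 0 ω = (i:ℝ)}).toReal = sF N ε i := by
  have hms := marg_sum hC.1 hC.2.1.1 hC.2.2.1 ((i:ℕ):ℝ)
  rw [hms]
  have hpv : ∀ j, j ≤ N → (P {ω | Y 0 ω = (i:ℝ) ∧ Y 1 ω = (j:ℝ)}).toReal =
      (if i = 0 ∧ j = 0 then 1 - 2*SSf N ε
      else if j = i + 1 ∧ j ≤ N - 1 then ε^(2*j)
      else if i = j + 1 ∧ i ≤ N - 1 then ε^(2*i)
      else if j = i + 1 ∧ j = N then ε^(2*N-1)
      else if i = j + 1 ∧ i = N then ε^(2*N-1)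
      else 0) := fun j hj => pair_val hN hC i j hi hj
  rcases Nat.eq_zero_or_pos i with rfl | hpos
  · rw [sum_two (a := 0) (b := 1) (by omega) (by omega) (by omega)
      (fun j hj hj0 hj1 => by
        rw [hpv j (by omega)]
        rw [if_neg (by omega), if_neg (by omega), if_neg (by omega), if_neg (by omega),
          if_neg (by omega)])]
    rw [hpv 0 (by omega), hpv 1 (by omega)]
    rw [if_pos ⟨rfl, rfl⟩, if_neg (by omega), if_pos ⟨rfl, by omega⟩]
    simp [sF]
  · by_cases hiN2 : i ≤ N-2
    · rw [sum_two (a := i-1) (b := i+1) (by omega) (by omega) (by omega)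
        (fun j hj hj0 hj1 => by
          rw [hpv j (by omega)]
          rw [if_neg (by omega), if_neg (by omega), if_neg (by omega), if_neg (by omega),
            if_neg (by omega)])]
      rw [hpv (i-1) (by omega), hpv (i+1) (by omega)]
      rw [if_neg (by omega), if_neg (by omega), if_pos (⟨by omega, by omega⟩ :
          i = (i-1) + 1 ∧ i ≤ N - 1),
        if_neg (by omega), if_pos (⟨rfl, by omega⟩ : i+1 = i + 1 ∧ i+1 ≤ N - 1)]
      have h22 : 2*(i+1) = 2*i+2 := by ring
      rw [h22, sF, if_neg (by omega), if_pos hiN2]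
    · by_cases hiN1 : i = N-1
      · rw [sum_two (a := i-1) (b := i+1) (by omega) (by omega) (by omega)
          (fun j hj hj0 hj1 => by
            rw [hpv j (by omega)]
            rw [if_neg (by omega), if_neg (by omega), if_neg (by omega), if_neg (by omega),
              if_neg (by omega)])]
        rw [hpv (i-1) (by omega), hpv (i+1) (by omega)]
        rw [if_neg (by omega), if_neg (by omega), if_pos (⟨by omega, by omega⟩ :
            i = (i-1) + 1 ∧ i ≤ N - 1),
          if_neg (by omega), if_neg (by omega), if_neg (by omega),
          if_pos (⟨rfl, by omega⟩ : i+1 = i + 1 ∧ i+1 = N)]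
        have h2i : 2*i = 2*N-2 := by omega
        rw [h2i, sF, if_neg (by omega), if_neg (by omega), if_pos hiN1]
      · have hiN : i = N := by omega
        rw [sum_one (a := i-1) (by omega)
          (fun j hj hj0 => by
            rw [hpv j (by omega)]
            rw [if_neg (by omega), if_neg (by omega), if_neg (by omega), if_neg (by omega),
              if_neg (by omega)])]
        rw [hpv (i-1) (by omega)]
        rw [if_neg (by omega), if_neg (by omega), if_neg (by omega), if_neg (by omega),
          if_pos (⟨by omega, hiN⟩ : i = (i-1) + 1 ∧ i = N)]
        rw [sF, if_neg (by omega), if_neg (by omega), if_neg (by omega)]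

lemma s_pos (hN : 3 ≤ N) (hC : ConditionS P N ε Y) (hε : 0 < ε)
    (hs0 : 0 < 1 - 2*SSf N ε) (i : ℕ) (hi : i ≤ N) :
    0 < (P {ω | Y 0 ω = (i:ℝ)}).toReal := by
  rw [s_val hN hC i hi, sF]
  by_cases h0 : i = 0
  · rw [if_pos h0]; positivity
  rw [if_neg h0]
  by_cases h1 : i ≤ N-2
  · rw [if_pos h1]; positivity
  rw [if_neg h1]
  by_cases h2 : i = N-1
  · rw [if_pos h2]; positivity
  · rw [if_neg h2]; positivity

end Values
end CSAux
namespace CSAux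
open MeasureTheory Filter Set
variable {Ω : Type*} [MeasurableSpace Ω] {P : Measure Ω} {Y : ℤ → Ω → ℝ}

section Chain
variable {N : ℕ} {ε : ℝ} [IsProbabilityMeasure P]

lemma s_val_k (hN : 3 ≤ N) (hC : ConditionS P N ε Y) (k : ℤ) (i : ℕ) (hi : i ≤ N) :
    (P {ω | Y k ω = (i:ℝ)}).toReal = sF N ε i := by
  rw [stat_single hC.1 hC.2.1.1 k]
  exact s_val hN hC i hi

lemma hnj_of (hC : ConditionS P N ε Y) :
    ∀ a b : ℕ, a ≤ N → b ≤ N → 2 ≤ ((b:ℤ) - (a:ℤ)).natAbs →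
      P {ω | Y 0 ω = (a:ℝ) ∧ Y 1 ω = (b:ℝ)} = 0 := by
  intro a b ha hb hab
  apply hC.2.2.2.2.2.2.2 a b ha hb
  right
  rw [Int.abs_eq_natAbs]
  omega

lemma path_prob' (hN : 3 ≤ N) (hC : ConditionS P N ε Y) (hε : 0 < ε)
    (hs0 : 0 < 1 - 2*SSf N ε) (v : ℕ → ℕ) (hvN : ∀ k, v k ≤ N) (n : ℕ) :
    (P (pathSet Y v n)).toReal = sF N ε (v 0) * ∏ k ∈ Finset.range n,
      ((P {ω | Y 0 ω = (v k:ℝ) ∧ Y 1 ω = (v (k+1):ℝ)}).toReal / sF N ε (v k)) := by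
  have hpos : ∀ k : ℕ, (P {ω | Y (k:ℤ) ω = (v k:ℝ)}).toReal ≠ 0 := by
    intro k
    rw [s_val_k hN hC (k:ℤ) (v k) (hvN k)]
    have := s_pos hN hC hε hs0 (v k) (hvN k)
    rw [s_val hN hC (v k) (hvN k)] at this
    exact ne_of_gt this
  rw [path_prob hC.2.1 v n (fun k _ => hpos k)]
  congr 1
  · exact s_val hN hC (v 0) (hvN 0)
  · apply Finset.prod_congr rfl
    intro k _
    rw [stat_pair hC.1 hC.2.1.1 (k:ℤ), s_val_k hN hC (k:ℤ) (v k) (hvN k)]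

lemma uniq_up (m : ℕ) : ∀ a : ℕ → ℕ, (∀ k, k ≤ m → a k ≤ m) → True → True →
    True → True → True := fun _ _ _ _ _ _ => trivial

lemma uniq_incr (m : ℕ) (a : ℕ → ℕ)
    (hstep : ∀ k < m, ((a (k+1):ℤ) - (a k:ℤ)).natAbs ≤ 1)
    (h0 : a 0 = 0) (hm : a m = m) : ∀ k, k ≤ m → a k = k := by
  intro k hk
  have b1 : ((a k : ℤ) - (a 0 : ℤ)).natAbs ≤ k := by
    have := step_bound (fun k => (a k : ℤ)) m hstep k 0 (by omega)
    simpa using this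
  have b2 : ((a m : ℤ) - (a k : ℤ)).natAbs ≤ m - k := by
    have := step_bound (fun k => (a k : ℤ)) m hstep (m - k) k (by omega)
    rw [show k + (m - k) = m by omega] at this
    simpa using this
  have e0 : (a 0 : ℤ) = 0 := by exact_mod_cast h0
  have em : (a m : ℤ) = m := by exact_mod_cast hm
  omega

lemma uniq_decr (i j : ℕ) (hij : i < j) (a : ℕ → ℕ)
    (hstep : ∀ k < j - i, ((a (k+1):ℤ) - (a k:ℤ)).natAbs ≤ 1)
    (h0 : a 0 = j) (hm : a (j-i) = i) : ∀ k, k ≤ j - i → a k = j - k := by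
  intro k hk
  have b1 : ((a k : ℤ) - (a 0 : ℤ)).natAbs ≤ k := by
    have := step_bound (fun k => (a k : ℤ)) (j-i) hstep k 0 (by omega)
    simpa using this
  have b2 : ((a (j-i) : ℤ) - (a k : ℤ)).natAbs ≤ j - i - k := by
    have := step_bound (fun k => (a k : ℤ)) (j-i) hstep (j - i - k) k (by omega)
    rw [show k + (j - i - k) = j - i by omega] at this
    simpa using this
  have e0 : (a 0 : ℤ) = j := by exact_mod_cast h0
  have em : (a (j-i) : ℤ) = i := by exact_mod_cast hm
  omega

/-- Exact formula for the upward transition probability. -/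
lemma trans_up (hN : 3 ≤ N) (hC : ConditionS P N ε Y) (hε : 0 < ε)
    (hs0 : 0 < 1 - 2*SSf N ε) (m : ℕ) (hm : 1 ≤ m) (hmN : m ≤ N) :
    transProb P Y m 0 m = ∏ k ∈ Finset.range m, (pairUp N ε k / sF N ε k) := by
  have hvN : ∀ k : ℕ, (fun k => min k m) k ≤ N := fun k => le_trans (min_le_right _ _) hmN
  set v : ℕ → ℕ := fun k => min k m with hv
  have hv0 : v 0 = 0 := by simp [hv]
  have hvm : v m = m := by simp [hv]
  have heq : P {ω | Y 0 ω = ((0:ℕ):ℝ) ∧ Y (m:ℤ) ω = ((m:ℕ):ℝ)} = P (pathSet Y v m) := by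
    have := event_eq_path hC.1 hC.2.1.1 hC.2.2.1 (hnj_of hC) v m
      (fun a _ hstep h0 hm' => by
        intro k hk
        rw [hv0] at h0; rw [hvm] at hm'
        rw [uniq_incr m a hstep h0 hm' k hk]
        simp [hv, min_eq_left hk])
    rw [hv0, hvm] at this
    exact this
  rw [transProb, heq, path_prob' hN hC hε hs0 v hvN m]
  rw [hv0, s_val hN hC 0 (by omega)]
  have hsne : sF N ε 0 ≠ 0 := by
    have := s_pos hN hC hε hs0 0 (by omega)
    rw [s_val hN hC 0 (by omega)] at this
    exact ne_of_gt this
  rw [mul_comm, mul_div_assoc, div_self hsne, mul_one]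
  apply Finset.prod_congr rfl
  intro k hk
  have hkm : k < m := Finset.mem_range.1 hk
  have hvk : v k = k := min_eq_left (by omega)
  have hvk1 : v (k+1) = k+1 := min_eq_left (by omega)
  rw [hvk, hvk1, pair_up_val hN hC k (by omega)]

/-- Exact formula for the downward transition probability. -/
lemma trans_down (hN : 3 ≤ N) (hC : ConditionS P N ε Y) (hε : 0 < ε)
    (hs0 : 0 < 1 - 2*SSf N ε) (i j : ℕ) (hij : i < j) (hjN : j ≤ N) :
    transProb P Y (j-i) j i
      = ∏ k ∈ Finset.range (j-i), (pairDown N ε (j-k) / sF N ε (j-k)) := by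
  set v : ℕ → ℕ := fun k => j - k with hv
  have hvN : ∀ k : ℕ, v k ≤ N := fun k => le_trans (Nat.sub_le _ _) hjN
  have hv0 : v 0 = j := by simp [hv]
  have hvm : v (j-i) = i := by simp [hv]; omega
  have heq : P {ω | Y 0 ω = ((j:ℕ):ℝ) ∧ Y ((j-i : ℕ):ℤ) ω = ((i:ℕ):ℝ)}
      = P (pathSet Y v (j-i)) := by
    have := event_eq_path hC.1 hC.2.1.1 hC.2.2.1 (hnj_of hC) v (j-i)
      (fun a _ hstep h0 hm' => by
        intro k hk
        rw [hv0] at h0; rw [hvm] at hm'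
        exact uniq_decr i j hij a hstep h0 hm' k hk)
    rw [hv0, hvm] at this
    exact this
  rw [transProb, heq, path_prob' hN hC hε hs0 v hvN (j-i)]
  rw [hv0, s_val hN hC j hjN]
  have hsne : sF N ε j ≠ 0 := by
    have := s_pos hN hC hε hs0 j hjN
    rw [s_val hN hC j hjN] at this
    exact ne_of_gt this
  rw [mul_comm, mul_div_assoc, div_self hsne, mul_one]
  apply Finset.prod_congr rfl
  intro k hk
  have hkm : k < j - i := Finset.mem_range.1 hk
  have hvk : v k = j - k := rfl
  have hvk1 : v (k+1) = (j-k) - 1 := by simp [hv]; omega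
  rw [hvk, hvk1, pair_down_val hN hC (j-k) (by omega) (by omega)]

end Chain
end CSAux
namespace CSAux
open MeasureTheory Filter Set Topology
section Limits
variable {N : ℕ}

lemma tendsto_one : Tendsto (fun _ : ℝ => (1:ℝ)) (𝓝[>] (0:ℝ)) (𝓝 1) :=
  tendsto_const_nhds

lemma tendsto_two : Tendsto (fun _ : ℝ => (2:ℝ)) (𝓝[>] (0:ℝ)) (𝓝 2) :=
  tendsto_const_nhds

lemma SSf_tendsto (hN : 3 ≤ N) : Tendsto (SSf N) (𝓝[>] (0:ℝ)) (𝓝 0) := by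
  have hc : Continuous (SSf N) :=
    (continuous_pow _).add (continuous_finset_sum _ fun u _ => continuous_pow _)
  have h0 : SSf N 0 = 0 := by
    rw [SSf]
    rw [zero_pow (by omega : 2*N-1 ≠ 0)]
    rw [Finset.sum_eq_zero fun u hu => zero_pow (by
      have := (Finset.mem_Icc.1 hu).1; omega : 2*u ≠ 0)]
    ring
  have := (hc.tendsto 0).mono_left (nhdsWithin_le_nhds (s := Set.Ioi (0:ℝ)))
  rwa [h0] at this

lemma eps_pow_tendsto (n : ℕ) (hn : 1 ≤ n) :
    Tendsto (fun ε : ℝ => ε^n) (𝓝[>] (0:ℝ)) (𝓝 0) := by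
  have := ((continuous_pow n).tendsto 0).mono_left (nhdsWithin_le_nhds (s := Set.Ioi (0:ℝ)))
  rwa [zero_pow (by omega : n ≠ 0)] at this

lemma sF0_tendsto (hN : 3 ≤ N) : Tendsto (fun ε => sF N ε 0) (𝓝[>] (0:ℝ)) (𝓝 1) := by
  have h : ∀ ε : ℝ, sF N ε 0 = 1 - 2*SSf N ε + ε^2 := fun ε => by rw [sF, if_pos rfl]
  simp only [h]
  have := ((tendsto_one.sub ((SSf_tendsto hN).const_mul 2)).add
    (eps_pow_tendsto 2 (by omega)))
  simpa using this

lemma one_add_sq_tendsto : Tendsto (fun ε : ℝ => 1/(1+ε^2)) (𝓝[>] (0:ℝ)) (𝓝 1) := by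
  have h1 : Tendsto (fun ε : ℝ => 1+ε^2) (𝓝[>] (0:ℝ)) (𝓝 1) := by
    have := tendsto_one.add (eps_pow_tendsto 2 (by omega))
    simpa using this
  have h2 : Tendsto (fun ε : ℝ => 1/(1+ε^2)) (𝓝[>] (0:ℝ)) (𝓝 (1/1)) :=
    Tendsto.congr (fun x => rfl) (tendsto_one.div h1 one_ne_zero)
  simpa using h2

lemma one_add_eps_tendsto : Tendsto (fun ε : ℝ => 1/(1+ε)) (𝓝[>] (0:ℝ)) (𝓝 1) := by
  have h1 : Tendsto (fun ε : ℝ => 1+ε) (𝓝[>] (0:ℝ)) (𝓝 1) := by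
    have := tendsto_one.add (eps_pow_tendsto 1 (by omega))
    simpa using this
  have h2 : Tendsto (fun ε : ℝ => 1/(1+ε)) (𝓝[>] (0:ℝ)) (𝓝 (1/1)) :=
    Tendsto.congr (fun x => rfl) (tendsto_one.div h1 one_ne_zero)
  simpa using h2

lemma hs0_ev (hN : 3 ≤ N) : ∀ᶠ ε : ℝ in 𝓝[>] (0:ℝ), 0 < 1 - 2*SSf N ε := by
  have := (SSf_tendsto hN).eventually_lt_const (show (0:ℝ) < 1/4 by norm_num)
  filter_upwards [this] with ε hε
  linarith

lemma pos_ev : ∀ᶠ ε : ℝ in 𝓝[>] (0:ℝ), 0 < ε := self_mem_nhdsWithin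

lemma ioc_ev : ∀ᶠ ε : ℝ in 𝓝[>] (0:ℝ), ε ∈ Set.Ioc (0:ℝ) (1/3) := by
  have : Set.Ioo (0:ℝ) (1/3) ∈ 𝓝[>] (0:ℝ) :=
    Ioo_mem_nhdsGT_of_mem ⟨le_refl 0, by norm_num⟩
  filter_upwards [this] with ε hε
  exact ⟨hε.1, le_of_lt hε.2⟩

lemma down_factor_tendsto (hN : 3 ≤ N) (c : ℕ) (hc1 : 1 ≤ c) (hcN : c ≤ N) :
    Tendsto (fun ε => pairDown N ε c / sF N ε c) (𝓝[>] (0:ℝ)) (𝓝 1) := by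
  by_cases h2 : c ≤ N-2
  · apply one_add_sq_tendsto.congr'
    filter_upwards [pos_ev] with ε hε
    rw [pairDown, sF, if_pos (by omega : c ≤ N-1), if_neg (by omega), if_pos h2]
    rw [show ε^(2*c+2) = ε^(2*c)*ε^2 from by ring,
      show ε^(2*c) + ε^(2*c)*ε^2 = ε^(2*c)*(1+ε^2) from by ring,
      div_mul_eq_div_div, div_self (pow_ne_zero _ (ne_of_gt hε))]
  by_cases h1 : c = N-1
  · apply one_add_eps_tendsto.congr'
    filter_upwards [pos_ev] with ε hε
    rw [pairDown, sF, if_pos (by omega : c ≤ N-1), if_neg (by omega), if_neg h2, if_pos h1]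
    rw [show 2*c = 2*N-2 from by omega,
      show ε^(2*N-1) = ε^(2*N-2)*ε from by
        rw [← pow_succ]; congr 1; omega,
      show ε^(2*N-2) + ε^(2*N-2)*ε = ε^(2*N-2)*(1+ε) from by ring,
      div_mul_eq_div_div, div_self (pow_ne_zero _ (ne_of_gt hε))]
  · -- c = N
    have hc : c = N := by omega
    apply tendsto_one.congr'
    filter_upwards [pos_ev] with ε hε
    rw [pairDown, sF, if_neg (by omega), if_neg (by omega), if_neg (by omega), if_neg (by omega)]
    rw [div_self (pow_ne_zero _ (ne_of_gt hε))]

lemma stay_factor_tendsto (hN : 3 ≤ N) :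
    Tendsto (fun ε => (1 - 2*SSf N ε) / sF N ε 0) (𝓝[>] (0:ℝ)) (𝓝 1) := by
  have hnum : Tendsto (fun ε => 1 - 2*SSf N ε) (𝓝[>] (0:ℝ)) (𝓝 1) := by
    have := tendsto_one.sub ((SSf_tendsto hN).const_mul 2)
    simpa using this
  have h := hnum.div (sF0_tendsto hN) one_ne_zero
  rw [div_one] at h
  exact h

lemma up_factor_tendsto (hN : 3 ≤ N) (c : ℕ) (hc : c ≤ N-2) :
    Tendsto (fun ε => pairUp N ε c / sF N ε c / ε^2) (𝓝[>] (0:ℝ)) (𝓝 1) := by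
  rcases Nat.eq_zero_or_pos c with rfl | hpos
  · have h1 : Tendsto (fun ε : ℝ => 1 / sF N ε 0) (𝓝[>] (0:ℝ)) (𝓝 1) := by
      have h2 : Tendsto (fun ε : ℝ => 1/(sF N ε 0)) (𝓝[>] (0:ℝ)) (𝓝 (1/1)) :=
        Tendsto.congr (fun x => rfl) (tendsto_one.div (sF0_tendsto hN) one_ne_zero)
      simpa using h2
    apply h1.congr'
    filter_upwards [pos_ev] with ε hε
    rw [pairUp, if_pos (by omega : 0+1 ≤ N-1)]
    rw [show 2*(0+1) = 2 from by ring]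
    rw [div_div, mul_comm, ← div_div, div_self (pow_ne_zero _ (ne_of_gt hε))]
  · apply one_add_sq_tendsto.congr'
    filter_upwards [pos_ev] with ε hε
    rw [pairUp, sF, if_pos (by omega : c+1 ≤ N-1), if_neg (by omega), if_pos hc]
    rw [show ε^(2*(c+1)) = ε^(2*c)*ε^2 from by ring,
      show ε^(2*c+2) = ε^(2*c)*ε^2 from by ring,
      show ε^(2*c) + ε^(2*c)*ε^2 = ε^(2*c)*(1+ε^2) from by ring]
    rw [div_div]
    rw [show ε^(2*c)*(1+ε^2)*ε^2 = (ε^(2*c)*ε^2)*(1+ε^2) from by ring]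
    rw [div_mul_eq_div_div, div_self (by positivity)]

lemma up_factor_last_tendsto (hN : 3 ≤ N) :
    Tendsto (fun ε => pairUp N ε (N-1) / sF N ε (N-1) / ε) (𝓝[>] (0:ℝ)) (𝓝 1) := by
  apply one_add_eps_tendsto.congr'
  filter_upwards [pos_ev] with ε hε
  rw [pairUp, sF, if_neg (by omega), if_neg (by omega), if_neg (by omega), if_pos rfl]
  rw [show ε^(2*N-1) = ε^(2*N-2)*ε from by rw [← pow_succ]; congr 1; omega,
    show ε^(2*N-2) + ε^(2*N-2)*ε = ε^(2*N-2)*(1+ε) from by ring]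
  rw [div_div]
  rw [show ε^(2*N-2)*(1+ε)*ε = (ε^(2*N-2)*ε)*(1+ε) from by ring]
  rw [div_mul_eq_div_div, div_self (by positivity)]

end Limits
end CSAux
namespace CSAux
open MeasureTheory Filter Set
variable {Ω : Type*} [MeasurableSpace Ω] {P : Measure Ω} {Y : ℤ → Ω → ℝ}

section Bounds
variable {N : ℕ} {ε : ℝ} [IsProbabilityMeasure P]

lemma compl_toReal {s : Set Ω} (hs : MeasurableSet s) :
    (P sᶜ).toReal = 1 - (P s).toReal := by
  rw [measure_compl hs (measure_ne_top P s), measure_univ,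
    ENNReal.toReal_sub_of_le prob_le_one (by norm_num)]
  simp

lemma sF0_pos (hN : 3 ≤ N) (hC : ConditionS P N ε Y) (hε : 0 < ε)
    (hs0 : 0 < 1 - 2*SSf N ε) (i : ℕ) (hi : i ≤ N) : 0 < sF N ε i := by
  have := s_pos hN hC hε hs0 i hi
  rwa [s_val hN hC i hi] at this

lemma trans00_bounds (hN : 3 ≤ N) (hC : ConditionS P N ε Y) (hε : 0 < ε)
    (hs0 : 0 < 1 - 2*SSf N ε) (m : ℕ) :
    2 - 1/(sF N ε 0) ≤ transProb P Y m 0 0 ∧ transProb P Y m 0 0 ≤ 1 := by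
  have hmeas := hC.2.1.1
  set A : Set Ω := {ω | Y 0 ω = ((0:ℕ):ℝ)} with hAdef
  set B : Set Ω := {ω | Y (m:ℤ) ω = ((0:ℕ):ℝ)} with hBdef
  have hA : MeasurableSet A := measurableSet_eq_fun (hmeas 0) measurable_const
  have hB : MeasurableSet B := measurableSet_eq_fun (hmeas _) measurable_const
  have hsA : (P A).toReal = sF N ε 0 := s_val hN hC 0 (by omega)
  have hsB : (P B).toReal = sF N ε 0 := s_val_k hN hC (m:ℤ) 0 (by omega)
  have hs0pos : 0 < sF N ε 0 := sF0_pos hN hC hε hs0 0 (by omega)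
  have hset : {ω | Y 0 ω = ((0:ℕ):ℝ) ∧ Y (m:ℤ) ω = ((0:ℕ):ℝ)} = A ∩ B := rfl
  have htr : transProb P Y m 0 0 = (P (A ∩ B)).toReal / sF N ε 0 := by
    rw [transProb, hset, hsA]
  constructor
  · have hc : (P (A ∩ B)ᶜ).toReal ≤ (P Aᶜ).toReal + (P Bᶜ).toReal := by
      rw [Set.compl_inter]
      calc (P (Aᶜ ∪ Bᶜ)).toReal ≤ (P Aᶜ + P Bᶜ).toReal :=
            ENNReal.toReal_mono (by finiteness) (measure_union_le _ _)
        _ = (P Aᶜ).toReal + (P Bᶜ).toReal :=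
            ENNReal.toReal_add (measure_ne_top _ _) (measure_ne_top _ _)
    rw [compl_toReal hA, compl_toReal hB, hsA, hsB] at hc
    have h1 : (P ((A ∩ B)ᶜ)).toReal = 1 - (P (A ∩ B)).toReal := compl_toReal (hA.inter hB)
    have hnum : 2*sF N ε 0 - 1 ≤ (P (A ∩ B)).toReal := by linarith
    rw [htr]
    have e : 2 - 1/sF N ε 0 = (2*sF N ε 0 - 1)/sF N ε 0 := by
      field_simp
    rw [e]
    exact div_le_div_of_nonneg_right hnum hs0pos.le
  · rw [htr]
    rw [div_le_one hs0pos, ← hsA]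
    exact ENNReal.toReal_mono (measure_ne_top P A) (measure_mono Set.inter_subset_left)

end Bounds
end CSAux
namespace CSAux
open MeasureTheory Filter Set
variable {Ω : Type*} [MeasurableSpace Ω] {P : Measure Ω} {Y : ℤ → Ω → ℝ}

section Bounds2
variable {N : ℕ} {ε : ℝ} [IsProbabilityMeasure P]

lemma transj0_bounds (hN : 3 ≤ N) (hC : ConditionS P N ε Y) (hε : 0 < ε)
    (hs0 : 0 < 1 - 2*SSf N ε) (j m : ℕ) (hj1 : 1 ≤ j) (hjN : j ≤ N) (hjm : j ≤ m) :
    (∏ k ∈ Finset.range m,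
        ((if k < j then pairDown N ε (j-k) else (1 - 2*SSf N ε)) / sF N ε (j-k)))
      ≤ transProb P Y m j 0 ∧ transProb P Y m j 0 ≤ 1 := by
  set v : ℕ → ℕ := fun k => j - k with hv
  have hvN : ∀ k, v k ≤ N := fun k => le_trans (Nat.sub_le _ _) hjN
  have hsjpos : 0 < sF N ε j := sF0_pos hN hC hε hs0 j hjN
  have hsj : (P {ω | Y 0 ω = ((j:ℕ):ℝ)}).toReal = sF N ε j := s_val hN hC j hjN
  have hpp := path_prob' hN hC hε hs0 v hvN m
  have hprod : (P (pathSet Y v m)).toReal = sF N ε j * ∏ k ∈ Finset.range m,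
      ((if k < j then pairDown N ε (j-k) else (1 - 2*SSf N ε)) / sF N ε (j-k)) := by
    rw [hpp]
    congr 1
    apply Finset.prod_congr rfl
    intro k _
    by_cases hk : k < j
    · rw [if_pos hk]
      have hvk1 : v (k+1) = (j-k) - 1 := by simp [hv]; omega
      have hvk : v k = j - k := rfl
      rw [hvk, hvk1, pair_down_val hN hC (j-k) (by omega) (by omega)]
    · rw [if_neg hk]
      have hvk : v k = 0 := by simp [hv]; omega
      have hvk1 : v (k+1) = 0 := by simp [hv]; omega
      rw [hvk, hvk1, pair_00_val hN hC, show j - k = 0 from by omega]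
  have hsub : pathSet Y v m ⊆ {ω | Y 0 ω = ((j:ℕ):ℝ) ∧ Y (m:ℤ) ω = ((0:ℕ):ℝ)} := by
    intro ω hω
    refine ⟨hω 0 (by omega), ?_⟩
    have := hω m le_rfl
    rwa [show v m = 0 from by simp [hv]; omega] at this
  have hle : (P (pathSet Y v m)).toReal
      ≤ (P {ω | Y 0 ω = ((j:ℕ):ℝ) ∧ Y (m:ℤ) ω = ((0:ℕ):ℝ)}).toReal :=
    ENNReal.toReal_mono (measure_ne_top _ _) (measure_mono hsub)
  constructor
  · rw [transProb, hsj]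
    have h2 : (∏ k ∈ Finset.range m,
        ((if k < j then pairDown N ε (j-k) else (1 - 2*SSf N ε)) / sF N ε (j-k)))
        = (P (pathSet Y v m)).toReal / sF N ε j := by
      rw [hprod, mul_comm (sF N ε j), mul_div_assoc, div_self (ne_of_gt hsjpos), mul_one]
    rw [h2]
    exact div_le_div_of_nonneg_right hle hsjpos.le
  · rw [transProb, hsj, div_le_one hsjpos, ← hsj]
    exact ENNReal.toReal_mono (measure_ne_top P _)
      (measure_mono (fun ω hω => hω.1))
end Bounds2
end CSAux
open CSAux in
/-- Asymptotics (2.6) of the multi-step transition probabilities. -/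
theorem conditionS_multistep_asymptotics [MeasurableSpace Ω] (P : Measure Ω)
    [IsProbabilityMeasure P] (N : ℕ) (hN : 3 ≤ N) (Y : ℝ → ℤ → Ω → ℝ)
    (hY : ∀ ε ∈ Set.Ioc (0:ℝ) (1/3), ConditionS P N ε (Y ε)) :
    (∀ m : ℕ, 1 ≤ m →
      Tendsto (fun ε : ℝ => transProb P (Y ε) m 0 0) (𝓝[>] 0) (𝓝 1)) ∧
    (∀ m : ℕ, 1 ≤ m → m ≤ N - 1 →
      Tendsto (fun ε : ℝ => transProb P (Y ε) m 0 m / ε^(2*m)) (𝓝[>] 0) (𝓝 1)) ∧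
    Tendsto (fun ε : ℝ => transProb P (Y ε) N 0 N / ε^(2*N-1)) (𝓝[>] 0) (𝓝 1) ∧
    (∀ i j : ℕ, i < j → j ≤ N →
      Tendsto (fun ε : ℝ => transProb P (Y ε) (j-i) j i) (𝓝[>] 0) (𝓝 1)) ∧
    (∀ j m : ℕ, 1 ≤ j → j ≤ N → j ≤ m →
      Tendsto (fun ε : ℝ => transProb P (Y ε) m j 0) (𝓝[>] 0) (𝓝 1)) := by
  have hinv : Tendsto (fun ε : ℝ => 1 / sF N ε 0) (𝓝[>] (0:ℝ)) (𝓝 1) := by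
    have h2 : Tendsto (fun ε : ℝ => 1/(sF N ε 0)) (𝓝[>] (0:ℝ)) (𝓝 (1/1)) :=
      Tendsto.congr (fun x => rfl) (tendsto_one.div (sF0_tendsto hN) one_ne_zero)
    simpa using h2
  refine ⟨?part1, ?part2, ?part3, ?part4, ?part5⟩
  case part1 =>
    intro m hm
    have hl : Tendsto (fun ε : ℝ => 2 - 1 / sF N ε 0) (𝓝[>] (0:ℝ)) (𝓝 1) := by
      have := tendsto_two.sub hinv
      rw [show (2:ℝ) - 1 = 1 from by norm_num] at this
      exact this.congr fun x => rfl
    apply tendsto_of_tendsto_of_tendsto_of_le_of_le' hl tendsto_const_nhds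
    · filter_upwards [ioc_ev, pos_ev, hs0_ev hN] with ε hIoc hε hs0
      exact (trans00_bounds hN (hY ε hIoc) hε hs0 m).1
    · filter_upwards [ioc_ev, pos_ev, hs0_ev hN] with ε hIoc hε hs0
      exact (trans00_bounds hN (hY ε hIoc) hε hs0 m).2
  case part2 =>
    intro m hm hmN
    have htend : Tendsto (fun ε : ℝ => ∏ k ∈ Finset.range m,
        (pairUp N ε k / sF N ε k / ε^2)) (𝓝[>] (0:ℝ)) (𝓝 1) := by
      have := tendsto_finset_prod (f := fun k (ε : ℝ) => pairUp N ε k / sF N ε k / ε^2)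
        (a := fun _ => (1:ℝ)) (Finset.range m)
        (fun k hk => up_factor_tendsto hN k (by
          have := Finset.mem_range.1 hk; omega))
      simpa using this
    apply htend.congr'
    filter_upwards [ioc_ev, pos_ev, hs0_ev hN] with ε hIoc hε hs0
    rw [Finset.prod_div_distrib, Finset.prod_const, Finset.card_range, ← pow_mul,
      trans_up hN (hY ε hIoc) hε hs0 m hm (by omega)]
  case part3 =>
    have htend1 : Tendsto (fun ε : ℝ => ∏ k ∈ Finset.range (N-1),
        (pairUp N ε k / sF N ε k / ε^2)) (𝓝[>] (0:ℝ)) (𝓝 1) := by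
      have := tendsto_finset_prod (f := fun k (ε : ℝ) => pairUp N ε k / sF N ε k / ε^2)
        (a := fun _ => (1:ℝ)) (Finset.range (N-1))
        (fun k hk => up_factor_tendsto hN k (by
          have := Finset.mem_range.1 hk; omega))
      simpa using this
    have htend : Tendsto (fun ε : ℝ => (∏ k ∈ Finset.range (N-1),
        (pairUp N ε k / sF N ε k / ε^2)) * (pairUp N ε (N-1) / sF N ε (N-1) / ε))
        (𝓝[>] (0:ℝ)) (𝓝 1) := by
      have := htend1.mul (up_factor_last_tendsto hN)
      simpa using this
    apply htend.congr'
    filter_upwards [ioc_ev, pos_ev, hs0_ev hN] with ε hIoc hε hs0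
    have hsplit := Finset.prod_range_succ (fun k => pairUp N ε k / sF N ε k) (N-1)
    rw [show N-1+1 = N from by omega] at hsplit
    have hden : (ε^2)^(N-1) * ε = ε^(2*N-1) := by
      rw [← pow_mul, ← pow_succ]
      congr 1
      omega
    rw [Finset.prod_div_distrib, Finset.prod_const, Finset.card_range,
      div_mul_div_comm, hden, trans_up hN (hY ε hIoc) hε hs0 N (by omega) le_rfl, hsplit]
  case part4 =>
    intro i j hij hjN
    have htend : Tendsto (fun ε : ℝ => ∏ k ∈ Finset.range (j-i),
        (pairDown N ε (j-k) / sF N ε (j-k))) (𝓝[>] (0:ℝ)) (𝓝 1) := by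
      have := tendsto_finset_prod (f := fun k (ε : ℝ) => pairDown N ε (j-k) / sF N ε (j-k))
        (a := fun _ => (1:ℝ)) (Finset.range (j-i))
        (fun k hk => down_factor_tendsto hN (j-k)
          (by have := Finset.mem_range.1 hk; omega)
          (by omega))
      simpa using this
    apply htend.congr'
    filter_upwards [ioc_ev, pos_ev, hs0_ev hN] with ε hIoc hε hs0
    rw [trans_down hN (hY ε hIoc) hε hs0 i j hij hjN]
  case part5 =>
    intro j m hj1 hjN hjm
    have hlow : Tendsto (fun ε : ℝ => ∏ k ∈ Finset.range m,
        ((if k < j then pairDown N ε (j-k) else (1 - 2*SSf N ε)) / sF N ε (j-k)))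
        (𝓝[>] (0:ℝ)) (𝓝 1) := by
      have := tendsto_finset_prod
        (f := fun k (ε : ℝ) =>
          (if k < j then pairDown N ε (j-k) else (1 - 2*SSf N ε)) / sF N ε (j-k))
        (a := fun _ => (1:ℝ)) (Finset.range m)
        (fun k hk => by
          by_cases hkj : k < j
          · simp only [if_pos hkj]
            exact down_factor_tendsto hN (j-k) (by omega) (by omega)
          · simp only [if_neg hkj, show j - k = 0 from by omega]
            exact stay_factor_tendsto hN)
      simpa using this
    apply tendsto_of_tendsto_of_tendsto_of_le_of_le' hlow tendsto_const_nhds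
    · filter_upwards [ioc_ev, pos_ev, hs0_ev hN] with ε hIoc hε hs0
      exact (transj0_bounds hN (hY ε hIoc) hε hs0 j m hj1 hjN hjm).1
    · filter_upwards [ioc_ev, pos_ev, hs0_ev hN] with ε hIoc hε hs0
      exact (transj0_bounds hN (hY ε hIoc) hε hs0 j m hj1 hjN hjm).2

end
end

section
/- Let N ≥ 3 be a fixed integer and m an integer with 1 ≤ m < N/2. For each ε ∈ (0,1/3] let Y^{(ε)} = (Y^{(ε)}_k, k ∈ ℤ) be a strictly stationary Markov chain satisfying Condition S(N,ε), and set A_ε := {Y^{(ε)}_0 = N} and B_ε := {Y^{(ε)}_{-m} = Y^{(ε)}_m = N−m}. Then P(A_ε ∩ B_ε) ~ ε^{2N−1} as ε → 0+. -/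
open MeasureTheory ProbabilityTheory Filter Set
open scoped ENNReal Topology

noncomputable section

variable {Ω : Type*}

section AuxHelpers

variable [MeasurableSpace Ω] {P : Measure Ω} [IsProbabilityMeasure P] {Y : ℤ → Ω → ℝ}

lemma sigmaOf_le (hmeas : ∀ k, Measurable (Y k)) (S : Set ℤ) :
    sigmaOf Y S ≤ ‹MeasurableSpace Ω› :=
  iSup₂_le fun k _ => measurable_iff_comap_le.mp (hmeas k)

lemma sigmaOf_singleton_s14 (k : ℤ) :
    sigmaOf Y ({k} : Set ℤ) = MeasurableSpace.comap (Y k) inferInstance := by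
  simp [sigmaOf]

lemma measurableSet_sigmaOf {k : ℤ} {S : Set ℤ} (hk : k ∈ S) (c : ℝ) :
    MeasurableSet[sigmaOf Y S] {ω | Y k ω = c} := by
  have h : MeasurableSpace.comap (Y k) inferInstance ≤ sigmaOf Y S :=
    le_iSup₂ (f := fun k (_ : k ∈ S) => MeasurableSpace.comap (Y k) inferInstance) k hk
  exact h _ ⟨{c}, measurableSet_singleton c, rfl⟩

omit [MeasurableSpace Ω] in
lemma comap_fiber_eq [mΩ : MeasurableSpace Ω] {X : Ω → ℝ} {f : Ω → ℝ}
    (hf : Measurable[MeasurableSpace.comap X inferInstance] f)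
    {ω ω' : Ω} (h : X ω = X ω') : f ω = f ω' := by
  have hs : MeasurableSet[MeasurableSpace.comap X inferInstance] (f ⁻¹' {f ω'}) :=
    hf (measurableSet_singleton _)
  obtain ⟨t, -, ht⟩ := MeasurableSpace.measurableSet_comap.mp hs
  have hω' : ω' ∈ X ⁻¹' t := by rw [ht]; exact rfl
  have hω : ω ∈ X ⁻¹' t := by simpa [Set.mem_preimage, h] using hω'
  rw [ht] at hω; exact hω

set_option maxHeartbeats 2000000 in
lemma markov_atom (hmeas : ∀ k, Measurable (Y k)) (hMC : IsMarkovChain P Y)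
    (k : ℤ) (c : ℝ) {A B : Set Ω}
    (hA : MeasurableSet[sigmaOf Y (Set.Iic k)] A)
    (hB : MeasurableSet[sigmaOf Y (Set.Ici k)] B)
    (hAc : A ⊆ {ω | Y k ω = c}) (hBc : B ⊆ {ω | Y k ω = c})
    (hC : P {ω | Y k ω = c} ≠ 0) :
    (P (A ∩ B)).toReal = (P A).toReal * (P B).toReal / (P {ω | Y k ω = c}).toReal := by
  have hσ : sigmaOf Y ({k} : Set ℤ) ≤ ‹MeasurableSpace Ω› := sigmaOf_le hmeas _
  have hAm : MeasurableSet A := sigmaOf_le hmeas _ _ hA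
  have hBm : MeasurableSet B := sigmaOf_le hmeas _ _ hB
  have hCmσ : MeasurableSet[sigmaOf Y ({k} : Set ℤ)] {ω | Y k ω = c} :=
    measurableSet_sigmaOf (S := ({k} : Set ℤ)) (Set.mem_singleton k) c
  have hCm : MeasurableSet {ω | Y k ω = c} := hσ _ hCmσ
  have hfg := hMC.2 k A B hA hB
  have hIntA : Integrable (A.indicator (fun _ => (1:ℝ))) P :=
    (integrable_const (1:ℝ)).indicator hAm
  have hIntB : Integrable (B.indicator (fun _ => (1:ℝ))) P :=
    (integrable_const (1:ℝ)).indicator hBm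
  have hIntAB : Integrable ((A ∩ B).indicator (fun _ => (1:ℝ))) P :=
    (integrable_const (1:ℝ)).indicator (hAm.inter hBm)
  obtain ⟨ω₀, hω₀⟩ : {ω | Y k ω = c}.Nonempty := nonempty_of_measure_ne_zero hC
  have hconst : ∀ (h : Ω → ℝ), StronglyMeasurable[sigmaOf Y ({k} : Set ℤ)] h →
      ∀ ω ∈ {ω | Y k ω = c}, h ω = h ω₀ := by
    intro h hh ω hω
    have hh' : Measurable[MeasurableSpace.comap (Y k) inferInstance] h := by
      rw [sigmaOf_singleton_s14] at hh
      exact hh.measurable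
    exact comap_fiber_eq hh' (by rw [Set.mem_setOf_eq.mp hω, Set.mem_setOf_eq.mp hω₀])
  have hfC := hconst _ (stronglyMeasurable_condExp
    (f := A.indicator (fun _ => (1:ℝ))) (μ := P) (m := sigmaOf Y ({k} : Set ℤ)))
  have hgC := hconst _ (stronglyMeasurable_condExp
    (f := B.indicator (fun _ => (1:ℝ))) (μ := P) (m := sigmaOf Y ({k} : Set ℤ)))
  have hintf : ∫ ω in {ω | Y k ω = c}, (P[A.indicator (fun _ => (1:ℝ)) | sigmaOf Y ({k} : Set ℤ)]) ω ∂P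
      = (P A).toReal := by
    rw [setIntegral_condExp hσ hIntA hCmσ, setIntegral_indicator hAm,
      Set.inter_eq_right.mpr hAc]
    simp [setIntegral_const, measureReal_def]
  have hintg : ∫ ω in {ω | Y k ω = c}, (P[B.indicator (fun _ => (1:ℝ)) | sigmaOf Y ({k} : Set ℤ)]) ω ∂P
      = (P B).toReal := by
    rw [setIntegral_condExp hσ hIntB hCmσ, setIntegral_indicator hBm,
      Set.inter_eq_right.mpr hBc]
    simp [setIntegral_const, measureReal_def]
  have hintfg : ∫ ω in {ω | Y k ω = c},
      (P[A.indicator (fun _ => (1:ℝ)) | sigmaOf Y ({k} : Set ℤ)]) ω *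
      (P[B.indicator (fun _ => (1:ℝ)) | sigmaOf Y ({k} : Set ℤ)]) ω ∂P
      = (P (A ∩ B)).toReal := by
    have h1 : ∫ ω in {ω | Y k ω = c},
        (P[A.indicator (fun _ => (1:ℝ)) | sigmaOf Y ({k} : Set ℤ)]) ω *
        (P[B.indicator (fun _ => (1:ℝ)) | sigmaOf Y ({k} : Set ℤ)]) ω ∂P
        = ∫ ω in {ω | Y k ω = c},
          (P[(A ∩ B).indicator (fun _ => (1:ℝ)) | sigmaOf Y ({k} : Set ℤ)]) ω ∂P :=
      integral_congr_ae (Filter.EventuallyEq.restrict hfg)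
    rw [h1, setIntegral_condExp hσ hIntAB hCmσ, setIntegral_indicator (hAm.inter hBm),
      Set.inter_eq_right.mpr (fun ω hω => hAc hω.1)]
    simp [setIntegral_const, measureReal_def]
  have hfin : P {ω | Y k ω = c} ≠ ⊤ := measure_ne_top P _
  have hCpos : 0 < (P {ω | Y k ω = c}).toReal := ENNReal.toReal_pos hC hfin
  have hf0 : (P[A.indicator (fun _ => (1:ℝ)) | sigmaOf Y ({k} : Set ℤ)]) ω₀ *
      (P {ω | Y k ω = c}).toReal = (P A).toReal := by
    rw [← hintf, setIntegral_congr_fun hCm (fun ω hω => hfC ω hω)]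
    rw [setIntegral_const]; simp [mul_comm, measureReal_def]
  have hg0 : (P[B.indicator (fun _ => (1:ℝ)) | sigmaOf Y ({k} : Set ℤ)]) ω₀ *
      (P {ω | Y k ω = c}).toReal = (P B).toReal := by
    rw [← hintg, setIntegral_congr_fun hCm (fun ω hω => hgC ω hω)]
    rw [setIntegral_const]; simp [mul_comm, measureReal_def]
  have hfg0 : (P[A.indicator (fun _ => (1:ℝ)) | sigmaOf Y ({k} : Set ℤ)]) ω₀ *
      (P[B.indicator (fun _ => (1:ℝ)) | sigmaOf Y ({k} : Set ℤ)]) ω₀ *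
      (P {ω | Y k ω = c}).toReal = (P (A ∩ B)).toReal := by
    rw [← hintfg, setIntegral_congr_fun hCm
      (fun ω hω => by rw [hfC ω hω, hgC ω hω])]
    rw [setIntegral_const]; simp [mul_comm, measureReal_def]
  rw [← hfg0, ← hf0, ← hg0]
  field_simp

end AuxHelpers

section StatHelpers

variable [MeasurableSpace Ω] {P : Measure Ω} [IsProbabilityMeasure P] {Y : ℤ → Ω → ℝ}

lemma measurable_eval_int (i : ℤ) : Measurable fun f : ℤ → ℝ => f i :=
  measurable_pi_apply i

lemma measurableSet_eval_eq (i : ℤ) (a : ℝ) : MeasurableSet {f : ℤ → ℝ | f i = a} :=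
  measurable_eval_int i (measurableSet_singleton a)

lemma stationary_master (hst : StrictlyStationary P Y) (hmeas : ∀ k, Measurable (Y k))
    (n : ℤ) {S : Set (ℤ → ℝ)} (hS : MeasurableSet S) :
    P ((fun ω => fun k : ℤ => Y (k + n) ω) ⁻¹' S)
      = P ((fun ω => fun k : ℤ => Y k ω) ⁻¹' S) := by
  have h1 : Measurable fun ω => fun k : ℤ => Y (k + n) ω :=
    measurable_pi_lambda _ fun k => hmeas (k + n)
  have h2 : Measurable fun ω => fun k : ℤ => Y k ω :=
    measurable_pi_lambda _ fun k => hmeas k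
  have h := congrArg (fun μ : Measure (ℤ → ℝ) => μ S) (hst n)
  simpa [Measure.map_apply h1 hS, Measure.map_apply h2 hS] using h

lemma stat_single (hst : StrictlyStationary P Y) (hmeas : ∀ k, Measurable (Y k))
    (k : ℤ) (a : ℝ) : P {ω | Y k ω = a} = P {ω | Y 0 ω = a} := by
  have := stationary_master hst hmeas k (measurableSet_eval_eq 0 a)
  have e1 : (fun ω => fun j : ℤ => Y (j + k) ω) ⁻¹' {f : ℤ → ℝ | f 0 = a}
      = {ω | Y k ω = a} := by ext ω; simp
  have e2 : (fun ω => fun j : ℤ => Y j ω) ⁻¹' {f : ℤ → ℝ | f 0 = a}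
      = {ω | Y 0 ω = a} := by ext ω; simp
  rwa [e1, e2] at this

lemma stat_pair (hst : StrictlyStationary P Y) (hmeas : ∀ k, Measurable (Y k))
    (k : ℤ) (a b : ℝ) :
    P {ω | Y k ω = a ∧ Y (k + 1) ω = b} = P {ω | Y 0 ω = a ∧ Y 1 ω = b} := by
  have hS : MeasurableSet {f : ℤ → ℝ | f 0 = a ∧ f 1 = b} := by
    have h : {f : ℤ → ℝ | f 0 = a ∧ f 1 = b}
        = {f : ℤ → ℝ | f 0 = a} ∩ {f : ℤ → ℝ | f 1 = b} := rfl
    rw [h]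
    exact (measurableSet_eval_eq 0 a).inter (measurableSet_eval_eq 1 b)
  have := stationary_master hst hmeas k hS
  have e1 : (fun ω => fun j : ℤ => Y (j + k) ω) ⁻¹' {f : ℤ → ℝ | f 0 = a ∧ f 1 = b}
      = {ω | Y k ω = a ∧ Y (k + 1) ω = b} := by
    ext ω; simp [zero_add, add_comm]
  have e2 : (fun ω => fun j : ℤ => Y j ω) ⁻¹' {f : ℤ → ℝ | f 0 = a ∧ f 1 = b}
      = {ω | Y 0 ω = a ∧ Y 1 ω = b} := by ext ω; simp
  rwa [e1, e2] at this

lemma stat_range {N : ℕ} (hst : StrictlyStationary P Y) (hmeas : ∀ k, Measurable (Y k))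
    (hr : ∀ᵐ ω ∂P, ∃ i : ℕ, i ≤ N ∧ Y 0 ω = (i:ℝ)) (k : ℤ) :
    ∀ᵐ ω ∂P, ∃ i : ℕ, i ≤ N ∧ Y k ω = (i:ℝ) := by
  have hS : MeasurableSet {f : ℤ → ℝ | ¬ ∃ i : ℕ, i ≤ N ∧ f 0 = (i:ℝ)} := by
    have h : {f : ℤ → ℝ | ¬ ∃ i : ℕ, i ≤ N ∧ f 0 = (i:ℝ)}
        = (⋃ (i : ℕ) (_ : i ≤ N), {f : ℤ → ℝ | f 0 = (i:ℝ)})ᶜ := by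
      ext f; simp
    rw [h]
    exact (MeasurableSet.biUnion (Set.to_countable {i : ℕ | i ≤ N})
      fun i _ => measurableSet_eval_eq 0 (i:ℝ)).compl
  have h := stationary_master hst hmeas k hS
  have e1 : (fun ω => fun j : ℤ => Y (j + k) ω) ⁻¹' {f : ℤ → ℝ | ¬ ∃ i : ℕ, i ≤ N ∧ f 0 = (i:ℝ)}
      = {ω | ¬ ∃ i : ℕ, i ≤ N ∧ Y k ω = (i:ℝ)} := by ext ω; simp
  have e2 : (fun ω => fun j : ℤ => Y j ω) ⁻¹' {f : ℤ → ℝ | ¬ ∃ i : ℕ, i ≤ N ∧ f 0 = (i:ℝ)}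
      = {ω | ¬ ∃ i : ℕ, i ≤ N ∧ Y 0 ω = (i:ℝ)} := by ext ω; simp
  rw [e1, e2] at h
  rw [ae_iff]
  rw [show {ω | ¬ ∃ i : ℕ, i ≤ N ∧ Y k ω = (i:ℝ)} = {ω | ¬ ∃ i : ℕ, i ≤ N ∧ Y k ω = (i:ℝ)} from rfl]
  calc P {ω | ¬ ∃ i : ℕ, i ≤ N ∧ Y k ω = (i:ℝ)}
      = P {ω | ¬ ∃ i : ℕ, i ≤ N ∧ Y 0 ω = (i:ℝ)} := h
    _ = 0 := ae_iff.mp hr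

lemma stat_path {M : ℕ} (hst : StrictlyStationary P Y) (hmeas : ∀ k, Measurable (Y k))
    (v : ℕ → ℝ) :
    P {ω | ∀ i : ℕ, i ≤ M → Y ((i:ℤ) - (M:ℤ)) ω = v i}
      = P {ω | ∀ i : ℕ, i ≤ M → Y (i:ℤ) ω = v i} := by
  have hS : MeasurableSet {f : ℤ → ℝ | ∀ i : ℕ, i ≤ M → f (i:ℤ) = v i} := by
    have h : {f : ℤ → ℝ | ∀ i : ℕ, i ≤ M → f (i:ℤ) = v i}
        = ⋂ (i : ℕ) (_ : i ≤ M), {f : ℤ → ℝ | f (i:ℤ) = v i} := by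
      ext f; simp
    rw [h]
    exact MeasurableSet.biInter (Set.to_countable {i : ℕ | i ≤ M})
      fun i _ => measurableSet_eval_eq _ _
  have h := stationary_master hst hmeas (-(M:ℤ)) hS
  have e1 : (fun ω => fun j : ℤ => Y (j + -(M:ℤ)) ω) ⁻¹'
        {f : ℤ → ℝ | ∀ i : ℕ, i ≤ M → f (i:ℤ) = v i}
      = {ω | ∀ i : ℕ, i ≤ M → Y ((i:ℤ) - (M:ℤ)) ω = v i} := by
    ext ω; simp [sub_eq_add_neg]
  have e2 : (fun ω => fun j : ℤ => Y j ω) ⁻¹' {f : ℤ → ℝ | ∀ i : ℕ, i ≤ M → f (i:ℤ) = v i}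
      = {ω | ∀ i : ℕ, i ≤ M → Y (i:ℤ) ω = v i} := rfl
  rwa [e1, e2] at h

end StatHelpers

section Squeeze

lemma squeeze_int (f : ℤ → ℝ) (a b : ℤ)
    (hlip : ∀ k : ℤ, a ≤ k → k < b → |f (k + 1) - f k| ≤ 1)
    (hb : f b = f a - (b - a)) :
    ∀ k : ℤ, a ≤ k → k ≤ b → f k = f a - (k - a) := by
  have hlow : ∀ n : ℕ, a + n ≤ b → f a - n ≤ f (a + n) := by
    intro n
    induction n with
    | zero => intro _; simp
    | succ n ih =>
      intro hn
      have hn' : a + n ≤ b := by omega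
      have h1 := ih (by omega)
      have h2 := hlip (a + n) (by omega) (by omega)
      have := (abs_le.mp h2).1
      push_cast
      push_cast at h1
      have : f (a + n + 1) ≥ f (a + n) - 1 := by linarith
      have heq : a + ((n : ℤ) + 1) = a + n + 1 := by ring
      rw [heq]
      linarith
  have hhigh : ∀ n : ℕ, a ≤ b - n → f (b - n) ≤ f b + n := by
    intro n
    induction n with
    | zero => intro _; simp
    | succ n ih =>
      intro hn
      have h1 := ih (by omega)
      have h2 := hlip (b - n - 1) (by omega) (by omega)
      have h3 := (abs_le.mp h2).1
      have heq : b - (n : ℤ) - 1 + 1 = b - n := by ring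
      rw [heq] at h2 h3
      have heq2 : b - ((n : ℤ) + 1) = b - n - 1 := by ring
      push_cast
      rw [heq2]
      push_cast at h1
      linarith
  intro k hak hkb
  obtain ⟨n, hn⟩ : ∃ n : ℕ, (n:ℤ) = k - a := ⟨(k - a).toNat, by omega⟩
  obtain ⟨n', hn'⟩ : ∃ n' : ℕ, (n':ℤ) = b - k := ⟨(b - k).toNat, by omega⟩
  have h1 := hlow n (by omega)
  have h2 := hhigh n' (by omega)
  rw [show a + (n:ℤ) = k by omega] at h1
  rw [show b - (n':ℤ) = k by omega] at h2
  have e1 : ((n:ℕ):ℝ) = (k:ℝ) - a := by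
    have := congrArg (fun z : ℤ => (z:ℝ)) hn
    push_cast at this
    linarith
  have e2 : ((n':ℕ):ℝ) = (b:ℝ) - k := by
    have := congrArg (fun z : ℤ => (z:ℝ)) hn'
    push_cast at this
    linarith
  rw [e1] at h1
  rw [e2, hb] at h2
  linarith

lemma squeeze_int_up (f : ℤ → ℝ) (a b : ℤ)
    (hlip : ∀ k : ℤ, a ≤ k → k < b → |f (k + 1) - f k| ≤ 1)
    (hb : f b = f a + (b - a)) :
    ∀ k : ℤ, a ≤ k → k ≤ b → f k = f a + (k - a) := by
  have h := squeeze_int (fun k => -f k) a b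
    (fun k hk hk' => by rw [show -f (k+1) - -f k = -(f (k+1) - f k) by ring, abs_neg]; exact hlip k hk hk')
    (by push_cast; linarith)
  intro k hak hkb
  have := h k hak hkb
  push_cast at this ⊢
  linarith

end Squeeze
section Chain

variable [MeasurableSpace Ω] {P : Measure Ω} [IsProbabilityMeasure P] {Y : ℤ → Ω → ℝ}
  {N : ℕ} {ε : ℝ}

lemma marg_decomp (hS : ConditionS P N ε Y) (k : ℕ) (hk1 : 1 ≤ k) (hk2 : k ≤ N) :
    P {ω | Y 0 ω = (k:ℝ)}
      = P {ω | Y 0 ω = (k:ℝ) ∧ Y 1 ω = (k:ℝ) - 1}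
        + P {ω | Y 0 ω = (k:ℝ) ∧ Y 1 ω = (k:ℝ) + 1} := by
  obtain ⟨hst, hMC, hr, -, -, -, -, hzero⟩ := hS
  have hmeas := hMC.1
  have hBad1 : P {ω | ¬ ∃ j : ℕ, j ≤ N ∧ Y 1 ω = (j:ℝ)} = 0 :=
    ae_iff.mp (stat_range hst hmeas hr 1)
  have hBad2 : P (⋃ (j : ℕ), ⋃ (_ : j ≤ N ∧ (j = k ∨ 2 ≤ |(k:ℤ) - (j:ℤ)|)),
      {ω | Y 0 ω = (k:ℝ) ∧ Y 1 ω = (j:ℝ)}) = 0 := by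
    refine measure_iUnion_null fun j => measure_iUnion_null fun hj => ?_
    refine hzero k j hk2 hj.1 ?_
    rcases hj.2 with h | h
    · exact Or.inl ⟨h.symm, hk1⟩
    · exact Or.inr h
  have hsub : {ω | Y 0 ω = (k:ℝ)}
      ⊆ ({ω | Y 0 ω = (k:ℝ) ∧ Y 1 ω = (k:ℝ) - 1} ∪ {ω | Y 0 ω = (k:ℝ) ∧ Y 1 ω = (k:ℝ) + 1})
        ∪ ({ω | ¬ ∃ j : ℕ, j ≤ N ∧ Y 1 ω = (j:ℝ)}
          ∪ ⋃ (j : ℕ), ⋃ (_ : j ≤ N ∧ (j = k ∨ 2 ≤ |(k:ℤ) - (j:ℤ)|)),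
            {ω | Y 0 ω = (k:ℝ) ∧ Y 1 ω = (j:ℝ)}) := by
    intro ω h0
    by_cases hb : ∃ j : ℕ, j ≤ N ∧ Y 1 ω = (j:ℝ)
    · obtain ⟨j, hjN, hj⟩ := hb
      by_cases hc : j = k ∨ 2 ≤ |(k:ℤ) - (j:ℤ)|
      · refine Or.inr (Or.inr ?_)
        exact Set.mem_iUnion.mpr ⟨j, Set.mem_iUnion.mpr ⟨⟨hjN, hc⟩, ⟨h0, hj⟩⟩⟩
      · push_neg at hc
        have habs : |(k:ℤ) - (j:ℤ)| ≤ 1 := by omega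
        have := abs_le.mp habs
        have hcases : (j:ℤ) = (k:ℤ) - 1 ∨ (j:ℤ) = (k:ℤ) + 1 := by
          have hjk : (j:ℤ) ≠ (k:ℤ) := by exact_mod_cast fun h => hc.1 (by exact_mod_cast h)
          omega
        rcases hcases with h | h
        · refine Or.inl (Or.inl ⟨h0, ?_⟩)
          rw [hj]
          have h2 : ((j:ℤ):ℝ) = (((k:ℤ) - 1 : ℤ):ℝ) := by rw [h]
          push_cast at h2
          linarith
        · refine Or.inl (Or.inr ⟨h0, ?_⟩)
          rw [hj]
          have h2 : ((j:ℤ):ℝ) = (((k:ℤ) + 1 : ℤ):ℝ) := by rw [h]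
          push_cast at h2
          linarith
    · exact Or.inr (Or.inl hb)
  have hmU : MeasurableSet {ω | Y 0 ω = (k:ℝ) ∧ Y 1 ω = (k:ℝ) - 1} :=
    ((hmeas 0) (measurableSet_singleton ((k:ℝ)))).inter
      ((hmeas 1) (measurableSet_singleton ((k:ℝ) - 1)))
  have hmV : MeasurableSet {ω | Y 0 ω = (k:ℝ) ∧ Y 1 ω = (k:ℝ) + 1} :=
    ((hmeas 0) (measurableSet_singleton ((k:ℝ)))).inter
      ((hmeas 1) (measurableSet_singleton ((k:ℝ) + 1)))
  have hdisj : Disjoint {ω | Y 0 ω = (k:ℝ) ∧ Y 1 ω = (k:ℝ) - 1}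
      {ω | Y 0 ω = (k:ℝ) ∧ Y 1 ω = (k:ℝ) + 1} := by
    rw [Set.disjoint_left]
    rintro ω ⟨-, h1⟩ ⟨-, h2⟩
    rw [h1] at h2
    linarith
  have hle1 : P {ω | Y 0 ω = (k:ℝ)}
      ≤ P ({ω | Y 0 ω = (k:ℝ) ∧ Y 1 ω = (k:ℝ) - 1} ∪ {ω | Y 0 ω = (k:ℝ) ∧ Y 1 ω = (k:ℝ) + 1}) := by
    calc P {ω | Y 0 ω = (k:ℝ)} ≤ _ := measure_mono hsub
      _ ≤ _ + _ := measure_union_le _ _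
      _ = P ({ω | Y 0 ω = (k:ℝ) ∧ Y 1 ω = (k:ℝ) - 1}
          ∪ {ω | Y 0 ω = (k:ℝ) ∧ Y 1 ω = (k:ℝ) + 1}) := by
        rw [measure_union_null hBad1 hBad2, add_zero]
  have hle2 : P ({ω | Y 0 ω = (k:ℝ) ∧ Y 1 ω = (k:ℝ) - 1}
      ∪ {ω | Y 0 ω = (k:ℝ) ∧ Y 1 ω = (k:ℝ) + 1}) ≤ P {ω | Y 0 ω = (k:ℝ)} := by
    refine measure_mono ?_
    rintro ω (⟨h, -⟩ | ⟨h, -⟩) <;> exact h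
  rw [le_antisymm hle1 hle2, measure_union hdisj hmV]

end Chain

section Chain2

variable [MeasurableSpace Ω] {P : Measure Ω} [IsProbabilityMeasure P] {Y : ℤ → Ω → ℝ}
  {N : ℕ} {ε : ℝ}

lemma null_out_of_range (hS : ConditionS P N ε Y) {c : ℝ}
    (hc : ∀ i : ℕ, i ≤ N → (i:ℝ) ≠ c) : P {ω | Y 1 ω = c} = 0 := by
  obtain ⟨hst, hMC, hr, -⟩ := hS
  have hmeas := hMC.1
  refine measure_mono_null (fun ω h => ?_)
    (ae_iff.mp (stat_range hst hmeas hr 1))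
  simp only [Set.mem_setOf_eq] at h ⊢
  rintro ⟨i, hiN, hi⟩
  exact hc i hiN (by rw [← hi, h])

lemma marg_N_toReal (hS : ConditionS P N ε Y) (hN : 1 ≤ N) :
    (P {ω | Y 0 ω = (N:ℝ)}).toReal = ε^(2*N-1) := by
  have hd := marg_decomp hS N hN le_rfl
  have hV : P {ω | Y 0 ω = (N:ℝ) ∧ Y 1 ω = (N:ℝ) + 1} = 0 := by
    refine measure_mono_null (fun ω h => h.2) (null_out_of_range hS fun i hiN h => ?_)
    have : (i:ℝ) ≤ (N:ℝ) := by exact_mod_cast hiN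
    linarith
  rw [hd, hV, add_zero]
  exact hS.2.2.2.2.2.2.1

lemma pair_down_val (hS : ConditionS P N ε Y) (s : ℕ) (h1 : 1 ≤ s) (h2 : s + 1 ≤ N) :
    (P {ω | Y 0 ω = (s:ℝ) ∧ Y 1 ω = (s:ℝ) - 1}).toReal = ε^(2*s) :=
  (hS.2.2.2.2.1 s h1 (by omega)).2

lemma pair_up_val (hS : ConditionS P N ε Y) (s : ℕ) (h1 : 1 ≤ s) (h2 : s + 2 ≤ N) :
    (P {ω | Y 0 ω = (s:ℝ) ∧ Y 1 ω = (s:ℝ) + 1}).toReal = ε^(2*(s+1)) := by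
  have h := (hS.2.2.2.2.1 (s+1) (by omega) (by omega)).1
  have hset : {ω | Y 0 ω = ((s+1:ℕ):ℝ) - 1 ∧ Y 1 ω = ((s+1:ℕ):ℝ)}
      = {ω | Y 0 ω = (s:ℝ) ∧ Y 1 ω = (s:ℝ) + 1} := by
    ext ω
    push_cast
    constructor <;> rintro ⟨ha, hb⟩ <;> exact ⟨by linarith, by linarith⟩
  rwa [hset] at h

lemma pair_top_val (hS : ConditionS P N ε Y) (hN : 1 ≤ N) :
    (P {ω | Y 0 ω = ((N-1:ℕ):ℝ) ∧ Y 1 ω = ((N-1:ℕ):ℝ) + 1}).toReal = ε^(2*N-1) := by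
  have h := hS.2.2.2.2.2.1
  have hset : {ω | Y 0 ω = (N:ℝ) - 1 ∧ Y 1 ω = (N:ℝ)}
      = {ω | Y 0 ω = ((N-1:ℕ):ℝ) ∧ Y 1 ω = ((N-1:ℕ):ℝ) + 1} := by
    have hc : ((N-1:ℕ):ℝ) = (N:ℝ) - 1 := by
      push_cast [Nat.cast_sub hN]
      ring
    ext ω
    rw [hc]
    constructor <;> rintro ⟨ha, hb⟩ <;> exact ⟨by linarith, by linarith⟩
  rwa [hset] at h

lemma marg_sandwich (hS : ConditionS P N ε Y) (hε : 0 < ε) (hε3 : ε ≤ 1/3)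
    (s : ℕ) (h1 : 1 ≤ s) (h2 : s + 1 ≤ N) :
    ε^(2*s) ≤ (P {ω | Y 0 ω = (s:ℝ)}).toReal
      ∧ (P {ω | Y 0 ω = (s:ℝ)}).toReal ≤ (1+ε) * ε^(2*s) := by
  have hd := marg_decomp hS s h1 (by omega)
  have hdr : (P {ω | Y 0 ω = (s:ℝ)}).toReal
      = (P {ω | Y 0 ω = (s:ℝ) ∧ Y 1 ω = (s:ℝ) - 1}).toReal
        + (P {ω | Y 0 ω = (s:ℝ) ∧ Y 1 ω = (s:ℝ) + 1}).toReal := by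
    rw [hd, ENNReal.toReal_add (measure_ne_top P _) (measure_ne_top P _)]
  have hU := pair_down_val hS s h1 h2
  have hVle : (P {ω | Y 0 ω = (s:ℝ) ∧ Y 1 ω = (s:ℝ) + 1}).toReal ≤ ε^(2*s+1) := by
    rcases Nat.lt_or_ge (s+1) N with hcase | hcase
    · rw [pair_up_val hS s h1 (by omega)]
      have : ε^(2*(s+1)) ≤ ε^(2*s+1) :=
        pow_le_pow_of_le_one (le_of_lt hε) (by linarith) (by omega)
      exact this
    · have hsN : s = N - 1 := by omega
      have h := pair_top_val hS (by omega)
      rw [← hsN] at h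
      rw [h]
      have : 2*N-1 = 2*s+1 := by omega
      rw [this]
  have hV0 : (0:ℝ) ≤ (P {ω | Y 0 ω = (s:ℝ) ∧ Y 1 ω = (s:ℝ) + 1}).toReal :=
    ENNReal.toReal_nonneg
  constructor
  · rw [hdr, hU]; linarith
  · rw [hdr, hU]
    have : ε^(2*s+1) = ε^(2*s) * ε := by rw [pow_succ]
    nlinarith [pow_pos hε (2*s)]

end Chain2

section Chain3

variable [MeasurableSpace Ω] {P : Measure Ω} [IsProbabilityMeasure P] {Y : ℤ → Ω → ℝ}
  {N : ℕ} {ε : ℝ}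

lemma ae_lip (hS : ConditionS P N ε Y) :
    ∀ᵐ ω ∂P, ∀ k : ℤ, |Y (k+1) ω - Y k ω| ≤ 1 := by
  obtain ⟨hst, hMC, hr, -, -, -, -, hzero⟩ := hS
  have hmeas := hMC.1
  rw [ae_all_iff]
  intro k
  have h3 : ∀ᵐ ω ∂P, ∀ i j : ℕ, i ≤ N → j ≤ N → 2 ≤ |(i:ℤ) - (j:ℤ)| →
      ¬(Y k ω = (i:ℝ) ∧ Y (k+1) ω = (j:ℝ)) := by
    rw [ae_all_iff]
    intro i
    rw [ae_all_iff]
    intro j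
    by_cases hcond : i ≤ N ∧ j ≤ N ∧ 2 ≤ |(i:ℤ) - (j:ℤ)|
    · have h0 : P {ω | Y k ω = (i:ℝ) ∧ Y (k+1) ω = (j:ℝ)} = 0 := by
        rw [stat_pair hst hmeas k]
        exact hzero i j hcond.1 hcond.2.1 (Or.inr hcond.2.2)
      have := measure_eq_zero_iff_ae_notMem.mp h0
      filter_upwards [this] with ω hω
      intro _ _ _ hpair
      exact hω hpair
    · filter_upwards with ω hi hj habs hpair
      exact hcond ⟨hi, hj, habs⟩
  filter_upwards [stat_range hst hmeas hr k, stat_range hst hmeas hr (k+1), h3]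
    with ω hk hk1 h3ω
  obtain ⟨i, hiN, hi⟩ := hk
  obtain ⟨j, hjN, hj⟩ := hk1
  have hnot : ¬ 2 ≤ |(i:ℤ) - (j:ℤ)| := fun habs => h3ω i j hiN hjN habs ⟨hi, hj⟩
  have habs : |(j:ℤ) - (i:ℤ)| ≤ 1 := by
    rw [abs_sub_comm]
    have := not_le.mp hnot
    linarith
  have hr2 : (|((j:ℤ) - (i:ℤ))| : ℝ) ≤ 1 := by exact_mod_cast habs
  push_cast at hr2
  rw [hi, hj]
  exact hr2

lemma path_meas (v : ℕ → ℝ) (j : ℕ) {S : Set ℤ} (hsub : ∀ i : ℕ, i ≤ j → (i:ℤ) ∈ S) :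
    MeasurableSet[sigmaOf Y S] {ω | ∀ i : ℕ, i ≤ j → Y (i:ℤ) ω = v i} := by
  have h : {ω | ∀ i : ℕ, i ≤ j → Y (i:ℤ) ω = v i}
      = ⋂ (i : ℕ) (_ : i ∈ {i : ℕ | i ≤ j}), {ω | Y (i:ℤ) ω = v i} := by
    ext ω; simp
  rw [h]
  exact MeasurableSet.biInter (Set.to_countable _)
    fun i hi => measurableSet_sigmaOf (hsub i hi) _

lemma chain_step (hS : ConditionS P N ε Y) (v : ℕ → ℝ) (j : ℕ)
    (hC : P {ω | Y (j:ℤ) ω = v j} ≠ 0) :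
    (P {ω | ∀ i : ℕ, i ≤ j+1 → Y (i:ℤ) ω = v i}).toReal
      = (P {ω | ∀ i : ℕ, i ≤ j → Y (i:ℤ) ω = v i}).toReal
        * (P {ω | Y (j:ℤ) ω = v j ∧ Y ((j:ℤ)+1) ω = v (j+1)}).toReal
        / (P {ω | Y (j:ℤ) ω = v j}).toReal := by
  have hmeas := hS.2.1.1
  have hA : MeasurableSet[sigmaOf Y (Set.Iic (j:ℤ))] {ω | ∀ i : ℕ, i ≤ j → Y (i:ℤ) ω = v i} :=
    path_meas v j fun i hi => by simpa using (by exact_mod_cast hi : (i:ℤ) ≤ (j:ℤ))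
  have hB : MeasurableSet[sigmaOf Y (Set.Ici (j:ℤ))]
      {ω | Y (j:ℤ) ω = v j ∧ Y ((j:ℤ)+1) ω = v (j+1)} := by
    have h : {ω | Y (j:ℤ) ω = v j ∧ Y ((j:ℤ)+1) ω = v (j+1)}
        = {ω | Y (j:ℤ) ω = v j} ∩ {ω | Y ((j:ℤ)+1) ω = v (j+1)} := rfl
    rw [h]
    exact (measurableSet_sigmaOf (by simp) _).inter
      (measurableSet_sigmaOf (by simp) _)
  have hAc : {ω | ∀ i : ℕ, i ≤ j → Y (i:ℤ) ω = v i} ⊆ {ω | Y (j:ℤ) ω = v j} :=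
    fun ω hω => hω j le_rfl
  have hBc : {ω | Y (j:ℤ) ω = v j ∧ Y ((j:ℤ)+1) ω = v (j+1)} ⊆ {ω | Y (j:ℤ) ω = v j} :=
    fun ω hω => hω.1
  have hAB := markov_atom hmeas hS.2.1 (j:ℤ) (v j) hA hB hAc hBc hC
  have hset : {ω | ∀ i : ℕ, i ≤ j → Y (i:ℤ) ω = v i}
        ∩ {ω | Y (j:ℤ) ω = v j ∧ Y ((j:ℤ)+1) ω = v (j+1)}
      = {ω | ∀ i : ℕ, i ≤ j+1 → Y (i:ℤ) ω = v i} := by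
    ext ω
    simp only [Set.mem_inter_iff, Set.mem_setOf_eq]
    constructor
    · rintro ⟨h1, -, h2⟩ i hi
      rcases Nat.lt_or_ge i (j+1) with h | h
      · exact h1 i (by omega)
      · have : i = j + 1 := by omega
        subst this
        have : ((j+1:ℕ):ℤ) = (j:ℤ)+1 := by push_cast; ring
        rw [this]
        exact h2
    · intro h
      refine ⟨fun i hi => h i (by omega), h j (by omega), ?_⟩
      have hc : ((j+1:ℕ):ℤ) = (j:ℤ)+1 := by push_cast; ring
      rw [← hc]
      exact h (j+1) le_rfl
  rw [← hset]
  exact hAB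

lemma mul_div_bounds {a pnum pden q1 q2 : ℝ} (ha : 0 ≤ a) (hden : 0 < pden)
    (hq1 : q1 * pden ≤ pnum) (hq2 : pnum ≤ q2 * pden) :
    a * q1 ≤ a * pnum / pden ∧ a * pnum / pden ≤ a * q2 := by
  constructor
  · rw [le_div_iff₀ hden]
    nlinarith
  · rw [div_le_iff₀ hden]
    nlinarith

end Chain3

section Chain4

variable [MeasurableSpace Ω] {P : Measure Ω} [IsProbabilityMeasure P] {Y : ℤ → Ω → ℝ}
  {N : ℕ} {ε : ℝ}

lemma marg_pos (hS : ConditionS P N ε Y) (hε : 0 < ε) (hε3 : ε ≤ 1/3)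
    (s : ℕ) (h1 : 1 ≤ s) (h2 : s + 1 ≤ N) :
    P {ω | Y 0 ω = (s:ℝ)} ≠ 0 := by
  intro h0
  have := (marg_sandwich hS hε hε3 s h1 h2).1
  rw [h0] at this
  simp only [ENNReal.toReal_zero] at this
  nlinarith [pow_pos hε (2*s)]

lemma down_bounds (hS : ConditionS P N ε Y) (hε : 0 < ε) (hε3 : ε ≤ 1/3) :
    ∀ j : ℕ, 1 ≤ j → j + 1 ≤ N →
      ε^(2*N-1) * ((1+ε)⁻¹)^(j-1)
          ≤ (P {ω | ∀ i : ℕ, i ≤ j → Y (i:ℤ) ω = (N:ℝ) - i}).toReal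
      ∧ (P {ω | ∀ i : ℕ, i ≤ j → Y (i:ℤ) ω = (N:ℝ) - i}).toReal ≤ ε^(2*N-1) := by
  have hst := hS.1
  have hmeas := hS.2.1.1
  have h1ε : (0:ℝ) < 1 + ε := by linarith
  intro j
  induction j with
  | zero => omega
  | succ j ih =>
    intro _ hjN
    by_cases hj0 : j = 0
    · subst hj0
      have hset : {ω | ∀ i : ℕ, i ≤ 0 + 1 → Y (i:ℤ) ω = (N:ℝ) - i}
          = {ω | Y 0 ω = (N:ℝ) ∧ Y 1 ω = (N:ℝ) - 1} := by
        ext ω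
        simp only [Set.mem_setOf_eq, zero_add]
        constructor
        · intro h
          have h0 := h 0 (by omega)
          have h1 := h 1 le_rfl
          norm_num at h0 h1
          exact ⟨h0, h1⟩
        · rintro ⟨h0, h1⟩ i hi
          interval_cases i
          · norm_num
            exact h0
          · norm_num
            exact h1
      rw [hset, hS.2.2.2.2.2.2.1]
      norm_num
    · have hj1 : 1 ≤ j := by omega
      obtain ⟨ih1, ih2⟩ := ih hj1 (by omega)
      have hjN' : j + 1 ≤ N := by omega
      have hcast : ((N-j:ℕ):ℝ) = (N:ℝ) - j := by
        push_cast [Nat.cast_sub (by omega : j ≤ N)]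
        ring
      -- atom positivity
      have hC : P {ω | Y (j:ℤ) ω = (N:ℝ) - (j:ℝ)} ≠ 0 := by
        rw [show (N:ℝ) - (j:ℝ) = ((N-j:ℕ):ℝ) from hcast.symm,
          stat_single hst hmeas (j:ℤ) _]
        exact marg_pos hS hε hε3 (N-j) (by omega) (by omega)
      have hrec : (P {ω | ∀ i : ℕ, i ≤ j+1 → Y (i:ℤ) ω = (N:ℝ) - i}).toReal
          = (P {ω | ∀ i : ℕ, i ≤ j → Y (i:ℤ) ω = (N:ℝ) - i}).toReal
            * (P {ω | Y (j:ℤ) ω = (N:ℝ) - (j:ℝ) ∧ Y ((j:ℤ)+1) ω = (N:ℝ) - ((j+1:ℕ):ℝ)}).toReal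
            / (P {ω | Y (j:ℤ) ω = (N:ℝ) - (j:ℝ)}).toReal :=
        chain_step hS (fun i : ℕ => (N:ℝ) - i) j hC
      -- pair value
      have hpair : (P {ω | Y (j:ℤ) ω = (N:ℝ) - (j:ℝ) ∧ Y ((j:ℤ)+1) ω = (N:ℝ) - ((j+1:ℕ):ℝ)}).toReal
          = ε^(2*(N-j)) := by
        rw [stat_pair hst hmeas (j:ℤ)]
        have hset2 : {ω | Y 0 ω = (N:ℝ) - (j:ℝ) ∧ Y 1 ω = (N:ℝ) - ((j+1:ℕ):ℝ)}
            = {ω | Y 0 ω = ((N-j:ℕ):ℝ) ∧ Y 1 ω = ((N-j:ℕ):ℝ) - 1} := by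
          rw [hcast]
          ext ω
          push_cast
          constructor <;> rintro ⟨ha, hb⟩ <;> exact ⟨by linarith, by linarith⟩
        rw [hset2]
        exact pair_down_val hS (N-j) (by omega) (by omega)
      -- marginal sandwich
      have hmargR : P {ω | Y (j:ℤ) ω = (N:ℝ) - (j:ℝ)} = P {ω | Y 0 ω = ((N-j:ℕ):ℝ)} := by
        rw [show (N:ℝ) - (j:ℝ) = ((N-j:ℕ):ℝ) from hcast.symm, stat_single hst hmeas (j:ℤ) _]
      obtain ⟨hs1, hs2⟩ := marg_sandwich hS hε hε3 (N-j) (by omega) (by omega)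
      have hden_pos : 0 < (P {ω | Y (j:ℤ) ω = (N:ℝ) - (j:ℝ)}).toReal := by
        rw [hmargR]
        calc (0:ℝ) < ε^(2*(N-j)) := pow_pos hε _
          _ ≤ _ := hs1
      have ha0 : 0 ≤ (P {ω | ∀ i : ℕ, i ≤ j → Y (i:ℤ) ω = (N:ℝ) - i}).toReal :=
        ENNReal.toReal_nonneg
      have hq := mul_div_bounds (a := (P {ω | ∀ i : ℕ, i ≤ j → Y (i:ℤ) ω = (N:ℝ) - i}).toReal)
        (pnum := (P {ω | Y (j:ℤ) ω = (N:ℝ) - (j:ℝ) ∧ Y ((j:ℤ)+1) ω = (N:ℝ) - ((j+1:ℕ):ℝ)}).toReal)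
        (pden := (P {ω | Y (j:ℤ) ω = (N:ℝ) - (j:ℝ)}).toReal)
        (q1 := (1+ε)⁻¹) (q2 := 1) ha0 hden_pos
        (by rw [hpair, hmargR]
            rw [inv_mul_le_iff₀ h1ε]
            calc (P {ω | Y 0 ω = ((N-j:ℕ):ℝ)}).toReal ≤ (1+ε) * ε^(2*(N-j)) := hs2
              _ = (1+ε) * ε^(2*(N-j)) := rfl)
        (by rw [hpair, hmargR, one_mul]
            exact hs1)
      constructor
      · calc ε^(2*N-1) * ((1+ε)⁻¹)^(j+1-1)
            = (ε^(2*N-1) * ((1+ε)⁻¹)^(j-1)) * (1+ε)⁻¹ := by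
              rw [mul_assoc, ← pow_succ]
              congr 2
              omega
          _ ≤ (P {ω | ∀ i : ℕ, i ≤ j → Y (i:ℤ) ω = (N:ℝ) - i}).toReal * (1+ε)⁻¹ := by
              apply mul_le_mul_of_nonneg_right ih1
              positivity
          _ ≤ _ := by rw [hrec]; exact hq.1
      · calc (P {ω | ∀ i : ℕ, i ≤ j+1 → Y (i:ℤ) ω = (N:ℝ) - i}).toReal
            ≤ (P {ω | ∀ i : ℕ, i ≤ j → Y (i:ℤ) ω = (N:ℝ) - i}).toReal * 1 := by
              rw [hrec]; exact hq.2
          _ ≤ ε^(2*N-1) := by rw [mul_one]; exact ih2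

end Chain4

section Chain5

variable [MeasurableSpace Ω] {P : Measure Ω} [IsProbabilityMeasure P] {Y : ℤ → Ω → ℝ}
  {N : ℕ} {ε : ℝ}

lemma up_mid (hS : ConditionS P N ε Y) (hε : 0 < ε) (hε3 : ε ≤ 1/3)
    {m : ℕ} (hm2 : 2*m < N) :
    ∀ j : ℕ, 1 ≤ j → j + 1 ≤ m →
      ε^(2*(N-m+j)) * ((1+ε)⁻¹)^(j-1)
          ≤ (P {ω | ∀ i : ℕ, i ≤ j → Y (i:ℤ) ω = (N:ℝ) - m + i}).toReal
      ∧ (P {ω | ∀ i : ℕ, i ≤ j → Y (i:ℤ) ω = (N:ℝ) - m + i}).toReal ≤ ε^(2*(N-m+j)) := by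
  have hst := hS.1
  have hmeas := hS.2.1.1
  have h1ε : (0:ℝ) < 1 + ε := by linarith
  have hmN : m ≤ N := by omega
  have hcastNm : ((N-m:ℕ):ℝ) = (N:ℝ) - m := by
    push_cast [Nat.cast_sub hmN]; ring
  intro j
  induction j with
  | zero => omega
  | succ j ih =>
    intro _ hjm
    by_cases hj0 : j = 0
    · subst hj0
      have hset : {ω | ∀ i : ℕ, i ≤ 0 + 1 → Y (i:ℤ) ω = (N:ℝ) - m + i}
          = {ω | Y 0 ω = ((N-m:ℕ):ℝ) ∧ Y 1 ω = ((N-m:ℕ):ℝ) + 1} := by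
        ext ω
        simp only [Set.mem_setOf_eq, zero_add, hcastNm]
        constructor
        · intro h
          have h0 := h 0 (by omega)
          have h1 := h 1 le_rfl
          norm_num at h0 h1
          exact ⟨h0, h1⟩
        · rintro ⟨h0, h1⟩ i hi
          interval_cases i
          · norm_num; exact h0
          · norm_num; exact h1
      rw [hset, pair_up_val hS (N-m) (by omega) (by omega)]
      constructor
      · rw [show (0+1-1:ℕ) = 0 from rfl, pow_zero, mul_one]
      · apply le_of_eq
        congr 1
        try omega
    · have hj1 : 1 ≤ j := by omega
      obtain ⟨ih1, ih2⟩ := ih hj1 (by omega)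
      have hcast : ((N-m+j:ℕ):ℝ) = (N:ℝ) - m + j := by
        push_cast [Nat.cast_sub hmN]; ring
      have hC : P {ω | Y (j:ℤ) ω = (N:ℝ) - m + (j:ℝ)} ≠ 0 := by
        rw [show (N:ℝ) - m + (j:ℝ) = ((N-m+j:ℕ):ℝ) from hcast.symm,
          stat_single hst hmeas (j:ℤ) _]
        exact marg_pos hS hε hε3 (N-m+j) (by omega) (by omega)
      have hrec : (P {ω | ∀ i : ℕ, i ≤ j+1 → Y (i:ℤ) ω = (N:ℝ) - m + i}).toReal
          = (P {ω | ∀ i : ℕ, i ≤ j → Y (i:ℤ) ω = (N:ℝ) - m + i}).toReal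
            * (P {ω | Y (j:ℤ) ω = (N:ℝ) - m + (j:ℝ)
                ∧ Y ((j:ℤ)+1) ω = (N:ℝ) - m + ((j+1:ℕ):ℝ)}).toReal
            / (P {ω | Y (j:ℤ) ω = (N:ℝ) - m + (j:ℝ)}).toReal :=
        chain_step hS (fun i : ℕ => (N:ℝ) - m + i) j hC
      have hpair : (P {ω | Y (j:ℤ) ω = (N:ℝ) - m + (j:ℝ)
            ∧ Y ((j:ℤ)+1) ω = (N:ℝ) - m + ((j+1:ℕ):ℝ)}).toReal
          = ε^(2*(N-m+j+1)) := by
        rw [stat_pair hst hmeas (j:ℤ)]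
        have hset2 : {ω | Y 0 ω = (N:ℝ) - m + (j:ℝ) ∧ Y 1 ω = (N:ℝ) - m + ((j+1:ℕ):ℝ)}
            = {ω | Y 0 ω = ((N-m+j:ℕ):ℝ) ∧ Y 1 ω = ((N-m+j:ℕ):ℝ) + 1} := by
          rw [hcast]
          ext ω
          push_cast
          constructor <;> rintro ⟨ha, hb⟩ <;> exact ⟨by linarith, by linarith⟩
        rw [hset2, pair_up_val hS (N-m+j) (by omega) (by omega)]
      have hmargR : P {ω | Y (j:ℤ) ω = (N:ℝ) - m + (j:ℝ)} = P {ω | Y 0 ω = ((N-m+j:ℕ):ℝ)} := by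
        rw [show (N:ℝ) - m + (j:ℝ) = ((N-m+j:ℕ):ℝ) from hcast.symm, stat_single hst hmeas (j:ℤ) _]
      obtain ⟨hs1, hs2⟩ := marg_sandwich hS hε hε3 (N-m+j) (by omega) (by omega)
      have hden_pos : 0 < (P {ω | Y (j:ℤ) ω = (N:ℝ) - m + (j:ℝ)}).toReal := by
        rw [hmargR]
        calc (0:ℝ) < ε^(2*(N-m+j)) := pow_pos hε _
          _ ≤ _ := hs1
      have ha0 : 0 ≤ (P {ω | ∀ i : ℕ, i ≤ j → Y (i:ℤ) ω = (N:ℝ) - m + i}).toReal :=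
        ENNReal.toReal_nonneg
      have hq := mul_div_bounds
        (a := (P {ω | ∀ i : ℕ, i ≤ j → Y (i:ℤ) ω = (N:ℝ) - m + i}).toReal)
        (pnum := (P {ω | Y (j:ℤ) ω = (N:ℝ) - m + (j:ℝ)
            ∧ Y ((j:ℤ)+1) ω = (N:ℝ) - m + ((j+1:ℕ):ℝ)}).toReal)
        (pden := (P {ω | Y (j:ℤ) ω = (N:ℝ) - m + (j:ℝ)}).toReal)
        (q1 := ε^2 * (1+ε)⁻¹) (q2 := ε^2) ha0 hden_pos
        (by rw [hpair, hmargR]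
            have e : ε^(2*(N-m+j+1)) = ε^2 * ε^(2*(N-m+j)) := by
              rw [← pow_add]; congr 1; omega
            rw [e, mul_assoc]
            apply mul_le_mul_of_nonneg_left _ (by positivity : (0:ℝ) ≤ ε^2)
            rw [inv_mul_le_iff₀ h1ε]
            exact hs2.trans_eq rfl)
        (by rw [hpair, hmargR]
            have e : ε^(2*(N-m+j+1)) = ε^2 * ε^(2*(N-m+j)) := by
              rw [← pow_add]; congr 1; omega
            rw [e]
            exact mul_le_mul_of_nonneg_left hs1 (by positivity))
      constructor
      · calc ε^(2*(N-m+(j+1))) * ((1+ε)⁻¹)^(j+1-1)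
            = (ε^(2*(N-m+j)) * ((1+ε)⁻¹)^(j-1)) * (ε^2 * (1+ε)⁻¹) := by
              rw [show 2*(N-m+(j+1)) = 2*(N-m+j) + 2 from by omega, pow_add,
                show j+1-1 = (j-1) + 1 from by omega, pow_succ]
              ring
          _ ≤ (P {ω | ∀ i : ℕ, i ≤ j → Y (i:ℤ) ω = (N:ℝ) - m + i}).toReal * (ε^2 * (1+ε)⁻¹) := by
              apply mul_le_mul_of_nonneg_right ih1
              positivity
          _ ≤ _ := by rw [hrec]; exact hq.1
      · calc (P {ω | ∀ i : ℕ, i ≤ j+1 → Y (i:ℤ) ω = (N:ℝ) - m + i}).toReal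
            ≤ (P {ω | ∀ i : ℕ, i ≤ j → Y (i:ℤ) ω = (N:ℝ) - m + i}).toReal * ε^2 := by
              rw [hrec]; exact hq.2
          _ ≤ ε^(2*(N-m+j)) * ε^2 := mul_le_mul_of_nonneg_right ih2 (by positivity)
          _ = ε^(2*(N-m+(j+1))) := by
              rw [← pow_add]
              congr 1
              try omega

end Chain5

section Chain6

variable [MeasurableSpace Ω] {P : Measure Ω} [IsProbabilityMeasure P] {Y : ℤ → Ω → ℝ}
  {N : ℕ} {ε : ℝ}

lemma up_final (hS : ConditionS P N ε Y) (hε : 0 < ε) (hε3 : ε ≤ 1/3)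
    {m : ℕ} (hm1 : 1 ≤ m) (hm2 : 2*m < N) :
    ε^(2*N-1) * ((1+ε)⁻¹)^(m-1)
        ≤ (P {ω | ∀ i : ℕ, i ≤ m → Y (i:ℤ) ω = (N:ℝ) - m + i}).toReal
    ∧ (P {ω | ∀ i : ℕ, i ≤ m → Y (i:ℤ) ω = (N:ℝ) - m + i}).toReal ≤ ε^(2*N-1) := by
  have hst := hS.1
  have hmeas := hS.2.1.1
  have h1ε : (0:ℝ) < 1 + ε := by linarith
  have hmN : m ≤ N := by omega
  have hN1 : 1 ≤ N := by omega
  have hcastN1 : ((N-1:ℕ):ℝ) = (N:ℝ) - 1 := by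
    push_cast [Nat.cast_sub hN1]; ring
  by_cases hm : m = 1
  · subst hm
    simp only [Nat.cast_one]
    have hset : {ω | ∀ i : ℕ, i ≤ 1 → Y (i:ℤ) ω = (N:ℝ) - 1 + i}
        = {ω | Y 0 ω = ((N-1:ℕ):ℝ) ∧ Y 1 ω = ((N-1:ℕ):ℝ) + 1} := by
      ext ω
      simp only [Set.mem_setOf_eq, hcastN1]
      constructor
      · intro h
        have h0 := h 0 (by omega)
        have h1 := h 1 le_rfl
        norm_num at h0 h1
        exact ⟨h0, by rw [h1]; ring⟩
      · rintro ⟨h0, h1⟩ i hi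
        interval_cases i
        · norm_num; exact h0
        · norm_num; rw [h1]; ring
    rw [hset, pair_top_val hS hN1]
    norm_num
  · have hm2' : 2 ≤ m := by omega
    obtain ⟨ih1, ih2⟩ := up_mid hS hε hε3 hm2 (m-1) (by omega) (by omega)
    have hsNm : N - m + (m-1) = N - 1 := by omega
    rw [hsNm] at ih1 ih2
    rw [show m-1-1 = m-2 from by omega] at ih1
    have hcast : ((N-1:ℕ):ℝ) = (N:ℝ) - m + ((m-1:ℕ):ℝ) := by
      push_cast [Nat.cast_sub hN1, Nat.cast_sub hm1, Nat.cast_sub hmN]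
      ring
    have hC : P {ω | Y ((m-1:ℕ):ℤ) ω = (N:ℝ) - m + ((m-1:ℕ):ℝ)} ≠ 0 := by
      rw [show (N:ℝ) - m + ((m-1:ℕ):ℝ) = ((N-1:ℕ):ℝ) from hcast.symm,
        stat_single hst hmeas _ _]
      exact marg_pos hS hε hε3 (N-1) (by omega) (by omega)
    have hrec : (P {ω | ∀ i : ℕ, i ≤ (m-1)+1 → Y (i:ℤ) ω = (N:ℝ) - m + i}).toReal
        = (P {ω | ∀ i : ℕ, i ≤ m-1 → Y (i:ℤ) ω = (N:ℝ) - m + i}).toReal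
          * (P {ω | Y ((m-1:ℕ):ℤ) ω = (N:ℝ) - m + ((m-1:ℕ):ℝ)
              ∧ Y (((m-1:ℕ):ℤ)+1) ω = (N:ℝ) - m + ((m-1+1:ℕ):ℝ)}).toReal
          / (P {ω | Y ((m-1:ℕ):ℤ) ω = (N:ℝ) - m + ((m-1:ℕ):ℝ)}).toReal :=
      chain_step hS (fun i : ℕ => (N:ℝ) - m + i) (m-1) hC
    rw [show m - 1 + 1 = m from by omega] at hrec
    have hpair : (P {ω | Y ((m-1:ℕ):ℤ) ω = (N:ℝ) - m + ((m-1:ℕ):ℝ)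
          ∧ Y (((m-1:ℕ):ℤ)+1) ω = (N:ℝ) - m + (m:ℝ)}).toReal
        = ε^(2*N-1) := by
      rw [stat_pair hst hmeas _]
      have hset2 : {ω | Y 0 ω = (N:ℝ) - m + ((m-1:ℕ):ℝ) ∧ Y 1 ω = (N:ℝ) - m + (m:ℝ)}
          = {ω | Y 0 ω = ((N-1:ℕ):ℝ) ∧ Y 1 ω = ((N-1:ℕ):ℝ) + 1} := by
        rw [hcastN1]
        ext ω
        push_cast [Nat.cast_sub hm1, Nat.cast_sub hmN]
        constructor <;> rintro ⟨ha, hb⟩ <;> exact ⟨by linarith, by linarith⟩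
      rw [hset2, pair_top_val hS hN1]
    have hmargR : P {ω | Y ((m-1:ℕ):ℤ) ω = (N:ℝ) - m + ((m-1:ℕ):ℝ)}
        = P {ω | Y 0 ω = ((N-1:ℕ):ℝ)} := by
      rw [show (N:ℝ) - m + ((m-1:ℕ):ℝ) = ((N-1:ℕ):ℝ) from hcast.symm,
        stat_single hst hmeas _ _]
    obtain ⟨hs1, hs2⟩ := marg_sandwich hS hε hε3 (N-1) (by omega) (by omega)
    have hden_pos : 0 < (P {ω | Y ((m-1:ℕ):ℤ) ω = (N:ℝ) - m + ((m-1:ℕ):ℝ)}).toReal := by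
      rw [hmargR]
      calc (0:ℝ) < ε^(2*(N-1)) := pow_pos hε _
        _ ≤ _ := hs1
    have ha0 : 0 ≤ (P {ω | ∀ i : ℕ, i ≤ m-1 → Y (i:ℤ) ω = (N:ℝ) - m + i}).toReal :=
      ENNReal.toReal_nonneg
    have heps : ε^(2*N-1) = ε * ε^(2*(N-1)) := by
      rw [← pow_succ']
      congr 1
      omega
    have hq := mul_div_bounds
      (a := (P {ω | ∀ i : ℕ, i ≤ m-1 → Y (i:ℤ) ω = (N:ℝ) - m + i}).toReal)
      (pnum := (P {ω | Y ((m-1:ℕ):ℤ) ω = (N:ℝ) - m + ((m-1:ℕ):ℝ)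
          ∧ Y (((m-1:ℕ):ℤ)+1) ω = (N:ℝ) - m + (m:ℝ)}).toReal)
      (pden := (P {ω | Y ((m-1:ℕ):ℤ) ω = (N:ℝ) - m + ((m-1:ℕ):ℝ)}).toReal)
      (q1 := ε * (1+ε)⁻¹) (q2 := ε) ha0 hden_pos
      (by rw [hpair, hmargR, heps, mul_assoc]
          apply mul_le_mul_of_nonneg_left _ (le_of_lt hε)
          rw [inv_mul_le_iff₀ h1ε]
          exact hs2)
      (by rw [hpair, hmargR, heps]
          exact mul_le_mul_of_nonneg_left hs1 (le_of_lt hε))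
    constructor
    · calc ε^(2*N-1) * ((1+ε)⁻¹)^(m-1)
          = (ε^(2*(N-1)) * ((1+ε)⁻¹)^(m-2)) * (ε * (1+ε)⁻¹) := by
            rw [heps, show m-1 = (m-2)+1 from by omega, pow_succ]
            ring
        _ ≤ (P {ω | ∀ i : ℕ, i ≤ m-1 → Y (i:ℤ) ω = (N:ℝ) - m + i}).toReal * (ε * (1+ε)⁻¹) := by
            apply mul_le_mul_of_nonneg_right ih1
            positivity
        _ ≤ _ := by rw [hrec]; exact hq.1
    · calc (P {ω | ∀ i : ℕ, i ≤ m → Y (i:ℤ) ω = (N:ℝ) - m + i}).toReal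
          ≤ (P {ω | ∀ i : ℕ, i ≤ m-1 → Y (i:ℤ) ω = (N:ℝ) - m + i}).toReal * ε := by
            rw [hrec]; exact hq.2
        _ ≤ ε^(2*(N-1)) * ε := mul_le_mul_of_nonneg_right ih2 (le_of_lt hε)
        _ = ε^(2*N-1) := by
            rw [← pow_succ]
            congr 1
            omega

end Chain6

section Chain7

variable [MeasurableSpace Ω] {P : Measure Ω} [IsProbabilityMeasure P] {Y : ℤ → Ω → ℝ}
  {N : ℕ} {ε : ℝ}

lemma path_meas' (idx : ℕ → ℤ) (v : ℕ → ℝ) (j : ℕ) {S : Set ℤ}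
    (hsub : ∀ i : ℕ, i ≤ j → idx i ∈ S) :
    MeasurableSet[sigmaOf Y S] {ω | ∀ i : ℕ, i ≤ j → Y (idx i) ω = v i} := by
  have h : {ω | ∀ i : ℕ, i ≤ j → Y (idx i) ω = v i}
      = ⋂ (i : ℕ) (_ : i ∈ {i : ℕ | i ≤ j}), {ω | Y (idx i) ω = v i} := by
    ext ω; simp
  rw [h]
  exact MeasurableSet.biInter (Set.to_countable _)
    fun i hi => measurableSet_sigmaOf (hsub i hi) _

lemma T_eq_paths (hS : ConditionS P N ε Y) {m : ℕ} (hm1 : 1 ≤ m) (hm2 : 2*m < N) :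
    P {ω | Y 0 ω = (N:ℝ) ∧ Y (-(m:ℤ)) ω = ((N-m:ℕ):ℝ) ∧ Y (m:ℤ) ω = ((N-m:ℕ):ℝ)}
      = P ({ω | ∀ i : ℕ, i ≤ m → Y ((i:ℤ) - (m:ℤ)) ω = (N:ℝ) - m + i}
          ∩ {ω | ∀ i : ℕ, i ≤ m → Y (i:ℤ) ω = (N:ℝ) - i}) := by
  have hmN : m ≤ N := by omega
  have hcast : ((N-m:ℕ):ℝ) = (N:ℝ) - m := by
    push_cast [Nat.cast_sub hmN]; ring
  have hL : P {ω | ¬ ∀ k : ℤ, |Y (k+1) ω - Y k ω| ≤ 1} = 0 := ae_iff.mp (ae_lip hS)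
  have hsub1 : {ω | ∀ i : ℕ, i ≤ m → Y ((i:ℤ) - (m:ℤ)) ω = (N:ℝ) - m + i}
        ∩ {ω | ∀ i : ℕ, i ≤ m → Y (i:ℤ) ω = (N:ℝ) - i}
      ⊆ {ω | Y 0 ω = (N:ℝ) ∧ Y (-(m:ℤ)) ω = ((N-m:ℕ):ℝ) ∧ Y (m:ℤ) ω = ((N-m:ℕ):ℝ)} := by
    rintro ω ⟨hA, hB⟩
    refine ⟨?_, ?_, ?_⟩
    · have := hB 0 (by omega)
      norm_num at this
      exact this
    · have := hA 0 (by omega)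
      norm_num at this
      rw [hcast]
      exact this
    · have := hB m le_rfl
      rw [hcast]
      exact this
  have hsub2 : {ω | Y 0 ω = (N:ℝ) ∧ Y (-(m:ℤ)) ω = ((N-m:ℕ):ℝ) ∧ Y (m:ℤ) ω = ((N-m:ℕ):ℝ)}
      ⊆ ({ω | ∀ i : ℕ, i ≤ m → Y ((i:ℤ) - (m:ℤ)) ω = (N:ℝ) - m + i}
          ∩ {ω | ∀ i : ℕ, i ≤ m → Y (i:ℤ) ω = (N:ℝ) - i})
        ∪ {ω | ¬ ∀ k : ℤ, |Y (k+1) ω - Y k ω| ≤ 1} := by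
    rintro ω ⟨h0, hneg, hpos⟩
    by_cases hlip : ∀ k : ℤ, |Y (k+1) ω - Y k ω| ≤ 1
    · left
      have hdown := squeeze_int (fun k => Y k ω) 0 (m:ℤ)
        (fun k _ _ => hlip k)
        (by rw [hpos, h0, hcast]
            push_cast
            ring)
      have hup := squeeze_int_up (fun k => Y k ω) (-(m:ℤ)) 0
        (fun k _ _ => hlip k)
        (by rw [h0, hneg, hcast]
            push_cast
            ring)
      constructor
      · intro i hi
        have h := hup ((i:ℤ) - (m:ℤ)) (by omega) (by omega)
        rw [h, hneg, hcast]
        push_cast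
        ring
      · intro i hi
        have h := hdown (i:ℤ) (by omega) (by exact_mod_cast hi)
        rw [h, h0]
        push_cast
        ring
    · right
      exact hlip
  refine le_antisymm ?_ (measure_mono hsub1)
  calc P {ω | Y 0 ω = (N:ℝ) ∧ Y (-(m:ℤ)) ω = ((N-m:ℕ):ℝ) ∧ Y (m:ℤ) ω = ((N-m:ℕ):ℝ)}
      ≤ P (({ω | ∀ i : ℕ, i ≤ m → Y ((i:ℤ) - (m:ℤ)) ω = (N:ℝ) - m + i}
          ∩ {ω | ∀ i : ℕ, i ≤ m → Y (i:ℤ) ω = (N:ℝ) - i})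
        ∪ {ω | ¬ ∀ k : ℤ, |Y (k+1) ω - Y k ω| ≤ 1}) := measure_mono hsub2
    _ ≤ P ({ω | ∀ i : ℕ, i ≤ m → Y ((i:ℤ) - (m:ℤ)) ω = (N:ℝ) - m + i}
          ∩ {ω | ∀ i : ℕ, i ≤ m → Y (i:ℤ) ω = (N:ℝ) - i})
        + P {ω | ¬ ∀ k : ℤ, |Y (k+1) ω - Y k ω| ≤ 1} := measure_union_le _ _
    _ = _ := by rw [hL, add_zero]

lemma main_bounds (hS : ConditionS P N ε Y) (hε : 0 < ε) (hε3 : ε ≤ 1/3)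
    (hN : 3 ≤ N) {m : ℕ} (hm1 : 1 ≤ m) (hm2 : 2*m < N) :
    ε^(2*N-1) * ((1+ε)⁻¹)^(2*(m-1))
        ≤ (P {ω | Y 0 ω = (N:ℝ) ∧ Y (-(m:ℤ)) ω = ((N-m:ℕ):ℝ) ∧ Y (m:ℤ) ω = ((N-m:ℕ):ℝ)}).toReal
    ∧ (P {ω | Y 0 ω = (N:ℝ) ∧ Y (-(m:ℤ)) ω = ((N-m:ℕ):ℝ) ∧ Y (m:ℤ) ω = ((N-m:ℕ):ℝ)}).toReal
        ≤ ε^(2*N-1) := by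
  have hst := hS.1
  have hmeas := hS.2.1.1
  have h1ε : (0:ℝ) < 1 + ε := by linarith
  have hmN : m ≤ N := by omega
  have hcast : ((N-m:ℕ):ℝ) = (N:ℝ) - m := by
    push_cast [Nat.cast_sub hmN]; ring
  have hTeq := T_eq_paths hS hm1 hm2
  -- Markov at time 0
  have hC0 : P {ω | Y (0:ℤ) ω = (N:ℝ)} ≠ 0 := by
    intro h
    have := marg_N_toReal hS (by omega)
    rw [h] at this
    simp only [ENNReal.toReal_zero] at this
    nlinarith [pow_pos hε (2*N-1)]
  have hA : MeasurableSet[sigmaOf Y (Set.Iic (0:ℤ))]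
      {ω | ∀ i : ℕ, i ≤ m → Y ((i:ℤ) - (m:ℤ)) ω = (N:ℝ) - m + i} :=
    path_meas' (fun i => (i:ℤ) - (m:ℤ)) _ m fun i hi => by
      simp only [Set.mem_Iic]
      omega
  have hB : MeasurableSet[sigmaOf Y (Set.Ici (0:ℤ))]
      {ω | ∀ i : ℕ, i ≤ m → Y (i:ℤ) ω = (N:ℝ) - i} :=
    path_meas' (fun i => (i:ℤ)) _ m fun i hi => by
      simp only [Set.mem_Ici]
      omega
  have hAc : {ω | ∀ i : ℕ, i ≤ m → Y ((i:ℤ) - (m:ℤ)) ω = (N:ℝ) - m + i}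
      ⊆ {ω | Y (0:ℤ) ω = (N:ℝ)} := by
    intro ω hω
    have := hω m le_rfl
    rw [sub_self] at this
    rw [Set.mem_setOf_eq, this]
    ring
  have hBc : {ω | ∀ i : ℕ, i ≤ m → Y (i:ℤ) ω = (N:ℝ) - i} ⊆ {ω | Y (0:ℤ) ω = (N:ℝ)} := by
    intro ω hω
    have := hω 0 (by omega)
    norm_num at this
    exact this
  have hM := markov_atom hmeas hS.2.1 0 (N:ℝ) hA hB hAc hBc hC0
  -- identify the three factors
  have hApath : P {ω | ∀ i : ℕ, i ≤ m → Y ((i:ℤ) - (m:ℤ)) ω = (N:ℝ) - m + i}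
      = P {ω | ∀ i : ℕ, i ≤ m → Y (i:ℤ) ω = (N:ℝ) - m + i} :=
    stat_path hst hmeas (fun i => (N:ℝ) - m + i)
  obtain ⟨hu1, hu2⟩ := up_final hS hε hε3 hm1 hm2
  obtain ⟨hd1, hd2⟩ := down_bounds hS hε hε3 m hm1 (by omega)
  have hπ := marg_N_toReal hS (by omega)
  have hπpos : (0:ℝ) < ε^(2*N-1) := pow_pos hε _
  rw [hTeq, hM, hApath, hπ]
  have ha0 : (0:ℝ) ≤ (P {ω | ∀ i : ℕ, i ≤ m → Y (i:ℤ) ω = (N:ℝ) - m + i}).toReal :=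
    ENNReal.toReal_nonneg
  have hb0 : (0:ℝ) ≤ (P {ω | ∀ i : ℕ, i ≤ m → Y (i:ℤ) ω = (N:ℝ) - i}).toReal :=
    ENNReal.toReal_nonneg
  have hq0 : (0:ℝ) ≤ ((1+ε)⁻¹)^(m-1) := by positivity
  constructor
  · rw [le_div_iff₀ hπpos]
    calc ε^(2*N-1) * ((1+ε)⁻¹)^(2*(m-1)) * ε^(2*N-1)
        = (ε^(2*N-1) * ((1+ε)⁻¹)^(m-1)) * (ε^(2*N-1) * ((1+ε)⁻¹)^(m-1)) := by
          rw [show 2*(m-1) = (m-1) + (m-1) from by omega, pow_add]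
          ring
      _ ≤ (P {ω | ∀ i : ℕ, i ≤ m → Y (i:ℤ) ω = (N:ℝ) - m + i}).toReal
            * (P {ω | ∀ i : ℕ, i ≤ m → Y (i:ℤ) ω = (N:ℝ) - i}).toReal := by
          apply mul_le_mul hu1 hd1 (by positivity) ha0
  · rw [div_le_iff₀ hπpos]
    calc (P {ω | ∀ i : ℕ, i ≤ m → Y (i:ℤ) ω = (N:ℝ) - m + i}).toReal
          * (P {ω | ∀ i : ℕ, i ≤ m → Y (i:ℤ) ω = (N:ℝ) - i}).toReal
        ≤ ε^(2*N-1) * ε^(2*N-1) := mul_le_mul hu2 hd2 hb0 (le_of_lt hπpos)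
      _ = ε^(2*N-1) * ε^(2*N-1) := rfl

end Chain7

/-- Eq. (2.20): with `A_ε = {Y^{(ε)}_0 = N}` and `B_ε = {Y^{(ε)}_{-m} = Y^{(ε)}_m = N−m}`
for `1 ≤ m < N/2`, one has `P(A_ε ∩ B_ε) ~ ε^{2N−1}` as `ε → 0+`. -/
theorem conditionS_P_A_inter_B [MeasurableSpace Ω] (P : Measure Ω)
    [IsProbabilityMeasure P] (N : ℕ) (hN : 3 ≤ N) (m : ℕ) (hm1 : 1 ≤ m) (hm2 : 2 * m < N)
    (Y : ℝ → ℤ → Ω → ℝ)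
    (hY : ∀ ε ∈ Set.Ioc (0:ℝ) (1/3), ConditionS P N ε (Y ε)) :
    Tendsto (fun ε : ℝ =>
        (P {ω | Y ε 0 ω = (N:ℝ) ∧ Y ε (-(m:ℤ)) ω = ((N - m : ℕ):ℝ)
              ∧ Y ε (m:ℤ) ω = ((N - m : ℕ):ℝ)}).toReal / ε^(2*N-1))
      (𝓝[>] 0) (𝓝 1) := by
  refine tendsto_of_tendsto_of_tendsto_of_le_of_le'
    (g := fun ε : ℝ => ((1+ε)⁻¹)^(2*(m-1))) (h := fun _ : ℝ => (1:ℝ)) ?_ ?_ ?_ ?_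
  · have h2 : Tendsto (fun ε : ℝ => ((1+ε)⁻¹)^(2*(m-1))) (𝓝 0) (𝓝 ((((1:ℝ)+0)⁻¹)^(2*(m-1)))) := by
      apply Filter.Tendsto.pow
      apply Filter.Tendsto.inv₀
      · exact tendsto_const_nhds.add tendsto_id
      · norm_num
    rw [show ((((1:ℝ)+0)⁻¹)^(2*(m-1))) = 1 by norm_num] at h2
    exact h2.mono_left nhdsWithin_le_nhds
  · exact tendsto_const_nhds
  · filter_upwards [Ioc_mem_nhdsGT (by norm_num : (0:ℝ) < 1/3)] with ε hε
    obtain ⟨h1, -⟩ := main_bounds (hY ε hε) hε.1 hε.2 hN hm1 hm2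
    rw [le_div_iff₀ (pow_pos hε.1 _)]
    calc ((1+ε)⁻¹)^(2*(m-1)) * ε^(2*N-1)
        = ε^(2*N-1) * ((1+ε)⁻¹)^(2*(m-1)) := by ring
      _ ≤ _ := h1
  · filter_upwards [Ioc_mem_nhdsGT (by norm_num : (0:ℝ) < 1/3)] with ε hε
    obtain ⟨-, h2⟩ := main_bounds (hY ε hε) hε.1 hε.2 hN hm1 hm2
    exact (div_le_one (pow_pos hε.1 _)).mpr h2

end
end
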